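/- arXiv:0906.4701 — 11 statements merged into one kernel-verified Lean document; each statement's English description precedes it below -/
import Mathlib

section
/- Let 1 < p ≤ 2 and q = -p. Then J_q = [q/(q²-1), 1/(q²-1)] = [-p/(p²-1), 1/(p²-1)]; i.e., every real x in this interval has an expansion in base q with digits {0,1}, and no other real does. -/
def IsExpansionR (q x : ℝ) (c : ℕ → ℕ) : Prop :=
  (∀ k, c k ≤ 1) ∧ HasSum (fun k : ℕ => (c (k + 1) : ℝ) / q ^ (k + 1)) x

def JR (q : ℝ) : Set ℝ := {x | ∃ c, IsExpansionR q x c}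

noncomputable def nbOrb (q x : ℝ) : ℕ → ℝ
  | 0 => x
  | n + 1 => if 1 / (q ^ 2 - 1) < q * nbOrb q x n then q * nbOrb q x n - 1 else q * nbOrb q x n

noncomputable def nbDig (q x : ℝ) (n : ℕ) : ℕ :=
  if 1 / (q ^ 2 - 1) < q * nbOrb q x n then 1 else 0

lemma nbDig_le (q x : ℝ) (n : ℕ) : nbDig q x n ≤ 1 := by
  unfold nbDig; split_ifs <;> omega

lemma nbOrb_succ (q x : ℝ) (n : ℕ) :
    nbOrb q x (n + 1) = q * nbOrb q x n - nbDig q x n := by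
  rw [nbOrb, nbDig]; split_ifs <;> simp

lemma nbOrb_sum (q x : ℝ) (hq : q ≠ 0) (n : ℕ) :
    x = (∑ k ∈ Finset.range n, (nbDig q x k : ℝ) / q ^ (k + 1)) + nbOrb q x n / q ^ n := by
  induction n with
  | zero => simp [nbOrb]
  | succ n ih =>
    have h2 : nbOrb q x n / q ^ n =
        (nbDig q x n : ℝ) / q ^ (n + 1) + nbOrb q x (n + 1) / q ^ (n + 1) := by
      rw [nbOrb_succ]
      field_simp
      ring
    conv_lhs => rw [ih]
    rw [h2, Finset.sum_range_succ]
    ring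

lemma nb_step (q : ℝ) (hq1 : q < -1) (hq2 : -2 ≤ q) (y : ℝ)
    (hy : y ∈ Set.Icc (q / (q ^ 2 - 1)) (1 / (q ^ 2 - 1))) :
    (if 1 / (q ^ 2 - 1) < q * y then q * y - 1 else q * y) ∈
      Set.Icc (q / (q ^ 2 - 1)) (1 / (q ^ 2 - 1)) := by
  have hA : 0 < q ^ 2 - 1 := by nlinarith
  obtain ⟨h1, h2⟩ := hy
  rw [div_le_iff₀ hA] at h1
  rw [le_div_iff₀ hA] at h2
  rw [Set.mem_Icc, div_le_iff₀ hA, le_div_iff₀ hA]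
  split_ifs with h
  · rw [div_lt_iff₀ hA] at h
    constructor
    · nlinarith [mul_nonneg (by linarith : (0:ℝ) ≤ q + 2) (by linarith : (0:ℝ) ≤ 1 - q)]
    · nlinarith [mul_nonneg (by linarith : (0:ℝ) ≤ y * (q ^ 2 - 1) - q) (by linarith : (0:ℝ) ≤ -q)]
  · rw [not_lt, le_div_iff₀ hA] at h
    constructor
    · nlinarith [mul_nonneg (by linarith : (0:ℝ) ≤ 1 - y * (q ^ 2 - 1)) (by linarith : (0:ℝ) ≤ -q)]
    · linarith

lemma nbOrb_mem (q : ℝ) (hq1 : q < -1) (hq2 : -2 ≤ q) (x : ℝ)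
    (hx : x ∈ Set.Icc (q / (q ^ 2 - 1)) (1 / (q ^ 2 - 1))) (n : ℕ) :
    nbOrb q x n ∈ Set.Icc (q / (q ^ 2 - 1)) (1 / (q ^ 2 - 1)) := by
  induction n with
  | zero => exact hx
  | succ n ih => rw [nbOrb]; exact nb_step q hq1 hq2 _ ih

theorem negative_base_J_interval (p : ℝ) (hp1 : 1 < p) (hp2 : p ≤ 2) (q : ℝ) (hq : q = -p) :
    JR q = Set.Icc (q / (q ^ 2 - 1)) (1 / (q ^ 2 - 1)) := by
  have hq1 : q < -1 := by rw [hq]; linarith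
  have hq2 : -2 ≤ q := by rw [hq]; linarith
  have hA : 0 < q ^ 2 - 1 := by nlinarith
  have hq0 : q < 0 := by linarith
  have hqne : q ≠ 0 := ne_of_lt hq0
  have hr0 : (0:ℝ) < 1 / q ^ 2 := by positivity
  have hr1 : 1 / q ^ 2 < 1 := by
    rw [div_lt_one (by positivity)]; nlinarith
  have hgeo : HasSum (fun j : ℕ => (1 / q ^ 2) ^ j) (1 - 1 / q ^ 2)⁻¹ :=
    hasSum_geometric_of_lt_one hr0.le hr1
  have hne : (1:ℝ) - 1 / q ^ 2 ≠ 0 := by linarith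
  ext x
  simp only [JR, Set.mem_setOf_eq]
  constructor
  · rintro ⟨c, hc, hsum⟩
    constructor
    · -- lower bound
      have hL : HasSum (fun k : ℕ => if Even k then 1 / q ^ (k + 1) else 0) (q / (q ^ 2 - 1)) := by
        have hinj : Function.Injective (fun j : ℕ => 2 * j) := fun a b h => by dsimp only at h; omega
        have hvan : ∀ k, k ∉ Set.range (fun j : ℕ => 2 * j) →
            (if Even k then 1 / q ^ (k + 1) else 0) = 0 := by
          intro k hk
          rw [if_neg]
          rintro ⟨m, hm⟩
          exact hk ⟨m, show 2 * m = k by omega⟩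
        rw [← Function.Injective.hasSum_iff hinj hvan]
        have hcomp : ((fun k : ℕ => if Even k then 1 / q ^ (k + 1) else 0) ∘ (fun j : ℕ => 2 * j))
            = fun j : ℕ => (1 / q) * (1 / q ^ 2) ^ j := by
          funext j
          simp only [Function.comp]
          rw [if_pos ⟨j, by ring⟩]
          rw [div_pow, one_pow, ← pow_mul, div_mul_div_comm, mul_one, ← pow_succ']
        rw [hcomp]
        have heq : q / (q ^ 2 - 1) = (1 / q) * (1 - 1 / q ^ 2)⁻¹ := by
          field_simp
        rw [heq]
        exact hgeo.mul_left _
      refine hasSum_le (fun k => ?_) hL hsum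
      by_cases hk : Even k
      · rw [if_pos hk]
        have hp : q ^ (k + 1) < 0 := Odd.pow_neg (Even.add_one hk) hq0
        rw [div_le_div_right_of_neg hp]
        exact_mod_cast hc (k+1)
      · rw [if_neg hk]
        have hp : 0 < q ^ (k + 1) :=
          Even.pow_pos ((Nat.not_even_iff_odd.mp hk).add_one) hqne
        positivity
    · -- upper bound
      have hU : HasSum (fun k : ℕ => if Even k then 0 else 1 / q ^ (k + 1)) (1 / (q ^ 2 - 1)) := by
        have hinj : Function.Injective (fun j : ℕ => 2 * j + 1) := fun a b h => by dsimp only at h; omega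
        have hvan : ∀ k, k ∉ Set.range (fun j : ℕ => 2 * j + 1) →
            (if Even k then 0 else 1 / q ^ (k + 1)) = 0 := by
          intro k hk
          rw [if_pos]
          rcases Nat.even_or_odd k with h | h
          · exact h
          · obtain ⟨m, hm⟩ := h
            exact absurd ⟨m, show 2 * m + 1 = k by omega⟩ hk
        rw [← Function.Injective.hasSum_iff hinj hvan]
        have hcomp : ((fun k : ℕ => if Even k then 0 else 1 / q ^ (k + 1)) ∘ (fun j : ℕ => 2 * j + 1))
            = fun j : ℕ => (1 / q ^ 2) * (1 / q ^ 2) ^ j := by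
          funext j
          simp only [Function.comp]
          rw [if_neg (by simp [Nat.even_add_one, parity_simps])]
          rw [div_pow, one_pow, ← pow_mul, div_mul_div_comm, mul_one]
          congr 1
          ring
        rw [hcomp]
        have heq : 1 / (q ^ 2 - 1) = (1 / q ^ 2) * (1 - 1 / q ^ 2)⁻¹ := by
          field_simp
        rw [heq]
        exact hgeo.mul_left _
      refine hasSum_le (fun k => ?_) hsum hU
      by_cases hk : Even k
      · rw [if_pos hk]
        have hp : q ^ (k + 1) < 0 := Odd.pow_neg (Even.add_one hk) hq0
        exact div_nonpos_of_nonneg_of_nonpos (Nat.cast_nonneg _) hp.le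
      · rw [if_neg hk]
        have hp : 0 < q ^ (k + 1) :=
          Even.pow_pos ((Nat.not_even_iff_odd.mp hk).add_one) hqne
        gcongr
        exact_mod_cast hc (k+1)
  · -- surjectivity
    intro hx
    refine ⟨fun k => nbDig q x (k - 1), fun k => nbDig_le q x (k - 1), ?_⟩
    show HasSum (fun k : ℕ => (nbDig q x k : ℝ) / q ^ (k + 1)) x
    have habs : 1 < |q| := by rw [abs_of_neg hq0]; linarith
    have hinv0 : (0:ℝ) ≤ |q|⁻¹ := by positivity
    have hinv1 : |q|⁻¹ < 1 := inv_lt_one_of_one_lt₀ habs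
    have hsummable : Summable (fun k : ℕ => (nbDig q x k : ℝ) / q ^ (k + 1)) := by
      apply Summable.of_norm_bounded (summable_geometric_of_lt_one hinv0 hinv1)
      intro k
      rw [norm_div, norm_pow, Real.norm_eq_abs, Real.norm_eq_abs,
        abs_of_nonneg (by positivity : (0:ℝ) ≤ (nbDig q x k : ℝ))]
      rw [inv_pow, ← one_div]
      have h1 : (nbDig q x k : ℝ) ≤ 1 := by exact_mod_cast nbDig_le q x k
      have h2 : |q| ^ k ≤ |q| ^ (k + 1) := pow_le_pow_right₀ habs.le (Nat.le_succ k)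
      have h3 : (0:ℝ) < |q| ^ k := by positivity
      have h4 : (0:ℝ) < |q| ^ (k + 1) := by positivity
      calc (nbDig q x k : ℝ) / |q| ^ (k + 1) ≤ 1 / |q| ^ (k + 1) := by gcongr
        _ ≤ 1 / |q| ^ k := one_div_le_one_div_of_le h3 h2
    rw [hsummable.hasSum_iff_tendsto_nat]
    have key : ∀ n, (∑ k ∈ Finset.range n, (nbDig q x k : ℝ) / q ^ (k + 1))
        = x - nbOrb q x n / q ^ n := by
      intro n
      have := nbOrb_sum q x hqne n
      linarith
    simp only [key]
    have h0 : Filter.Tendsto (fun n : ℕ => nbOrb q x n / q ^ n) Filter.atTop (nhds 0) := by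
      apply squeeze_zero_norm (a := fun n : ℕ => (1 / (q ^ 2 - 1) - q / (q ^ 2 - 1)) * (|q|⁻¹) ^ n)
      · intro n
        rw [norm_div, norm_pow, Real.norm_eq_abs, Real.norm_eq_abs, inv_pow]
        rw [div_eq_mul_inv]
        gcongr ?_ * _
        obtain ⟨hm1, hm2⟩ := nbOrb_mem q hq1 hq2 x hx n
        have hm0 : q / (q ^ 2 - 1) ≤ 0 := le_of_lt (div_neg_of_neg_of_pos hq0 hA)
        have hM0 : (0:ℝ) ≤ 1 / (q ^ 2 - 1) := by positivity
        rw [abs_le]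
        constructor <;> linarith
      · have := (tendsto_pow_atTop_nhds_zero_of_lt_one hinv0 hinv1).const_mul
          (1 / (q ^ 2 - 1) - q / (q ^ 2 - 1))
        simpa using this
    simpa using tendsto_const_nhds.sub h0
end

section
/- Let p > 2 and q = -p. Then J_q is not connected (as a subset of ℝ). -/
lemma geom_shift (r : ℝ) (hr : |r| < 1) :
    HasSum (fun n : ℕ => r ^ (n + 1)) (r * (1 - r)⁻¹) := by
  have h := (hasSum_geometric_of_abs_lt_one hr).mul_left r
  simpa [pow_succ, mul_comm] using h

lemma JR_bound (p : ℝ) (hp : 2 < p) (x : ℝ) (hx : x ∈ JR (-p)) :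
    x ≤ -1/p + 1/(p^2-1) ∨ -(1/(p*(p^2-1))) ≤ x := by
  obtain ⟨c, hc, hsum⟩ := hx
  have hp0 : 0 < p := by linarith
  have habs1 : |(-p)⁻¹| < 1 := by
    rw [abs_inv, abs_neg, abs_of_pos hp0, inv_lt_one_iff₀]
    right; linarith
  have habs2 : |p⁻¹| < 1 := by
    rw [abs_inv, abs_of_pos hp0, inv_lt_one_iff₀]
    right; linarith
  have hpne : p ≠ 0 := ne_of_gt hp0
  have hp1ne : p + 1 ≠ 0 := by intro h; linarith
  have hm1ne : p - 1 ≠ 0 := by intro h; linarith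
  have hne1 : (1 : ℝ) - (-p)⁻¹ ≠ 0 := by
    have h2 : (0:ℝ) < 1 + p⁻¹ := by positivity
    rw [← neg_inv, sub_neg_eq_add]; intro h; linarith
  have hne2 : (1 : ℝ) - p⁻¹ ≠ 0 := by
    have h2 : p⁻¹ < 1 := by rw [inv_lt_one_iff₀]; right; linarith
    intro h; linarith
  have hne3 : p^2 - 1 ≠ 0 := by nlinarith
  have hv1 : (-p)⁻¹ * (1 - (-p)⁻¹)⁻¹ = -(p+1)⁻¹ := by
    rw [← neg_inv, sub_neg_eq_add]
    have h2 : (1:ℝ) + p⁻¹ ≠ 0 := by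
      have : (0:ℝ) < 1 + p⁻¹ := by positivity
      intro h; linarith
    field_simp
  have hv2 : p⁻¹ * (1 - p⁻¹)⁻¹ = (p-1)⁻¹ := by
    field_simp
  have hq := geom_shift (-p)⁻¹ habs1
  have hpg := geom_shift p⁻¹ habs2
  rw [hv1] at hq
  rw [hv2] at hpg
  have hppow : ∀ m : ℕ, (0:ℝ) < p ^ m := fun m => pow_pos hp0 m
  have key : ∀ m : ℕ, (c m : ℝ) / p ^ m ≤ (p ^ m)⁻¹ := by
    intro m
    rw [div_le_iff₀ (hppow m), inv_mul_cancel₀ (ne_of_gt (hppow m))]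
    exact_mod_cast hc m
  rcases Nat.le_one_iff_eq_zero_or_eq_one.mp (hc 1) with h1 | h1
  · right
    set g : ℕ → ℝ := fun k => (((-p)⁻¹) ^ (k+1) - (p⁻¹) ^ (k+1)) / 2 with hgdef
    have hg : HasSum g ((-(p+1)⁻¹ - (p-1)⁻¹) / 2) := (hq.sub hpg).div_const 2
    have hg' := hg.update 0 0
    have hle : ∀ k : ℕ, Function.update g 0 0 k ≤ (c (k+1) : ℝ) / (-p) ^ (k+1) := by
      intro k
      rcases Nat.eq_zero_or_pos k with rfl | hk
      · simp [h1]
      · rw [Function.update_of_ne (Nat.pos_iff_ne_zero.mp hk)]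
        rcases Nat.even_or_odd (k+1) with he | ho
        · have e1 : ((-p) : ℝ) ^ (k+1) = p ^ (k+1) := he.neg_pow p
          have e2 : (((-p)⁻¹) : ℝ) ^ (k+1) = (p⁻¹) ^ (k+1) := by
            rw [← neg_inv]; exact he.neg_pow p⁻¹
          rw [hgdef]; simp only [e1, e2, sub_self, zero_div]
          positivity
        · have e1 : ((-p) : ℝ) ^ (k+1) = -(p ^ (k+1)) := ho.neg_pow p
          have e2 : (((-p)⁻¹) : ℝ) ^ (k+1) = -((p⁻¹) ^ (k+1)) := by
            rw [← neg_inv]; exact ho.neg_pow p⁻¹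
          rw [hgdef]; simp only [e1, e2, div_neg, inv_pow]
          have := key (k+1)
          linarith
    have hval := hasSum_le hle hg' hsum
    refine le_trans (le_of_eq ?_) hval
    rw [hgdef]
    simp only [pow_one, ← neg_inv]
    field_simp
    linear_combination (-(2 - 4*p^2 + 2*p^4)) * mul_inv_cancel₀ hpne
  · left
    set g : ℕ → ℝ := fun k => ((p⁻¹) ^ (k+1) + ((-p)⁻¹) ^ (k+1)) / 2 with hgdef
    have hg : HasSum g (((p-1)⁻¹ + -(p+1)⁻¹) / 2) := (hpg.add hq).div_const 2
    have hg' := hg.update 0 ((-p)⁻¹)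
    have hle : ∀ k : ℕ, (c (k+1) : ℝ) / (-p) ^ (k+1) ≤ Function.update g 0 ((-p)⁻¹) k := by
      intro k
      rcases Nat.eq_zero_or_pos k with rfl | hk
      · simp [h1]
      · rw [Function.update_of_ne (Nat.pos_iff_ne_zero.mp hk)]
        rcases Nat.even_or_odd (k+1) with he | ho
        · have e1 : ((-p) : ℝ) ^ (k+1) = p ^ (k+1) := he.neg_pow p
          have e2 : (((-p)⁻¹) : ℝ) ^ (k+1) = (p⁻¹) ^ (k+1) := by
            rw [← neg_inv]; exact he.neg_pow p⁻¹
          rw [hgdef]; simp only [e1, e2, inv_pow]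
          have := key (k+1)
          linarith
        · have e1 : ((-p) : ℝ) ^ (k+1) = -(p ^ (k+1)) := ho.neg_pow p
          have e2 : (((-p)⁻¹) : ℝ) ^ (k+1) = -((p⁻¹) ^ (k+1)) := by
            rw [← neg_inv]; exact ho.neg_pow p⁻¹
          rw [hgdef]; simp only [e1, e2, div_neg, add_neg_cancel, zero_div]
          have h3 : (0:ℝ) ≤ (c (k+1) : ℝ) / p ^ (k+1) := by positivity
          linarith
    have hval := hasSum_le hle hsum hg'
    refine le_trans hval (le_of_eq ?_)
    rw [hgdef]
    simp only [pow_one, ← neg_inv]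
    field_simp
    ring

theorem negative_base_J_not_connected (p : ℝ) (hp : 2 < p) (q : ℝ) (hq : q = -p) :
    ¬ IsPreconnected (JR q) := by
  subst hq
  intro h
  have hp0 : 0 < p := by linarith
  have hpne : p ≠ 0 := ne_of_gt hp0
  have hsq : (0:ℝ) < p^2 - 1 := by nlinarith
  have h0 : (0:ℝ) ∈ JR (-p) := by
    refine ⟨fun _ => 0, fun _ => Nat.zero_le 1, ?_⟩
    simpa using hasSum_zero
  have h1m : (-1/p) ∈ JR (-p) := by
    refine ⟨fun n => if n = 1 then 1 else 0, fun k => ?_, ?_⟩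
    · by_cases hk : k = 1 <;> simp [hk]
    · have he : (fun k : ℕ => (((if k + 1 = 1 then 1 else 0 : ℕ)) : ℝ) / (-p) ^ (k+1))
          = fun k : ℕ => if k = 0 then (-1/p) else 0 := by
        funext k
        rcases Nat.eq_zero_or_pos k with rfl | hk
        · norm_num
          rw [neg_div, one_div]
        · have hk1 : k + 1 ≠ 1 := by omega
          simp [hk1, Nat.pos_iff_ne_zero.mp hk]
      rw [he]
      exact hasSum_ite_eq 0 (-1/p)
  obtain ⟨A, hA⟩ : ∃ A : ℝ, A = -1/p + 1/(p^2-1) := ⟨_, rfl⟩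
  obtain ⟨B, hB⟩ : ∃ B : ℝ, B = -(1/(p*(p^2-1))) := ⟨_, rfl⟩
  have hAB : A < B := by
    have e : B - A = (p^2 - p - 2)/(p*(p^2-1)) := by
      rw [hA, hB]; field_simp; ring
    have hnum : 0 < p^2 - p - 2 := by nlinarith
    have h2 : 0 < B - A := by rw [e]; positivity
    linarith
  have ht1 : -1/p ≤ (A+B)/2 := by
    have h2 : -1/p < A := by
      rw [hA]
      have : (0:ℝ) < 1/(p^2-1) := by positivity
      linarith
    linarith
  have ht2 : (A+B)/2 ≤ 0 := by
    have h2 : B < 0 := by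
      rw [hB]
      have : (0:ℝ) < 1/(p*(p^2-1)) := by positivity
      linarith
    linarith
  have hmem : (A+B)/2 ∈ JR (-p) := (h.ordConnected).out h1m h0 ⟨ht1, ht2⟩
  rcases JR_bound p hp ((A+B)/2) hmem with hb | hb
  · rw [← hA] at hb; linarith
  · rw [← hB] at hb; linarith
end

section
/- Let p > 1 and q = -p. The number q/(q²-1) = -p/(p²-1) has a unique expansion in base q with digits {0,1}, namely the periodic sequence (1,0,1,0,...). -/
theorem negative_base_left_endpoint_unique (p : ℝ) (hp : 1 < p) (q : ℝ) (hq : q = -p) :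
    HasSum (fun k : ℕ => ((if Odd (k + 1) then (1 : ℕ) else 0) : ℝ) / q ^ (k + 1))
      (q / (q ^ 2 - 1)) ∧
    ∀ c : ℕ → ℕ, (∀ k, c k ≤ 1) →
      HasSum (fun k : ℕ => (c (k + 1) : ℝ) / q ^ (k + 1)) (q / (q ^ 2 - 1)) →
      ∀ k, 1 ≤ k → c k = if Odd k then 1 else 0 := by
  have hq0 : q < 0 := by rw [hq]; linarith
  have hqne : q ≠ 0 := ne_of_lt hq0
  have hq2 : 1 < q ^ 2 := by rw [hq]; nlinarith
  have hq2ne : q ^ 2 - 1 ≠ 0 := by nlinarith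
  have hr : |(1:ℝ)/q^2| < 1 := by
    rw [abs_of_pos (by positivity), div_lt_one (by positivity)]; exact hq2
  have hgeo : HasSum (fun j : ℕ => (1/q) * ((1/q^2)^j)) (q / (q^2-1)) := by
    have := (hasSum_geometric_of_abs_lt_one hr).mul_left (1/q)
    convert this using 1
    · rfl
    field_simp
  have hinj : Function.Injective (fun j : ℕ => 2 * j) := fun a b h => by
    simp only at h; omega
  have hfirst : HasSum (fun k : ℕ => ((if Odd (k + 1) then (1 : ℕ) else 0) : ℝ) / q ^ (k + 1))
      (q / (q ^ 2 - 1)) := by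
    have hvan : ∀ k ∉ Set.range (fun j : ℕ => 2 * j),
        ((if Odd (k + 1) then (1 : ℕ) else 0) : ℝ) / q ^ (k + 1) = 0 := by
      intro k hk
      simp only [Set.mem_range] at hk
      have hodd : Odd k := by
        rcases Nat.even_or_odd k with ⟨m, hm⟩ | ho
        · exact absurd ⟨m, by omega⟩ hk
        · exact ho
      have hk' : ¬ Odd (k + 1) := by
        obtain ⟨m, hm⟩ := hodd; rintro ⟨n, hn⟩; omega
      simp [hk']
    have key : ((fun k : ℕ => ((if Odd (k + 1) then (1 : ℕ) else 0) : ℝ) / q ^ (k + 1)) ∘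
        fun j : ℕ => 2 * j) = fun j : ℕ => (1/q) * ((1/q^2)^j) := by
      funext j
      have hoj : Odd (2 * j + 1) := ⟨j, by ring⟩
      simp only [Function.comp, hoj, if_pos, Nat.cast_one]
      rw [pow_add, pow_mul, pow_one]
      field_simp
      rw [← mul_pow, mul_one_div_cancel (pow_ne_zero 2 hqne), one_pow]
    rw [← hinj.hasSum_iff hvan, key]
    exact hgeo
  refine ⟨hfirst, ?_⟩
  intro c hc hsum k hk
  set g : ℕ → ℝ := fun k => ((if Odd (k + 1) then (1 : ℕ) else 0) : ℝ) / q ^ (k + 1) with hg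
  have hdiff : HasSum (fun k => (c (k + 1) : ℝ) / q ^ (k + 1) - g k) 0 := by
    simpa using hsum.sub hfirst
  have hnn : ∀ k, 0 ≤ (c (k + 1) : ℝ) / q ^ (k + 1) - g k := by
    intro k
    rcases Nat.even_or_odd (k + 1) with he | ho
    · have hpos : 0 < q ^ (k + 1) := he.pow_pos hqne
      have : ¬ Odd (k + 1) := by simpa [Nat.odd_iff, Nat.even_iff] using he
      simp only [hg, this, if_false, Nat.cast_zero, Nat.cast_one, zero_div, sub_zero]
      exact div_nonneg (Nat.cast_nonneg _) hpos.le
    · have hneg : q ^ (k + 1) < 0 := ho.pow_neg hq0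
      simp only [hg, ho, if_pos, Nat.cast_one]
      rw [div_sub_div_same]
      refine div_nonneg_iff.mpr (Or.inr ⟨?_, hneg.le⟩)
      have := hc (k + 1)
      have : (c (k + 1) : ℝ) ≤ 1 := by exact_mod_cast this
      linarith
  have hzero : ∀ k, (c (k + 1) : ℝ) / q ^ (k + 1) - g k = 0 := by
    have := (hasSum_zero_iff_of_nonneg hnn).mp hdiff
    intro k; exact congrFun this k
  obtain ⟨j, rfl⟩ : ∃ j, k = j + 1 := ⟨k - 1, by omega⟩
  have h := hzero j
  rw [sub_eq_zero, hg] at h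
  have hqk : q ^ (j + 1) ≠ 0 := pow_ne_zero _ hqne
  have h' : (c (j + 1) : ℝ) = (if Odd (j + 1) then (1 : ℕ) else 0 : ℕ) := by
    field_simp at h
    exact_mod_cast h
  by_cases ho : Odd (j + 1)
  · simp only [ho, if_pos] at h' ⊢
    exact_mod_cast h'
  · simp only [ho, if_neg, not_false_iff] at h' ⊢
    exact_mod_cast h'
end

section
/- Fix a positive integer m' and define the transformation T on {0,1}-sequences by T(d)_{m'i+j} = 1 - d_{m'i+j} if i is even and d_{m'i+j} if i is odd (i ≥ 0, 1 ≤ j ≤ m'). Then a sequence d is universal if and only if T(d) is universal. -/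
/-- The transformation `T`: for `n = m'·i + j` with `i ≥ 0` and `1 ≤ j ≤ m'`
(so that `i = (n-1)/m'`), complement the digit when `i` is even. -/
def T (m' : ℕ) (d : ℕ → ℕ) : ℕ → ℕ :=
  fun n => if Even ((n - 1) / m') then 1 - d n else d n

/-- A {0,1}-sequence (indexed from 1) is universal if it contains every finite
{0,1}-block as a consecutive subblock. -/
def Universal (d : ℕ → ℕ) : Prop :=
  ∀ w : List ℕ, (∀ b ∈ w, b ≤ 1) →
    ∃ n : ℕ, ∀ i < w.length, d (n + 1 + i) = w.getD i 0

lemma even_div_iff (m' : ℕ) (hm' : 1 ≤ m') (t : ℕ) :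
    Even (t / m') ↔ t % (2 * m') < m' := by
  rw [Nat.even_iff, ← Nat.mod_mul_right_div_self, mul_comm 2 m',
    Nat.div_eq_zero_iff_lt (by omega : 0 < m')]

lemma aux (m' : ℕ) (hm' : 1 ≤ m') (d : ℕ → ℕ) (hd : ∀ n, d n ≤ 1)
    (hu : Universal d) : Universal (T m' d) := by
  intro w hw
  set P := 2 * m' with hP
  set L := w.length with hL
  set M := P * (L + 1) with hM
  set f : ℕ → ℕ := fun j =>
    (w.getD (j % M) 0 + (if (j / M + j % M) % P < m' then 1 else 0)) % 2 with hf
  obtain ⟨n, hn⟩ := hu ((List.range (P * M)).map f) (by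
    intro b hb
    simp only [List.mem_map] at hb
    obtain ⟨j, -, rfl⟩ := hb
    have := Nat.mod_lt (w.getD (j % M) 0 + (if (j / M + j % M) % P < m' then 1 else 0))
      (show 0 < 2 by omega)
    simpa [hf] using by omega)
  refine ⟨n + n % P * M, ?_⟩
  intro i hi
  have hPpos : 0 < P := by omega
  have hMpos : 0 < M := by positivity
  have hiM : i < M := by
    have : L + 1 ≤ P * (L + 1) := Nat.le_mul_of_pos_left _ hPpos
    omega
  set j := i + n % P * M with hj
  have hjdiv : j / M = n % P := by
    rw [hj, Nat.add_mul_div_right _ _ hMpos, Nat.div_eq_of_lt hiM, zero_add]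
  have hjmod : j % M = i := by
    rw [hj, Nat.add_mul_mod_self_right, Nat.mod_eq_of_lt hiM]
  have hjlt : j < P * M := by
    have h1 : n % P < P := Nat.mod_lt _ hPpos
    have h2 : (n % P + 1) * M ≤ P * M := Nat.mul_le_mul_right _ (by omega)
    calc j < M + n % P * M := by omega
    _ = (n % P + 1) * M := by ring
    _ ≤ P * M := h2
  have hdval : d (n + 1 + j) = f j := by
    have := hn j (by simpa using hjlt)
    rwa [List.getD_eq_getElem _ _ (by simpa using hjlt), List.getElem_map,
      List.getElem_range] at this
  have hmodP : (n + j) % P = (n % P + i) % P := by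
    have hrw : n + j = (n + i) + (n % P * (L + 1)) * P := by
      rw [hj, hM]; ring
    rw [hrw, Nat.add_mul_mod_self_right]
    conv_lhs => rw [Nat.add_mod]
    conv_rhs => rw [Nat.add_mod, Nat.mod_mod_of_dvd _ dvd_rfl]
  have hwi : w.getD i 0 ≤ 1 := by
    apply hw
    rw [List.getD_eq_getElem _ _ (by omega)]
    exact List.getElem_mem _
  have hidx : n + n % P * M + 1 + i = n + 1 + j := by omega
  rw [hidx]
  show (if Even ((n + 1 + j - 1) / m') then 1 - d (n + 1 + j) else d (n + 1 + j)) = w.getD i 0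
  have hsub : n + 1 + j - 1 = n + j := by omega
  rw [hsub, hdval, hf]
  have hE : Even ((n + j) / m') ↔ (n % P + i) % P < m' := by
    rw [even_div_iff m' hm', ← hP, hmodP]
  simp only [hjdiv, hjmod]
  by_cases hc : (n % P + i) % P < m'
  · rw [if_pos (hE.mpr hc), if_pos hc]; omega
  · rw [if_neg (fun h => hc (hE.mp h)), if_neg hc]; omega

theorem universal_iff_T_universal (m' : ℕ) (hm' : 1 ≤ m')
    (d : ℕ → ℕ) (hd : ∀ n, d n ≤ 1) :
    Universal d ↔ Universal (T m' d) := by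
  constructor
  · exact aux m' hm' d hd
  · intro h
    have hTd : ∀ n, T m' d n ≤ 1 := by
      intro n; unfold T; split
      · omega
      · exact hd n
    have h2 := aux m' hm' (T m' d) hTd h
    have hTT : T m' (T m' d) = d := by
      funext n
      unfold T
      by_cases hE : Even ((n - 1) / m') <;> simp [hE]
      have := hd n; omega
    rwa [hTT] at h2
end

section
/- If q = -(1+√5)/2, then the set of expansions of x = 0 in base q with digit set {0,1} is countably infinite. -/
/-- The candidate expansions: `e` is the (irrelevant) digit at position 0, and if `n ≥ 1`
the digits (for `k ≥ 1`) are 1 exactly at positions `n, n+1, n+3, n+5, …`;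
if `n = 0` all digits at positions `≥ 1` vanish. -/
def seqOf (e n : ℕ) : ℕ → ℕ := fun k =>
  if k = 0 then e
  else if n = 0 then 0
  else if k = n ∨ (n < k ∧ (k - n) % 2 = 1) then 1 else 0

lemma seqOf_le_one (e n : ℕ) (he : e ≤ 1) : ∀ k, seqOf e n k ≤ 1 := by
  intro k
  unfold seqOf
  split
  · exact he
  · split
    · omega
    · split <;> omega

/-- The key series computation: for `n ≥ 1`, the pattern `seqOf e n` is an expansion of 0. -/
lemma hasSum_pat (b : ℝ) (hb2 : b ^ 2 = b + 1) (hbneg : b < 0) (e n : ℕ) (hn : 1 ≤ n) :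
    HasSum (fun k : ℕ => (seqOf e n (k + 1) : ℝ) * b ^ (k + 1)) 0 := by
  have hb0 : b ≠ 0 := ne_of_lt hbneg
  have hsq0 : (0 : ℝ) ≤ b ^ 2 := sq_nonneg b
  have hsq1 : b ^ 2 < 1 := by nlinarith
  have hgeo : HasSum (fun i : ℕ => (b ^ 2) ^ i) (1 - b ^ 2)⁻¹ :=
    hasSum_geometric_of_lt_one hsq0 hsq1
  -- the series of 1's at positions n+1, n+3, n+5, …  (indices k = n, n+2, …)
  have hB' : HasSum (fun i : ℕ => b ^ (n + 2 * i + 1)) (-b ^ n) := by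
    have h := hgeo.mul_left (b ^ (n + 1))
    have heq : (fun i : ℕ => b ^ (n + 1) * (b ^ 2) ^ i) = fun i : ℕ => b ^ (n + 2 * i + 1) := by
      funext i
      rw [← pow_mul, ← pow_add]
      congr 1
      ring
    have hval : b ^ (n + 1) * (1 - b ^ 2)⁻¹ = -b ^ n := by
      have h1b : 1 - b ^ 2 = -b := by linarith
      rw [h1b, pow_succ]
      field_simp
    rw [heq, hval] at h
    exact h
  have hinj : Function.Injective (fun i : ℕ => n + 2 * i) := by
    intro a c hac
    have : n + 2 * a = n + 2 * c := hac
    omega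
  have hB : HasSum (fun k : ℕ => if n ≤ k ∧ (k - n) % 2 = 0 then b ^ (k + 1) else (0 : ℝ))
      (-b ^ n) := by
    refine (Function.Injective.hasSum_iff hinj ?_).mp ?_
    · intro x hx
      have : ¬(n ≤ x ∧ (x - n) % 2 = 0) := by
        intro hc
        exact hx ⟨(x - n) / 2, by show n + 2 * ((x - n) / 2) = x; omega⟩
      simp [this]
    · have hcond : ∀ i : ℕ, (n ≤ n + 2 * i ∧ (n + 2 * i - n) % 2 = 0) := by
        intro i; constructor <;> omega
      refine hB'.congr_fun fun i => ?_
      simp only [Function.comp]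
      rw [if_pos (hcond i)]
  have hA : HasSum (fun k : ℕ => if k = n - 1 then b ^ n else (0 : ℝ)) (b ^ n) :=
    hasSum_ite_eq (n - 1) (b ^ n)
  have hAB := hA.add hB
  have hfun : (fun k : ℕ => (seqOf e n (k + 1) : ℝ) * b ^ (k + 1)) =
      fun k : ℕ => (if k = n - 1 then b ^ n else (0 : ℝ)) +
        (if n ≤ k ∧ (k - n) % 2 = 0 then b ^ (k + 1) else (0 : ℝ)) := by
    funext k
    have hk0 : k + 1 ≠ 0 := Nat.succ_ne_zero k
    have hn0 : n ≠ 0 := by omega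
    simp only [seqOf, if_neg hk0, if_neg hn0]
    by_cases h1 : k = n - 1
    · have hkn : k + 1 = n := by omega
      have hcond : k + 1 = n ∨ (n < k + 1 ∧ (k + 1 - n) % 2 = 1) := Or.inl hkn
      have hnot : ¬(n ≤ k ∧ (k - n) % 2 = 0) := by omega
      rw [if_pos hcond, if_pos h1, if_neg hnot, hkn]
      push_cast
      ring
    · by_cases h2 : n ≤ k ∧ (k - n) % 2 = 0
      · have hcond : k + 1 = n ∨ (n < k + 1 ∧ (k + 1 - n) % 2 = 1) := by
          right; omega
        rw [if_pos hcond, if_neg h1, if_pos h2]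
        push_cast
        ring
      · have hcond : ¬(k + 1 = n ∨ (n < k + 1 ∧ (k + 1 - n) % 2 = 1)) := by omega
        rw [if_neg hcond, if_neg h1, if_neg h2]
        push_cast
        ring
  rw [hfun]
  simpa using hAB

theorem countably_many_expansions_of_zero_neg_golden (q : ℝ)
    (hq : q = -((1 + Real.sqrt 5) / 2)) :
    Set.Countable {c : ℕ → ℕ | (∀ k, c k ≤ 1) ∧
        HasSum (fun k : ℕ => (c (k + 1) : ℝ) / q ^ (k + 1)) 0} ∧
    Set.Infinite {c : ℕ → ℕ | (∀ k, c k ≤ 1) ∧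
        HasSum (fun k : ℕ => (c (k + 1) : ℝ) / q ^ (k + 1)) 0} := by
  set S := {c : ℕ → ℕ | (∀ k, c k ≤ 1) ∧
      HasSum (fun k : ℕ => (c (k + 1) : ℝ) / q ^ (k + 1)) 0} with hS
  -- basic facts about b = q⁻¹
  have h5 : Real.sqrt 5 ^ 2 = 5 := Real.sq_sqrt (by norm_num)
  have h5pos : (0 : ℝ) ≤ Real.sqrt 5 := Real.sqrt_nonneg 5
  have h5gt : (2 : ℝ) < Real.sqrt 5 := by nlinarith
  have h5lt : Real.sqrt 5 < 3 := by nlinarith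
  have hq0 : q ≠ 0 := by rw [hq]; intro h; nlinarith
  set b : ℝ := q⁻¹ with hbdef
  have hbval : b = (1 - Real.sqrt 5) / 2 := by
    have hmul : q * ((1 - Real.sqrt 5) / 2) = 1 := by rw [hq]; nlinarith
    rw [hbdef, inv_eq_of_mul_eq_one_right hmul]
  have hb2 : b ^ 2 = b + 1 := by rw [hbval]; nlinarith
  have hbneg : b < 0 := by rw [hbval]; nlinarith
  have hbm1 : (-1 : ℝ) < b := by rw [hbval]; nlinarith
  have hb0 : b ≠ 0 := ne_of_lt hbneg
  have hfun : ∀ c : ℕ → ℕ, (fun k : ℕ => (c (k + 1) : ℝ) / q ^ (k + 1)) =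
      fun k : ℕ => (c (k + 1) : ℝ) * b ^ (k + 1) := by
    intro c; funext k
    rw [hbdef, inv_pow, div_eq_mul_inv]
  -- every seqOf is in S
  have hmem : ∀ e n : ℕ, e ≤ 1 → seqOf e n ∈ S := by
    intro e n he
    refine ⟨seqOf_le_one e n he, ?_⟩
    rw [hfun (seqOf e n)]
    rcases Nat.eq_zero_or_pos n with hn | hn
    · have : (fun k : ℕ => (seqOf e n (k + 1) : ℝ) * b ^ (k + 1)) = fun _ => (0 : ℝ) := by
        funext k
        subst hn
        simp [seqOf]
      rw [this]
      exact hasSum_zero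
    · exact hasSum_pat b hb2 hbneg e n hn
  -- every element of S is a seqOf
  have hsub : S ⊆ Set.range (fun p : ℕ × ℕ => seqOf p.1 p.2) := by
    rintro c ⟨h1, h2⟩
    by_cases hz : ∀ k, 1 ≤ k → c k = 0
    · refine ⟨(c 0, 0), ?_⟩
      funext k
      cases k with
      | zero => simp [seqOf]
      | succ m => simp [seqOf, hz (m + 1) (Nat.succ_le_succ (Nat.zero_le m))]
    · push_neg at hz
      obtain ⟨m, hm1, hm0⟩ := hz
      have hex : ∃ k, 1 ≤ k ∧ c k ≠ 0 := ⟨m, hm1, hm0⟩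
      classical
      set n := Nat.find hex with hndef
      obtain ⟨hn1, hcn⟩ := Nat.find_spec hex
      rw [← hndef] at hn1 hcn
      have hcn1 : c n = 1 := by have := h1 n; omega
      have hmin : ∀ j, 1 ≤ j → j < n → c j = 0 := by
        intro j hj1 hjn
        by_contra hcj
        exact Nat.find_min hex hjn ⟨hj1, hcj⟩
      -- the two sums
      have hsum_c : HasSum (fun k : ℕ => (c (k + 1) : ℝ) * b ^ (k + 1)) 0 := by
        rw [← hfun c]; exact h2
      have hsum_t : HasSum (fun k : ℕ => (seqOf 0 n (k + 1) : ℝ) * b ^ (k + 1)) 0 :=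
        hasSum_pat b hb2 hbneg 0 n hn1
      have hdiff := (hsum_c.sub hsum_t).mul_right ((b ^ n)⁻¹)
      have hbn0 : b ^ n ≠ 0 := pow_ne_zero n hb0
      -- nonnegativity of each term
      have hterm : ∀ k : ℕ,
          ((c (k + 1) : ℝ) * b ^ (k + 1) - (seqOf 0 n (k + 1) : ℝ) * b ^ (k + 1)) * (b ^ n)⁻¹ =
            ((c (k + 1) : ℝ) - (seqOf 0 n (k + 1) : ℝ)) * b ^ (k + 1) * (b ^ n)⁻¹ := by
        intro k; ring
      have hnn : ∀ k : ℕ, 0 ≤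
          ((c (k + 1) : ℝ) * b ^ (k + 1) - (seqOf 0 n (k + 1) : ℝ) * b ^ (k + 1)) * (b ^ n)⁻¹ := by
        intro k
        rw [hterm k]
        set j := k + 1 with hj
        have hj1 : 1 ≤ j := Nat.succ_le_succ (Nat.zero_le k)
        have hn0 : n ≠ 0 := by omega
        have hj0 : j ≠ 0 := by omega
        rcases lt_trichotomy j n with hlt | heq | hgt
        · have hc0 : c j = 0 := hmin j hj1 hlt
          have hs0 : seqOf 0 n j = 0 := by
            simp only [seqOf, if_neg hj0, if_neg hn0]
            rw [if_neg (by omega)]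
          rw [hc0, hs0]
          simp
        · have hs1 : seqOf 0 n j = 1 := by
            simp only [seqOf, if_neg hj0, if_neg hn0]
            rw [if_pos (Or.inl heq)]
          rw [hs1, heq, hcn1]
          simp
        · -- j > n : write b^j * (b^n)⁻¹ = b^(j-n)
          have hsplit : b ^ j * (b ^ n)⁻¹ = b ^ (j - n) := by
            have : j = n + (j - n) := by omega
            rw [this, pow_add]
            field_simp
            rw [Nat.add_sub_cancel_left]
          rw [mul_assoc, hsplit]
          by_cases hodd : (j - n) % 2 = 1
          · have hs1 : seqOf 0 n j = 1 := by
              simp only [seqOf, if_neg hj0, if_neg hn0]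
              rw [if_pos (Or.inr ⟨hgt, hodd⟩)]
            have hpw : b ^ (j - n) < 0 :=
              Odd.pow_neg (Nat.odd_iff.mpr hodd) hbneg
            have hcle : (c j : ℝ) ≤ 1 := by exact_mod_cast h1 j
            rw [hs1]
            push_cast
            nlinarith [hpw, hcle]
          · have hs0 : seqOf 0 n j = 0 := by
              simp only [seqOf, if_neg hj0, if_neg hn0]
              rw [if_neg (by omega)]
            have hpw : 0 ≤ b ^ (j - n) :=
              Even.pow_nonneg (Nat.even_iff.mpr (by omega)) b
            have hcge : (0 : ℝ) ≤ (c j : ℝ) := Nat.cast_nonneg _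
            rw [hs0]
            push_cast
            rw [sub_zero]
            have := mul_nonneg hcge hpw
            linarith
      have hzero : (fun k : ℕ =>
          ((c (k + 1) : ℝ) * b ^ (k + 1) - (seqOf 0 n (k + 1) : ℝ) * b ^ (k + 1)) * (b ^ n)⁻¹)
            = fun _ => (0 : ℝ) := by
        have h0 := hdiff
        rw [show ((0 : ℝ) - 0) * (b ^ n)⁻¹ = 0 by ring] at h0
        exact (hasSum_zero_iff_of_nonneg hnn).mp h0
      -- deduce the digits
      have hdig : ∀ k : ℕ, c (k + 1) = seqOf 0 n (k + 1) := by
        intro k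
        have hk := congrFun hzero k
        have hbk : b ^ (k + 1) ≠ 0 := pow_ne_zero _ hb0
        have hbni : (b ^ n)⁻¹ ≠ 0 := inv_ne_zero hbn0
        have : (c (k + 1) : ℝ) = (seqOf 0 n (k + 1) : ℝ) := by
          rcases mul_eq_zero.mp hk with h | h
          · rcases mul_eq_zero.mp (by rw [← sub_mul] at h; exact h) with h' | h'
            · linarith [sub_eq_zero.mp h']
            · exact absurd h' hbk
          · exact absurd h hbni
        exact_mod_cast this
      refine ⟨(c 0, n), ?_⟩
      funext k
      cases k with
      | zero => simp [seqOf]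
      | succ m =>
        rw [hdig m]
        simp [seqOf]
  constructor
  · exact Set.Countable.mono hsub (Set.countable_range _)
  · refine Set.infinite_of_injective_forall_mem
      (f := fun n : ℕ => seqOf 0 (n + 1)) ?_ ?_
    · intro a b hab
      have h1 := congrFun hab (a + 1)
      have h2 := congrFun hab (b + 1)
      simp only [seqOf, if_neg (Nat.succ_ne_zero a), if_neg (Nat.succ_ne_zero b),
        if_neg (Nat.succ_ne_zero _)] at h1 h2
      simp only [true_or, if_true] at h1 h2
      by_cases hc1 : a + 1 = b + 1 ∨ (b + 1 < a + 1 ∧ (a + 1 - (b + 1)) % 2 = 1)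
      · by_cases hc2 : b + 1 = a + 1 ∨ (a + 1 < b + 1 ∧ (b + 1 - (a + 1)) % 2 = 1)
        · omega
        · rw [if_neg hc2] at h2; omega
      · rw [if_neg hc1] at h1; omega
    · intro n
      exact hmem 0 (n + 1) (Nat.zero_le 1)
end

section
/- If -(1+√5)/2 < q < -1, then every interior point of J_q has continuum many (i.e., 2^ℵ₀) expansions in base q with digits {0,1}. -/
namespace ContExp

/-- Numeric facts about `q`, `a = q/(q²-1)`, `b = 1/(q²-1)` needed for the dynamics. -/
structure Nice (q a b : ℝ) : Prop where
  hq : q < -1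
  hqb : q * b = a
  hqa : q * a = b + 1
  ha1 : a + 1 < 0
  hb : 0 < b
  hb1a : a < b - 1
  hqb1 : q * (b - 1) < b
  habq : a < b + q

variable {q a b : ℝ}

lemma Nice.hq0 (h : Nice q a b) : q < 0 := h.hq.trans (by norm_num)

lemma Nice.hab (h : Nice q a b) : a < b := h.hb1a.trans (by linarith [h.hb])

/-- digit emitted at state `p` (second component counts consumed bits of `s`). -/
noncomputable def dpt (q a b : ℝ) (s : ℕ → Bool) (p : ℝ × ℕ) : ℕ :=
  if b ≤ q * p.1 then 1 else if q * p.1 ≤ a + 1 then 0 else (if s p.2 then 1 else 0)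

noncomputable def step (q a b : ℝ) (s : ℕ → Bool) (p : ℝ × ℕ) : ℝ × ℕ :=
  (q * p.1 - (dpt q a b s p : ℝ),
   if b ≤ q * p.1 ∨ q * p.1 ≤ a + 1 then p.2 else p.2 + 1)

noncomputable def orb (q a b : ℝ) (s : ℕ → Bool) (x : ℝ) : ℕ → ℝ × ℕ
  | 0 => (x, 0)
  | n + 1 => step q a b s (orb q a b s x n)

noncomputable def dig (q a b : ℝ) (s : ℕ → Bool) (x : ℝ) (n : ℕ) : ℕ :=
  dpt q a b s (orb q a b s x n)

lemma dpt_le_one (s : ℕ → Bool) (p : ℝ × ℕ) : dpt q a b s p ≤ 1 := by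
  unfold dpt; split_ifs <;> omega

lemma orb_fst_succ (s : ℕ → Bool) (x : ℝ) (n : ℕ) :
    (orb q a b s x (n+1)).1 = q * (orb q a b s x n).1 - (dig q a b s x n : ℝ) := rfl

lemma step_mem (h : Nice q a b) (s : ℕ → Bool) (p : ℝ × ℕ) (hp : p.1 ∈ Set.Ioo a b) :
    (step q a b s p).1 ∈ Set.Ioo a b := by
  obtain ⟨h1, h2⟩ := hp
  have hqa' : q * p.1 < b + 1 := by
    have := mul_lt_mul_of_neg_left h1 h.hq0
    rw [h.hqa] at this; linarith
  have hqb' : a < q * p.1 := by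
    have := mul_lt_mul_of_neg_left h2 h.hq0
    rw [h.hqb] at this; linarith
  show q * p.1 - (dpt q a b s p : ℝ) ∈ Set.Ioo a b
  unfold dpt
  split_ifs with c1 c2 c3 <;> push_cast <;> constructor <;>
    first
      | linarith [h.hb1a, h.ha1, h.hb]
      | (push_neg at *; linarith [h.hb1a, h.ha1, h.hb])

lemma orb_mem (h : Nice q a b) (s : ℕ → Bool) {x : ℝ} (hx : x ∈ Set.Ioo a b) (n : ℕ) :
    (orb q a b s x n).1 ∈ Set.Ioo a b := by
  induction n with
  | zero => exact hx
  | succ n ih => exact step_mem h s _ ih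

lemma orb_snd_succ (s : ℕ → Bool) (x : ℝ) (n : ℕ) :
    (orb q a b s x (n+1)).2 =
      if b ≤ q * (orb q a b s x n).1 ∨ q * (orb q a b s x n).1 ≤ a + 1
      then (orb q a b s x n).2 else (orb q a b s x n).2 + 1 := rfl

lemma orb_snd_mono (s : ℕ → Bool) (x : ℝ) : Monotone (fun n => (orb q a b s x n).2) := by
  apply monotone_nat_of_le_succ
  intro n
  rw [orb_snd_succ]
  split_ifs <;> omega

/-- The key dynamical lemma: from any point of `(a,b)` the orbit reaches the branching
region (where neither forced digit applies) at some time `≥ n₀`. -/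
lemma reach (h : Nice q a b) (s : ℕ → Bool) {x : ℝ} (hx : x ∈ Set.Ioo a b) (n₀ : ℕ) :
    ∃ n, n₀ ≤ n ∧ ¬ (b ≤ q * (orb q a b s x n).1 ∨ q * (orb q a b s x n).1 ≤ a + 1) := by
  by_contra hc
  push_neg at hc
  set y : ℕ → ℝ := fun n => (orb q a b s x n).1 with hy
  have hmem : ∀ n, y n ∈ Set.Ioo a b := fun n => orb_mem h s hx n
  set d : ℕ → ℝ := fun n => if b ≤ q * y n then y n - a else b - y n with hd
  have hd_pos : 0 < d n₀ := by
    have := hmem n₀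
    simp only [hd]
    split_ifs <;> simp [Set.mem_Ioo] at this <;> linarith [this.1, this.2]
  have hd_le : ∀ n, d n ≤ b - a := by
    intro n
    have := hmem n
    simp only [hd]
    split_ifs <;> simp [Set.mem_Ioo] at this <;> linarith [this.1, this.2]
  have hstep : ∀ n, n₀ ≤ n → d (n + 1) = (-q) * d n := by
    intro n hn
    have hor := hc n hn
    have hym : y n ∈ Set.Ioo a b := hmem n
    rcases hor with h1 | h1
    · -- forced digit 1 : y (n+1) = q * y n - 1
      have hdig : dig q a b s x n = 1 := by unfold dig dpt; rw [if_pos h1]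
      have hrec : y (n + 1) = q * y n - 1 := by
        show (orb q a b s x (n+1)).1 = _
        rw [orb_fst_succ, hdig]; norm_num; exact Or.inl rfl
      have hup : q * y n < b + 1 := by
        have := mul_lt_mul_of_neg_left hym.1 h.hq0
        rw [h.hqa] at this; linarith
      have hlow : b - 1 ≤ y (n + 1) := by rw [hrec]; linarith
      have hnext : ¬ b ≤ q * y (n + 1) := by
        have : q * y (n + 1) ≤ q * (b - 1) :=
          mul_le_mul_of_nonpos_left hlow h.hq0.le
        linarith [h.hqb1]
      simp only [hd]
      rw [if_neg hnext, if_pos h1, hrec]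
      have : b + 1 = q * a := h.hqa.symm
      ring_nf
      nlinarith [h.hqa]
    · -- forced digit 0 : y (n+1) = q * y n
      have hnb : ¬ b ≤ q * y n := by
        intro hb'
        have := h.ha1; have := h.hb; linarith
      have hdig : dig q a b s x n = 0 := by unfold dig dpt; rw [if_neg hnb, if_pos h1]
      have hrec : y (n + 1) = q * y n := by
        show (orb q a b s x (n+1)).1 = _
        rw [orb_fst_succ, hdig]; norm_num; exact Or.inl rfl
      have hy1 : y (n + 1) ≤ a + 1 := by rw [hrec]; exact h1
      have hq1 : q * (a+1) ≤ q * y (n+1) := mul_le_mul_of_nonpos_left hy1 h.hq0.le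
      have hqa1 : a + 1 < q * (a + 1) := by
        have : q * (a + 1) = b + 1 + q := by rw [mul_add, h.hqa]; ring
        rw [this]; linarith [h.habq]
      have hnot2 : ¬ q * y (n + 1) ≤ a + 1 := by linarith
      have hnext : b ≤ q * y (n + 1) := (hc (n+1) (by omega)).resolve_right hnot2
      simp only [hd]
      rw [if_pos hnext, if_neg hnb, hrec]
      nlinarith [h.hqb]
  have hgrow : ∀ k, d (n₀ + k) = (-q) ^ k * d n₀ := by
    intro k
    induction k with
    | zero => simp
    | succ k ih =>
      have := hstep (n₀ + k) (by omega)
      rw [show n₀ + (k+1) = (n₀ + k) + 1 from rfl, this, ih, pow_succ]; ring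
  have hq1 : (1:ℝ) < -q := by linarith [h.hq]
  obtain ⟨k, hk⟩ := pow_unbounded_of_one_lt ((b - a) / d n₀) hq1
  have : (b - a) < (-q) ^ k * d n₀ := by
    rw [div_lt_iff₀ hd_pos] at hk; linarith
  linarith [hd_le (n₀ + k), hgrow k]

lemma snd_unbounded (h : Nice q a b) (s : ℕ → Bool) {x : ℝ} (hx : x ∈ Set.Ioo a b) (m : ℕ) :
    ∃ n, m < (orb q a b s x n).2 := by
  induction m with
  | zero =>
    obtain ⟨n, _, hbr⟩ := reach h s hx 0
    refine ⟨n + 1, ?_⟩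
    rw [orb_snd_succ, if_neg hbr]
    omega
  | succ m ih =>
    obtain ⟨n, hn⟩ := ih
    obtain ⟨n', hn', hbr⟩ := reach h s hx n
    refine ⟨n' + 1, ?_⟩
    rw [orb_snd_succ, if_neg hbr]
    have := orb_snd_mono (q := q) (a := a) (b := b) s x hn'
    simp only at this
    omega

/-- digit sequence associated to a boolean stream. -/
noncomputable def cseq (q a b : ℝ) (s : ℕ → Bool) (x : ℝ) : ℕ → ℕ
  | 0 => 0
  | n + 1 => dig q a b s x n

lemma key_hassum (h : Nice q a b) (s : ℕ → Bool) {x : ℝ} (hx : x ∈ Set.Ioo a b) :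
    HasSum (fun k : ℕ => (dig q a b s x k : ℝ) / q ^ (k + 1)) x := by
  have hq0 : q ≠ 0 := by have := h.hq0; linarith
  have habs : (1:ℝ) < |q| := by
    rw [abs_of_neg h.hq0]; linarith [h.hq]
  have hr0 : (0:ℝ) ≤ |q|⁻¹ := by positivity
  have hr1 : |q|⁻¹ < 1 := inv_lt_one_of_one_lt₀ habs
  set f : ℕ → ℝ := fun k => (dig q a b s x k : ℝ) / q ^ (k + 1) with hf
  have hsummable : Summable f := by
    apply Summable.of_norm_bounded (g := fun k => |q|⁻¹ * |q|⁻¹ ^ k)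
      ((summable_geometric_of_lt_one hr0 hr1).mul_left _)
    intro k
    have hd1 : (dig q a b s x k : ℝ) ≤ 1 := by
      exact_mod_cast dpt_le_one s _
    have hd0 : (0:ℝ) ≤ (dig q a b s x k : ℝ) := by positivity
    have hpow : |q ^ (k+1)| = |q| ^ (k+1) := abs_pow q (k+1)
    rw [hf]
    simp only [norm_div, Real.norm_eq_abs, hpow]
    rw [abs_of_nonneg hd0]
    have hqpos : (0:ℝ) < |q| ^ (k+1) := by positivity
    rw [div_le_iff₀ hqpos]
    have : |q|⁻¹ * |q|⁻¹ ^ k * |q| ^ (k+1) = 1 := by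
      have hq' : |q| ≠ 0 := by positivity
      rw [pow_succ, ← mul_assoc, mul_assoc (|q|⁻¹), ← mul_pow, inv_mul_cancel₀ hq', one_pow, mul_one, inv_mul_cancel₀ hq']
    rw [this]; exact hd1
  -- partial sums identity
  have hiden : ∀ n, ∑ k ∈ Finset.range n, f k = x - (orb q a b s x n).1 / q ^ n := by
    intro n
    induction n with
    | zero => simp [orb]
    | succ n ih =>
      rw [Finset.sum_range_succ, ih, hf]
      have hrec := orb_fst_succ (q := q) (a := a) (b := b) s x n
      rw [hrec]
      have hqn : q ^ n ≠ 0 := pow_ne_zero n hq0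
      have hqn1 : q ^ (n+1) ≠ 0 := pow_ne_zero _ hq0
      field_simp
      ring
  -- the remainder tends to zero
  have hM : ∀ n, ‖(orb q a b s x n).1 / q ^ n‖ ≤ (|a| + |b|) * |q|⁻¹ ^ n := by
    intro n
    have hm := orb_mem h s hx n
    have h1 : |(orb q a b s x n).1| ≤ |a| + |b| := by
      rw [abs_le]
      constructor
      · have : -(|a| + |b|) ≤ a := by
          have := abs_nonneg b; have := neg_abs_le a; linarith
        linarith [hm.1]
      · have : b ≤ |a| + |b| := by
          have := abs_nonneg a; have := le_abs_self b; linarith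
        linarith [hm.2]
    have hqn : (0:ℝ) < |q| ^ n := by positivity
    rw [norm_div, Real.norm_eq_abs, Real.norm_eq_abs, abs_pow, div_le_iff₀ hqn]
    have : (|a| + |b|) * |q|⁻¹ ^ n * |q| ^ n = |a| + |b| := by
      rw [inv_pow]
      field_simp
    rw [this]; exact h1
  have htend0 : Filter.Tendsto (fun n => (orb q a b s x n).1 / q ^ n) Filter.atTop (nhds 0) := by
    apply squeeze_zero_norm hM
    have := (tendsto_pow_atTop_nhds_zero_of_lt_one hr0 hr1).const_mul (|a| + |b|)
    simpa using this
  have htends : Filter.Tendsto (fun n => ∑ k ∈ Finset.range n, f k) Filter.atTop (nhds x) := by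
    have : (fun n => ∑ k ∈ Finset.range n, f k) = fun n => x - (orb q a b s x n).1 / q ^ n := by
      funext n; exact hiden n
    rw [this]
    simpa using (tendsto_const_nhds (x := x)).sub htend0
  have := hsummable.hasSum.tendsto_sum_nat
  have heq : ∑' k, f k = x := tendsto_nhds_unique this htends
  rw [← heq]
  exact hsummable.hasSum

lemma cseq_isExpansion (h : Nice q a b) (s : ℕ → Bool) {x : ℝ} (hx : x ∈ Set.Ioo a b) :
    IsExpansionR q x (cseq q a b s x) := by
  constructor
  · intro k
    cases k with
    | zero => simp [cseq]
    | succ n => exact dpt_le_one s _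
  · exact key_hassum h s hx

lemma cseq_injective (h : Nice q a b) {x : ℝ} (hx : x ∈ Set.Ioo a b) :
    Function.Injective (fun s : ℕ → Bool => cseq q a b s x) := by
  intro s s' he
  simp only at he
  by_contra hne
  obtain ⟨m, hm, hmin⟩ :
      ∃ m, s m ≠ s' m ∧ ∀ i, i < m → s i = s' i := by
    have hex : ∃ m, s m ≠ s' m := Function.ne_iff.mp hne
    refine ⟨Nat.find hex, Nat.find_spec hex, fun i hi => ?_⟩
    by_contra hcon
    exact Nat.find_min hex hi hcon
  -- states agree while fewer than m+1 bits consumed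
  have claimA : ∀ n, (orb q a b s x n).2 ≤ m → orb q a b s x n = orb q a b s' x n := by
    intro n
    induction n with
    | zero => intro _; rfl
    | succ n ih =>
      intro hj
      have hmono : (orb q a b s x n).2 ≤ (orb q a b s x (n+1)).2 :=
        orb_snd_mono s x (Nat.le_succ n)
      have hp := ih (le_trans hmono hj)
      show step q a b s (orb q a b s x n) = step q a b s' (orb q a b s' x n)
      rw [← hp]
      set p := orb q a b s x n with hpdef
      unfold step dpt
      by_cases c1 : b ≤ q * p.1
      · simp [c1]
      · by_cases c2 : q * p.1 ≤ a + 1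
        · simp [c1, c2]
        · have hinc : (orb q a b s x (n+1)).2 = p.2 + 1 := by
            rw [orb_snd_succ, ← hpdef, if_neg (by tauto)]
          have : p.2 < m := by omega
          simp [c1, c2, hmin p.2 this]
  -- find the first time more than m bits are consumed
  have hub : ∃ n, m < (orb q a b s x n).2 := snd_unbounded h s hx m
  set N := Nat.find hub with hN
  have hNs : m < (orb q a b s x N).2 := Nat.find_spec hub
  have hN0 : N ≠ 0 := by
    intro h0
    rw [h0] at hNs
    simp [orb] at hNs
  obtain ⟨K, hK⟩ : ∃ K, N = K + 1 := ⟨N - 1, by omega⟩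
  have hKmin : ¬ m < (orb q a b s x K).2 := Nat.find_min hub (by omega)
  push_neg at hKmin
  -- the step at K must be a branch with exactly m bits consumed
  have hbr : ¬ (b ≤ q * (orb q a b s x K).1 ∨ q * (orb q a b s x K).1 ≤ a + 1) := by
    intro hcon
    have : (orb q a b s x (K+1)).2 = (orb q a b s x K).2 := by
      rw [orb_snd_succ, if_pos hcon]
    rw [hK] at hNs; omega
  have hsnd : (orb q a b s x (K+1)).2 = (orb q a b s x K).2 + 1 := by
    rw [orb_snd_succ, if_neg hbr]
  have hKm : (orb q a b s x K).2 = m := by rw [hK] at hNs; omega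
  have hpe : orb q a b s x K = orb q a b s' x K := claimA K (le_of_eq hKm)
  -- digits differ at step K
  have hdig : dig q a b s x K ≠ dig q a b s' x K := by
    unfold dig dpt
    rw [← hpe]
    push_neg at hbr
    simp only [if_neg (not_le.mpr hbr.1), if_neg (not_le.mpr hbr.2), hKm]
    cases h1 : s m <;> cases h2 : s' m <;> simp [h1, h2] <;> simp [h1, h2] at hm
  have : cseq q a b s x (K+1) = cseq q a b s' x (K+1) := by rw [he]
  exact hdig this


lemma geom_odd_support (hq : q < -1) :
    HasSum (fun k : ℕ => if Odd k then (q ^ (k+1))⁻¹ else 0) (1/(q^2-1)) := by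
  have hq0 : q ≠ 0 := by linarith
  have hq2 : (1:ℝ) < q^2 := by nlinarith
  have h0 : (0:ℝ) ≤ (q^2)⁻¹ := by positivity
  have h1 : (q^2)⁻¹ < 1 := inv_lt_one_of_one_lt₀ hq2
  have hg : HasSum (fun j : ℕ => (q^2)⁻¹ * ((q^2)⁻¹)^j) ((q^2)⁻¹ * (1 - (q^2)⁻¹)⁻¹) :=
    (hasSum_geometric_of_lt_one h0 h1).mul_left _
  have hinj : Function.Injective (fun j : ℕ => 2*j+1) := by
    intro a b hab; simp only [] at hab; omega
  have hval : (q^2)⁻¹ * (1 - (q^2)⁻¹)⁻¹ = 1/(q^2-1) := by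
    have : q^2 - 1 ≠ 0 := by nlinarith
    field_simp
  rw [← hval]
  apply (hinj.hasSum_iff ?_).mp
  · convert hg using 1
    funext j
    have hodd : Odd (2*j+1) := ⟨j, by ring⟩
    simp only [Function.comp_apply, if_pos hodd]
    rw [show 2*j+1+1 = 2*(j+1) by ring, pow_mul, ← inv_pow, pow_succ]
    ring
  · intro k hk
    have : ¬ Odd k := by
      intro ⟨j, hj⟩
      exact hk ⟨j, by simp only []; omega⟩
    rw [if_neg this]

lemma geom_even_support (hq : q < -1) :
    HasSum (fun k : ℕ => if Even k then (q ^ (k+1))⁻¹ else 0) (q/(q^2-1)) := by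
  have hq0 : q ≠ 0 := by linarith
  have hq2 : (1:ℝ) < q^2 := by nlinarith
  have h0 : (0:ℝ) ≤ (q^2)⁻¹ := by positivity
  have h1 : (q^2)⁻¹ < 1 := inv_lt_one_of_one_lt₀ hq2
  have hg : HasSum (fun j : ℕ => q⁻¹ * ((q^2)⁻¹)^j) (q⁻¹ * (1 - (q^2)⁻¹)⁻¹) :=
    (hasSum_geometric_of_lt_one h0 h1).mul_left _
  have hinj : Function.Injective (fun j : ℕ => 2*j) := by
    intro a b hab; simp only [] at hab; omega
  have hval : q⁻¹ * (1 - (q^2)⁻¹)⁻¹ = q/(q^2-1) := by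
    have : q^2 - 1 ≠ 0 := by nlinarith
    field_simp
  rw [← hval]
  apply (hinj.hasSum_iff ?_).mp
  · convert hg using 1
    funext j
    have heven : Even (2*j) := ⟨j, by ring⟩
    simp only [Function.comp_apply, if_pos heven]
    rw [show 2*j+1 = 2*j+1 from rfl, pow_succ, pow_mul, ← inv_pow]
    rw [mul_inv]
    ring
  · intro k hk
    have : ¬ Even k := by
      intro ⟨j, hj⟩
      exact hk ⟨j, by simp only []; omega⟩
    rw [if_neg this]

lemma JR_subset (hq : q < -1) :
    JR q ⊆ Set.Icc (q/(q^2-1)) (1/(q^2-1)) := by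
  rintro x ⟨c, hc1, hsum⟩
  have hq0 : q ≠ 0 := by linarith
  constructor
  · apply hasSum_le ?_ (geom_even_support hq) hsum
    intro k
    rcases Nat.even_or_odd k with he | ho
    · rw [if_pos he]
      have hodd : Odd (k+1) := Even.add_one he
      have hneg : q ^ (k+1) < 0 := hodd.pow_neg (by linarith)
      have hcle : (c (k+1) : ℝ) ≤ 1 := by exact_mod_cast hc1 (k+1)
      have hc0 : (0:ℝ) ≤ (c (k+1) : ℝ) := by positivity
      rw [div_eq_mul_inv]
      have hinv : (q ^ (k+1))⁻¹ < 0 := inv_lt_zero.mpr hneg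
      nlinarith
    · rw [if_neg (Nat.not_even_iff_odd.mpr ho)]
      have heven : Even (k+1) := Odd.add_one ho
      have hpos : 0 < q ^ (k+1) := heven.pow_pos (by exact hq0)
      exact div_nonneg (by positivity) hpos.le
  · apply hasSum_le ?_ hsum (geom_odd_support hq)
    intro k
    rcases Nat.even_or_odd k with he | ho
    · rw [if_neg (by simpa using he : ¬ Odd k)]
      have hodd : Odd (k+1) := Even.add_one he
      have hneg : q ^ (k+1) < 0 := hodd.pow_neg (by linarith)
      exact div_nonpos_of_nonneg_of_nonpos (by positivity) hneg.le
    · rw [if_pos ho]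
      have heven : Even (k+1) := Odd.add_one ho
      have hpos : 0 < q ^ (k+1) := heven.pow_pos hq0
      have hcle : (c (k+1) : ℝ) ≤ 1 := by exact_mod_cast hc1 (k+1)
      rw [← one_div]
      exact div_le_div_of_nonneg_right hcle hpos.le

end ContExp

theorem continuum_expansions_neg_base (q : ℝ)
    (hq1 : -((1 + Real.sqrt 5) / 2) < q) (hq2 : q < -1)
    (x : ℝ) (hx : x ∈ interior (JR q)) :
    Cardinal.mk {c : ℕ → ℕ | IsExpansionR q x c} = Cardinal.continuum := by
  set a : ℝ := q / (q^2 - 1) with ha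
  set b : ℝ := 1 / (q^2 - 1) with hb
  have hD : (0:ℝ) < q^2 - 1 := by nlinarith
  have hD0 : q^2 - 1 ≠ 0 := ne_of_gt hD
  have hq0 : q ≠ 0 := by linarith
  have hgold : q^2 + q - 1 < 0 := by
    have hs : Real.sqrt 5 ^ 2 = 5 := Real.sq_sqrt (by norm_num)
    have hs0 : 0 ≤ Real.sqrt 5 := Real.sqrt_nonneg 5
    have h1 : 0 < q + (1 + Real.sqrt 5)/2 := by linarith
    have h2 : q + (1 - Real.sqrt 5)/2 < 0 := by linarith
    nlinarith [mul_neg_of_pos_of_neg h1 h2]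
  have hcubic : 0 < q^3 - 2*q + 1 := by nlinarith [mul_pos_of_neg_of_neg (show q - 1 < 0 by linarith) hgold]
  have hnice : ContExp.Nice q a b := by
    refine ⟨hq2, ?_, ?_, ?_, ?_, ?_, ?_, ?_⟩
    · rw [ha, hb]; field_simp
    · rw [ha, hb]; field_simp; ring_nf
    · rw [ha]
      have h1 : q + (q^2 - 1) < 0 := by nlinarith
      have : q / (q^2-1) + 1 = (q + (q^2-1))/(q^2-1) := by field_simp
      rw [this]
      exact div_neg_of_neg_of_pos h1 hD
    · rw [hb]; positivity
    · rw [ha, hb]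
      rw [div_sub' hD0, div_lt_div_iff₀ hD hD]
      nlinarith
    · rw [hb]
      rw [show q * (1/(q^2-1) - 1) = (q * (1 - (q^2-1)))/(q^2-1) by field_simp]
      rw [div_lt_div_iff₀ hD hD]
      nlinarith
    · rw [ha, hb]
      rw [show 1/(q^2-1) + q = (1 + q*(q^2-1))/(q^2-1) by field_simp]
      rw [div_lt_div_iff₀ hD hD]
      nlinarith
  have hxab : x ∈ Set.Ioo a b := by
    have hsub : JR q ⊆ Set.Icc a b := ContExp.JR_subset hq2
    have := interior_mono hsub hx
    rwa [interior_Icc] at this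
  apply le_antisymm
  · calc Cardinal.mk {c : ℕ → ℕ | IsExpansionR q x c}
        ≤ Cardinal.mk (ℕ → ℕ) := Cardinal.mk_set_le _
      _ = Cardinal.continuum := by
          rw [Cardinal.mk_arrow]; simp [Cardinal.aleph0_power_aleph0]
  · have hinj : Function.Injective
        (fun s : ℕ → Bool => (⟨ContExp.cseq q a b s x, ContExp.cseq_isExpansion hnice s hxab⟩ :
          {c : ℕ → ℕ | IsExpansionR q x c})) := by
      intro s s' hss
      exact ContExp.cseq_injective hnice hxab (congrArg Subtype.val hss)
    calc Cardinal.continuum = Cardinal.mk (ℕ → Bool) := by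
          rw [Cardinal.mk_arrow]; simp [Cardinal.two_power_aleph0]
      _ ≤ Cardinal.mk {c : ℕ → ℕ | IsExpansionR q x c} := Cardinal.mk_le_of_injective hinj
end

section
/- Let q = ip with 1 < p ≤ √2. Identifying ℂ with ℝ², J_q equals the rectangle [-p²/(p⁴-1), 1/(p⁴-1)] × [-p³/(p⁴-1), p/(p⁴-1)]. -/
open Set Filter

def IsExpansionC (q z : ℂ) (c : ℕ → ℕ) : Prop :=
  (∀ k, c k ≤ 1) ∧ HasSum (fun k : ℕ => (c (k + 1) : ℂ) / q ^ (k + 1)) z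

def JC (q : ℂ) : Set ℂ := {z | ∃ c, IsExpansionC q z c}

/-! ### Greedy expansion -/

private noncomputable def grem (s u x : ℝ) : ℕ → ℝ
  | 0 => x
  | n + 1 => if u * s ^ n ≤ grem s u x n then grem s u x n - u * s ^ n else grem s u x n

private noncomputable def gdig (s u x : ℝ) (n : ℕ) : ℕ :=
  if u * s ^ n ≤ grem s u x n then 1 else 0

private lemma grem_invariant {s u x : ℝ} (hs2 : 2⁻¹ ≤ s) (hs1 : s < 1) (hu : 0 < u)
    (hx0 : 0 ≤ x) (hx1 : x ≤ u / (1 - s)) :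
    ∀ n, 0 ≤ grem s u x n ∧ grem s u x n ≤ u * s ^ n / (1 - s) := by
  have h1s : 0 < 1 - s := by linarith
  have hsp : (0:ℝ) < s := lt_of_lt_of_le (by norm_num) hs2
  intro n
  induction n with
  | zero => exact ⟨hx0, by simpa [grem] using hx1⟩
  | succ n ih =>
    have hpow : (0:ℝ) < u * s ^ n := by positivity
    have key : u * s ^ n / (1 - s) - u * s ^ n = u * s ^ (n + 1) / (1 - s) := by
      field_simp; ring
    rw [show grem s u x (n+1) = if u * s ^ n ≤ grem s u x n then
        grem s u x n - u * s ^ n else grem s u x n from rfl]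
    split
    · refine ⟨by linarith [‹u * s ^ n ≤ grem s u x n›], ?_⟩
      linarith [ih.2]
    · refine ⟨ih.1, ?_⟩
      have hlt : grem s u x n < u * s ^ n := by linarith [not_le.mp ‹¬ u * s ^ n ≤ grem s u x n›]
      have : u * s ^ n * (1 - s) ≤ u * s ^ (n + 1) := by
        have h1 : 1 - s ≤ s := by linarith
        calc u * s ^ n * (1 - s) ≤ u * s ^ n * s := by nlinarith
          _ = u * s ^ (n + 1) := by ring
      rw [le_div_iff₀ h1s]
      nlinarith

private lemma grem_partial {s u x : ℝ} :
    ∀ n, ∑ j ∈ Finset.range n, (gdig s u x j : ℝ) * (u * s ^ j) = x - grem s u x n := by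
  intro n
  induction n with
  | zero => simp [grem]
  | succ n ih =>
    rw [Finset.sum_range_succ, ih]
    rw [show grem s u x (n+1) = if u * s ^ n ≤ grem s u x n then
        grem s u x n - u * s ^ n else grem s u x n from rfl, gdig]
    split <;> simp <;> ring

private lemma greedy {s u x : ℝ} (hs2 : 2⁻¹ ≤ s) (hs1 : s < 1) (hu : 0 < u)
    (hx0 : 0 ≤ x) (hx1 : x ≤ u / (1 - s)) :
    ∃ a : ℕ → ℕ, (∀ j, a j ≤ 1) ∧ HasSum (fun j => (a j : ℝ) * (u * s ^ j)) x := by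
  have hsp : (0:ℝ) < s := lt_of_lt_of_le (by norm_num) hs2
  have h1s : (0:ℝ) < 1 - s := by linarith
  refine ⟨gdig s u x, fun j => by unfold gdig; split <;> omega, ?_⟩
  have hle : ∀ j, (gdig s u x j : ℝ) * (u * s ^ j) ≤ u * s ^ j := by
    intro j
    have : (gdig s u x j : ℝ) ≤ 1 := by unfold gdig; split <;> norm_num
    have hpos : (0:ℝ) ≤ u * s ^ j := by positivity
    nlinarith
  have hnn : ∀ j, (0:ℝ) ≤ (gdig s u x j : ℝ) * (u * s ^ j) := by
    intro j; positivity
  have hsum : Summable (fun j => (gdig s u x j : ℝ) * (u * s ^ j)) :=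
    Summable.of_nonneg_of_le hnn hle ((summable_geometric_of_lt_one hsp.le hs1).mul_left u)
  rw [hsum.hasSum_iff_tendsto_nat]
  have hten : Tendsto (fun n => grem s u x n) atTop (nhds 0) := by
    have hg : Tendsto (fun n : ℕ => s ^ n * (u / (1 - s))) atTop (nhds 0) := by
      simpa using (tendsto_pow_atTop_nhds_zero_of_lt_one hsp.le hs1).mul_const (u / (1 - s))
    refine squeeze_zero (fun n => (grem_invariant hs2 hs1 hu hx0 hx1 n).1) (fun n => ?_) hg
    have := (grem_invariant hs2 hs1 hu hx0 hx1 n).2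
    calc grem s u x n ≤ u * s ^ n / (1 - s) := this
      _ = s ^ n * (u / (1 - s)) := by ring
  have : Tendsto (fun n => x - grem s u x n) atTop (nhds (x - 0)) :=
    tendsto_const_nhds.sub hten
  simpa [grem_partial] using this

/-! ### Range of binary sums -/

private lemma sum_mem_Icc {s u x : ℝ} (hs0 : 0 ≤ s) (hs1 : s < 1) (hu : 0 ≤ u)
    {a : ℕ → ℕ} (ha : ∀ j, a j ≤ 1)
    (h : HasSum (fun j => (a j : ℝ) * (u * s ^ j)) x) : x ∈ Icc 0 (u / (1 - s)) := by
  have hgeo : HasSum (fun j : ℕ => u * s ^ j) (u / (1 - s)) := by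
    simpa [div_eq_mul_inv] using (hasSum_geometric_of_lt_one hs0 hs1).mul_left u
  constructor
  · exact hasSum_le (fun j => by positivity) hasSum_zero h
  · refine hasSum_le (fun j => ?_) h hgeo
    have h1 : (a j : ℝ) ≤ 1 := by exact_mod_cast ha j
    have hpos : (0:ℝ) ≤ u * s ^ j := by positivity
    nlinarith

/-! ### Sign flipping -/

private def flipE (a : ℕ → ℕ) : ℕ → ℕ := fun j => if Even j then 1 - a j else a j

private lemma flipE_binary {a : ℕ → ℕ} (ha : ∀ j, a j ≤ 1) : ∀ j, flipE a j ≤ 1 := by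
  intro j; have := ha j; unfold flipE; split <;> omega

private lemma flipE_flipE {a : ℕ → ℕ} (ha : ∀ j, a j ≤ 1) : flipE (flipE a) = a := by
  funext j; have := ha j; unfold flipE; by_cases hj : Even j <;> simp [hj] <;> omega

private lemma hasSum_evens {s u : ℝ} (hs0 : 0 ≤ s) (hs1 : s < 1) :
    HasSum (fun j : ℕ => if Even j then u * s ^ j else 0) (u / (1 - s ^ 2)) := by
  have hinj : Function.Injective (fun k : ℕ => 2 * k) := by
    intro a b h; simp only at h; omega
  have hzero : ∀ x ∉ Set.range (fun k : ℕ => 2 * k),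
      (if Even x then u * s ^ x else 0) = 0 := by
    intro x hx
    have : ¬ Even x := by
      rintro ⟨r, hr⟩
      exact hx ⟨r, by simp only []; omega⟩
    simp [this]
  rw [← hinj.hasSum_iff hzero]
  have hs2 : s ^ 2 < 1 := by nlinarith
  have hgeo : HasSum (fun k : ℕ => u * (s ^ 2) ^ k) (u / (1 - s ^ 2)) := by
    simpa [div_eq_mul_inv] using (hasSum_geometric_of_lt_one (by positivity) hs2).mul_left u
  have hfun : ((fun j : ℕ => if Even j then u * s ^ j else 0) ∘ (fun k : ℕ => 2 * k)) =
      fun k : ℕ => u * (s ^ 2) ^ k := by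
    funext k
    simp only [Function.comp]
    rw [if_pos ⟨k, by ring⟩, pow_mul]
  rw [hfun]
  exact hgeo

private lemma hasSum_flip {s u x : ℝ} (hs0 : 0 ≤ s) (hs1 : s < 1)
    {a : ℕ → ℕ} (ha : ∀ j, a j ≤ 1) :
    HasSum (fun j => (a j : ℝ) * ((-1) ^ (j + 1) * (u * s ^ j))) x ↔
      HasSum (fun j => (flipE a j : ℝ) * (u * s ^ j)) (x + u / (1 - s ^ 2)) := by
  have hg := hasSum_evens (u := u) hs0 hs1
  have hkey : ∀ j, (flipE a j : ℝ) * (u * s ^ j) =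
      (a j : ℝ) * ((-1) ^ (j + 1) * (u * s ^ j)) + (if Even j then u * s ^ j else 0) := by
    intro j
    unfold flipE
    by_cases hj : Even j
    · have h1 : ((-1:ℝ)) ^ (j + 1) = -1 := Odd.neg_one_pow (by exact hj.add_one)
      have h2 : ((1 - a j : ℕ) : ℝ) = 1 - (a j : ℝ) := by
        rw [Nat.cast_sub (ha j), Nat.cast_one]
      simp only [hj, if_pos, h1, h2]
      ring
    · have h1 : ((-1:ℝ)) ^ (j + 1) = 1 := Even.neg_one_pow (by
        simpa using (Nat.not_even_iff_odd.mp hj).add_one)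
      simp only [hj, if_neg, h1, if_false]
      ring
  constructor
  · intro h
    exact (h.add hg).congr_fun fun j => hkey j
  · intro h
    have := h.sub hg
    have h2 : x + u / (1 - s ^ 2) - u / (1 - s ^ 2) = x := by ring
    rw [h2] at this
    exact this.congr_fun fun j => by rw [hkey j]; ring

private lemma coord_iff {s u x : ℝ} (hs2 : 2⁻¹ ≤ s) (hs1 : s < 1) (hu : 0 < u) :
    (∃ a : ℕ → ℕ, (∀ j, a j ≤ 1) ∧
        HasSum (fun j => (a j : ℝ) * ((-1) ^ (j + 1) * (u * s ^ j))) x) ↔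
      x + u / (1 - s ^ 2) ∈ Icc 0 (u / (1 - s)) := by
  have hs0 : (0:ℝ) ≤ s := le_trans (by norm_num) hs2
  constructor
  · rintro ⟨a, ha, h⟩
    exact sum_mem_Icc hs0 hs1 hu.le (flipE_binary ha) ((hasSum_flip hs0 hs1 ha).1 h)
  · rintro ⟨h0, h1⟩
    obtain ⟨a, ha, h⟩ := greedy hs2 hs1 hu h0 h1
    refine ⟨flipE a, flipE_binary ha, ?_⟩
    rw [hasSum_flip hs0 hs1 (flipE_binary ha), flipE_flipE ha]
    exact h

private lemma div_ofReal {cx v r : ℝ} (hr : r ≠ 0) (hval : v * r = cx) :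
    (cx : ℂ) / ((r : ℝ) : ℂ) = ((v : ℝ) : ℂ) := by
  rw [div_eq_iff (Complex.ofReal_ne_zero.2 hr), ← Complex.ofReal_mul, hval]

private lemma div_I_ofReal {cx v r : ℝ} (hr : r ≠ 0) (hval : v * r = -cx) :
    (cx : ℂ) / (Complex.I * ((r : ℝ) : ℂ)) = Complex.I * ((v : ℝ) : ℂ) := by
  have hne : Complex.I * ((r : ℝ) : ℂ) ≠ 0 :=
    mul_ne_zero Complex.I_ne_zero (Complex.ofReal_ne_zero.2 hr)
  rw [div_eq_iff hne]
  have hvalC : (v : ℂ) * (r : ℂ) = -(cx : ℂ) := by exact_mod_cast hval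
  linear_combination (-((v : ℂ) * (r : ℂ))) * Complex.I_sq + hvalC

set_option maxHeartbeats 2000000 in
theorem J_imaginary_base_rectangle (p : ℝ) (hp1 : 1 < p) (hp2 : p ≤ Real.sqrt 2)
    (q : ℂ) (hq : q = Complex.I * p) :
    JC q = {z : ℂ |
      z.re ∈ Set.Icc (-p ^ 2 / (p ^ 4 - 1)) (1 / (p ^ 4 - 1)) ∧
      z.im ∈ Set.Icc (-p ^ 3 / (p ^ 4 - 1)) (p / (p ^ 4 - 1))} := by
  have hp0 : (0:ℝ) < p := by linarith
  have hpne : p ≠ 0 := ne_of_gt hp0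
  have hp2le : p ^ 2 ≤ 2 := by
    nlinarith [Real.sq_sqrt (show (0:ℝ) ≤ 2 by norm_num), Real.sqrt_nonneg 2]
  have hp21 : 1 < p ^ 2 := by nlinarith
  have hp41 : 1 < p ^ 4 := by nlinarith
  have hinvmul : (p ^ 2)⁻¹ * p ^ 2 = 1 := inv_mul_cancel₀ (by positivity)
  have hinvnn : (0:ℝ) < (p ^ 2)⁻¹ := by positivity
  have hs2 : (2:ℝ)⁻¹ ≤ p⁻¹ ^ 2 := by
    rw [inv_pow]; nlinarith
  have hs1 : p⁻¹ ^ 2 < 1 := by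
    rw [inv_pow]; nlinarith
  have hure : (0:ℝ) < p⁻¹ ^ 2 := by positivity
  have huim : (0:ℝ) < p⁻¹ := by positivity
  -- powers of q
  have hq2 : q ^ 2 = ((-(p ^ 2) : ℝ) : ℂ) := by
    rw [hq]; push_cast; rw [mul_pow, Complex.I_sq]; ring
  have hqeven : ∀ m : ℕ, q ^ (2 * m) = ((((-1:ℝ)) ^ m * p ^ (2 * m) : ℝ) : ℂ) := by
    intro m
    rw [pow_mul, hq2]
    push_cast
    rw [neg_pow, ← pow_mul]
  have hqodd : ∀ m : ℕ, q ^ (2 * m + 1) =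
      Complex.I * ((((-1:ℝ)) ^ m * p ^ (2 * m + 1) : ℝ) : ℂ) := by
    intro m
    rw [pow_succ, hqeven m, hq]
    push_cast
    try ring
  -- explicit values of the series terms
  have hFe : ∀ (c : ℕ → ℕ) (j : ℕ), ((c (2 * j + 1 + 1) : ℂ)) / q ^ (2 * j + 1 + 1)
      = (((c (2 * j + 1 + 1) : ℝ) * ((-1) ^ (j + 1) * (p⁻¹ ^ 2 * (p⁻¹ ^ 2) ^ j)) : ℝ) : ℂ) := by
    intro c j
    have hqe' : q ^ (2 * j + 1 + 1) = ((((-1:ℝ)) ^ (j + 1) * p ^ (2 * j + 1 + 1) : ℝ) : ℂ) := by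
      have := hqeven (j + 1)
      rw [show 2 * (j + 1) = 2 * j + 1 + 1 from by ring] at this
      exact this
    rw [hqe']
    have hr : ((-1:ℝ)) ^ (j + 1) * p ^ (2 * j + 1 + 1) ≠ 0 :=
      mul_ne_zero (pow_ne_zero _ (by norm_num)) (pow_ne_zero _ hpne)
    have hsign : ((-1:ℝ)) ^ (j + 1) * ((-1:ℝ)) ^ (j + 1) = 1 := by
      rw [← pow_add]; exact Even.neg_one_pow ⟨j + 1, by ring⟩
    have hpinv : (p⁻¹ ^ 2 * (p⁻¹ ^ 2) ^ j) * p ^ (2 * j + 1 + 1) = 1 := by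
      rw [← pow_mul, ← pow_add, inv_pow, show 2 + 2 * j = 2 * j + 1 + 1 from by ring,
        inv_mul_cancel₀ (pow_ne_zero _ hpne)]
    have hval : ((c (2 * j + 1 + 1) : ℝ) * ((-1) ^ (j + 1) * (p⁻¹ ^ 2 * (p⁻¹ ^ 2) ^ j))) *
        (((-1:ℝ)) ^ (j + 1) * p ^ (2 * j + 1 + 1)) = (c (2 * j + 1 + 1) : ℝ) := by
      calc _ = (c (2 * j + 1 + 1) : ℝ) * ((((-1:ℝ)) ^ (j + 1) * ((-1:ℝ)) ^ (j + 1)) *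
            ((p⁻¹ ^ 2 * (p⁻¹ ^ 2) ^ j) * p ^ (2 * j + 1 + 1))) := by ring
        _ = _ := by rw [hsign, hpinv]; ring
    have := div_ofReal hr hval
    rw [Complex.ofReal_natCast] at this
    exact this
  have hFo : ∀ (c : ℕ → ℕ) (j : ℕ), ((c (2 * j + 1) : ℂ)) / q ^ (2 * j + 1)
      = Complex.I *
        (((c (2 * j + 1) : ℝ) * ((-1) ^ (j + 1) * (p⁻¹ * (p⁻¹ ^ 2) ^ j)) : ℝ) : ℂ) := by
    intro c j
    rw [hqodd j]
    have hr : ((-1:ℝ)) ^ j * p ^ (2 * j + 1) ≠ 0 :=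
      mul_ne_zero (pow_ne_zero _ (by norm_num)) (pow_ne_zero _ hpne)
    have hsign : ((-1:ℝ)) ^ (j + 1) * ((-1:ℝ)) ^ j = -1 := by
      rw [← pow_add]; exact Odd.neg_one_pow ⟨j, by ring⟩
    have hpinv : (p⁻¹ * (p⁻¹ ^ 2) ^ j) * p ^ (2 * j + 1) = 1 := by
      rw [← pow_mul, ← pow_succ', inv_pow, inv_mul_cancel₀ (pow_ne_zero _ hpne)]
    have hval : ((c (2 * j + 1) : ℝ) * ((-1) ^ (j + 1) * (p⁻¹ * (p⁻¹ ^ 2) ^ j))) *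
        (((-1:ℝ)) ^ j * p ^ (2 * j + 1)) = -(c (2 * j + 1) : ℝ) := by
      calc _ = (c (2 * j + 1) : ℝ) * ((((-1:ℝ)) ^ (j + 1) * ((-1:ℝ)) ^ j) *
            ((p⁻¹ * (p⁻¹ ^ 2) ^ j) * p ^ (2 * j + 1))) := by ring
        _ = _ := by rw [hsign, hpinv]; ring
    have := div_I_ofReal hr hval
    rw [Complex.ofReal_natCast] at this
    exact this
  -- injections
  have hinj1 : Function.Injective (fun j : ℕ => 2 * j + 1) := by
    intro a b h; simp only at h; omega
  have hinj0 : Function.Injective (fun j : ℕ => 2 * j) := by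
    intro a b h; simp only at h; omega
  have hvan_re : ∀ (c : ℕ → ℕ), ∀ k ∉ Set.range (fun j : ℕ => 2 * j + 1),
      (((c (k + 1) : ℂ)) / q ^ (k + 1)).re = 0 := by
    intro c k hk
    obtain ⟨m, rfl⟩ : ∃ m, k = 2 * m := by
      rcases Nat.even_or_odd k with ⟨m, hm⟩ | ⟨m, hm⟩
      · exact ⟨m, by omega⟩
      · exact absurd ⟨m, by simp only []; omega⟩ hk
    rw [hFo c m, Complex.mul_re, Complex.I_re, Complex.I_im, Complex.ofReal_re,
      Complex.ofReal_im]
    ring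
  have hvan_im : ∀ (c : ℕ → ℕ), ∀ k ∉ Set.range (fun j : ℕ => 2 * j),
      (((c (k + 1) : ℂ)) / q ^ (k + 1)).im = 0 := by
    intro c k hk
    obtain ⟨m, rfl⟩ : ∃ m, k = 2 * m + 1 := by
      rcases Nat.even_or_odd k with ⟨m, hm⟩ | ⟨m, hm⟩
      · exact absurd ⟨m, by simp only []; omega⟩ hk
      · exact ⟨m, by omega⟩
    rw [hFe c m]
    exact Complex.ofReal_im _
  -- reduction to real series over odd/even indices
  have hsum_re_iff : ∀ (c : ℕ → ℕ) (x : ℝ),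
      HasSum (fun k => (((c (k + 1) : ℂ)) / q ^ (k + 1)).re) x ↔
        HasSum (fun j => (c (2 * j + 1 + 1) : ℝ) *
          ((-1) ^ (j + 1) * (p⁻¹ ^ 2 * (p⁻¹ ^ 2) ^ j))) x := by
    intro c x
    rw [← hinj1.hasSum_iff (hvan_re c)]
    have hcomp : ((fun k => (((c (k + 1) : ℂ)) / q ^ (k + 1)).re) ∘ (fun j : ℕ => 2 * j + 1)) =
        fun j => (c (2 * j + 1 + 1) : ℝ) * ((-1) ^ (j + 1) * (p⁻¹ ^ 2 * (p⁻¹ ^ 2) ^ j)) := by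
      funext j
      simp only [Function.comp]
      rw [hFe c j, Complex.ofReal_re]
    rw [hcomp]
  have hsum_im_iff : ∀ (c : ℕ → ℕ) (y : ℝ),
      HasSum (fun k => (((c (k + 1) : ℂ)) / q ^ (k + 1)).im) y ↔
        HasSum (fun j => (c (2 * j + 1) : ℝ) *
          ((-1) ^ (j + 1) * (p⁻¹ * (p⁻¹ ^ 2) ^ j))) y := by
    intro c y
    rw [← hinj0.hasSum_iff (hvan_im c)]
    have hcomp : ((fun k => (((c (k + 1) : ℂ)) / q ^ (k + 1)).im) ∘ (fun j : ℕ => 2 * j)) =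
        fun j => (c (2 * j + 1) : ℝ) * ((-1) ^ (j + 1) * (p⁻¹ * (p⁻¹ ^ 2) ^ j)) := by
      funext j
      simp only [Function.comp]
      rw [hFo c j, Complex.mul_im, Complex.I_re, Complex.I_im, Complex.ofReal_re,
        Complex.ofReal_im]
      ring
    rw [hcomp]
  -- arithmetic identities for the endpoints
  have hne4 : p ^ 4 - 1 ≠ 0 := by nlinarith
  have hne2 : p ^ 2 - 1 ≠ 0 := by nlinarith
  have e1 : p⁻¹ ^ 2 / (1 - (p⁻¹ ^ 2) ^ 2) = p ^ 2 / (p ^ 4 - 1) := by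
    rw [div_eq_div_iff (by nlinarith [hs1, hure] : (0:ℝ) < 1 - (p⁻¹ ^ 2) ^ 2).ne'
      (by nlinarith : (0:ℝ) < p ^ 4 - 1).ne']
    field_simp
    all_goals ring
  have h1s : (0:ℝ) < 1 - p⁻¹ ^ 2 := by linarith
  have e2 : p⁻¹ ^ 2 / (1 - p⁻¹ ^ 2) = 1 / (p ^ 2 - 1) := by
    rw [div_eq_div_iff h1s.ne' (by nlinarith : (0:ℝ) < p ^ 2 - 1).ne']
    field_simp
    all_goals ring
  have e3 : p⁻¹ / (1 - (p⁻¹ ^ 2) ^ 2) = p ^ 3 / (p ^ 4 - 1) := by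
    rw [div_eq_div_iff (by nlinarith [hs1, hure] : (0:ℝ) < 1 - (p⁻¹ ^ 2) ^ 2).ne'
      (by nlinarith : (0:ℝ) < p ^ 4 - 1).ne']
    field_simp
    all_goals ring
  have e4 : p⁻¹ / (1 - p⁻¹ ^ 2) = p / (p ^ 2 - 1) := by
    rw [div_eq_div_iff h1s.ne' (by nlinarith : (0:ℝ) < p ^ 2 - 1).ne']
    field_simp
    all_goals ring
  have key1 : 1 / (p ^ 2 - 1) = 1 / (p ^ 4 - 1) + p ^ 2 / (p ^ 4 - 1) := by
    field_simp
    all_goals ring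
  have key2 : p / (p ^ 2 - 1) = p / (p ^ 4 - 1) + p ^ 3 / (p ^ 4 - 1) := by
    field_simp
    all_goals ring
  have hng1 : -p ^ 2 / (p ^ 4 - 1) = -(p ^ 2 / (p ^ 4 - 1)) := by ring
  have hng2 : -p ^ 3 / (p ^ 4 - 1) = -(p ^ 3 / (p ^ 4 - 1)) := by ring
  have hre_iff : ∀ x : ℝ, (∃ a : ℕ → ℕ, (∀ j, a j ≤ 1) ∧
      HasSum (fun j => (a j : ℝ) * ((-1) ^ (j + 1) * (p⁻¹ ^ 2 * (p⁻¹ ^ 2) ^ j))) x) ↔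
      x ∈ Icc (-p ^ 2 / (p ^ 4 - 1)) (1 / (p ^ 4 - 1)) := by
    intro x
    rw [coord_iff hs2 hs1 hure, e1, e2]
    simp only [Set.mem_Icc]
    constructor
    · rintro ⟨h0, h1⟩
      constructor <;> linarith
    · rintro ⟨h0, h1⟩
      constructor <;> linarith
  have him_iff : ∀ y : ℝ, (∃ b : ℕ → ℕ, (∀ j, b j ≤ 1) ∧
      HasSum (fun j => (b j : ℝ) * ((-1) ^ (j + 1) * (p⁻¹ * (p⁻¹ ^ 2) ^ j))) y) ↔
      y ∈ Icc (-p ^ 3 / (p ^ 4 - 1)) (p / (p ^ 4 - 1)) := by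
    intro y
    rw [coord_iff hs2 hs1 huim, e3, e4]
    simp only [Set.mem_Icc]
    constructor
    · rintro ⟨h0, h1⟩
      constructor <;> linarith
    · rintro ⟨h0, h1⟩
      constructor <;> linarith
  ext z
  simp only [JC, IsExpansionC, Set.mem_setOf_eq]
  constructor
  · rintro ⟨c, hc, hsum⟩
    rw [Complex.hasSum_iff] at hsum
    obtain ⟨h1, h2⟩ := hsum
    rw [hsum_re_iff c] at h1
    rw [hsum_im_iff c] at h2
    exact ⟨(hre_iff z.re).1 ⟨fun j => c (2 * j + 1 + 1), fun j => hc _, h1⟩,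
      (him_iff z.im).1 ⟨fun j => c (2 * j + 1), fun j => hc _, h2⟩⟩
  · rintro ⟨hre, him⟩
    obtain ⟨a, ha, hsa⟩ := (hre_iff z.re).2 hre
    obtain ⟨b, hb, hsb⟩ := (him_iff z.im).2 him
    refine ⟨fun k => if Even k then a (k / 2 - 1) else b (k / 2), ?_, ?_⟩
    · intro k
      dsimp only
      split
      · exact ha _
      · exact hb _
    · rw [Complex.hasSum_iff]
      refine ⟨(hsum_re_iff (fun k => if Even k then a (k / 2 - 1) else b (k / 2)) z.re).2
          (hsa.congr_fun fun j => ?_),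
        (hsum_im_iff (fun k => if Even k then a (k / 2 - 1) else b (k / 2)) z.im).2
          (hsb.congr_fun fun j => ?_)⟩
      · have hev : Even (2 * j + 1 + 1) := ⟨j + 1, by ring⟩
        rw [if_pos hev, show (2 * j + 1 + 1) / 2 - 1 = j from by omega]
      · have hod : ¬ Even (2 * j + 1) := by
          simp [Nat.even_add_one, parity_simps]
        rw [if_neg hod, show (2 * j + 1) / 2 = j from by omega]
end

section
/- Let q = ip with 1 < p < √((1+√5)/2). Then every point of J_q = [-p²/(p⁴-1), 1/(p⁴-1)] × [-p³/(p⁴-1), p/(p⁴-1)] except the four vertices of this rectangle has continuum many expansions in base q with digits {0,1}. -/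
open Set Filter Topology

noncomputable section
open scoped Classical

def mw (p : ℝ) : ℝ := -p^2/(p^4-1)
def Mw (p : ℝ) : ℝ := 1/(p^4-1)
def Lb (p : ℝ) : ℝ := (mw p + 1 - p^2)/p^4
def Ub (p : ℝ) : ℝ := Mw p / p^4
def Ow (p : ℝ) : Set ℝ := Set.Ioo (mw p) (Mw p)
def Bw (p : ℝ) : Set ℝ := Set.Ioo (Lb p) (Ub p)

/-- bundle of numeric facts -/
structure PFacts (p : ℝ) : Prop where
  hp2 : 1 < p^2
  hβ1 : 1 < p^4
  hplt2 : p^2 < 2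
  hKey : p^4 < p^2 + 1
  hmw : (p^4-1) * mw p = -p^2
  hMw : (p^4-1) * Mw p = 1
  hLb : p^4 * Lb p = mw p + 1 - p^2
  hUb : p^4 * Ub p = Mw p
  hmw_neg : mw p < 0
  hMw_pos : 0 < Mw p
  hlen : mw p + 1 < Mw p
  hm1p : mw p + 1 - p^2 < 0
  hm1_neg : mw p + 1 < 0
  hLb_neg : Lb p < 0
  hUb_pos : 0 < Ub p
  hLb_mem : mw p < Lb p
  hUb_mem : Ub p < Mw p

lemma pfacts {p : ℝ} (hp1 : 1 < p) (hpφ : p^2 < (1 + Real.sqrt 5)/2) : PFacts p := by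
  have hp2 : 1 < p^2 := by nlinarith
  have hβ1 : 1 < p^4 := by nlinarith
  have hβ0 : p^4 - 1 ≠ 0 := by nlinarith
  have hβ0' : (p:ℝ)^4 ≠ 0 := by nlinarith
  have h5 : (Real.sqrt 5)^2 = 5 := Real.sq_sqrt (by norm_num)
  have h50 : 0 < Real.sqrt 5 := Real.sqrt_pos.mpr (by norm_num)
  have hplt2 : p^2 < 2 := by nlinarith [hpφ, sq_nonneg (Real.sqrt 5 - 3)]
  have hKey : p^4 < p^2 + 1 := by
    nlinarith [hpφ, sq_nonneg (2*p^2 - 1 - Real.sqrt 5)]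
  have hmw : (p^4-1) * mw p = -p^2 := by unfold mw; field_simp
  have hMw : (p^4-1) * Mw p = 1 := by unfold Mw; field_simp
  have hLb : p^4 * Lb p = mw p + 1 - p^2 := by unfold Lb; field_simp
  have hUb : p^4 * Ub p = Mw p := by unfold Ub; field_simp
  have hmw_neg : mw p < 0 := by nlinarith
  have hMw_pos : 0 < Mw p := by nlinarith
  have hlen : mw p + 1 < Mw p := by nlinarith
  have hm1p : mw p + 1 - p^2 < 0 := by nlinarith
  have hm1_neg : mw p + 1 < 0 := by nlinarith
  have hLb_neg : Lb p < 0 := by nlinarith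
  have hUb_pos : 0 < Ub p := by nlinarith
  have hLb_mem : mw p < Lb p := by nlinarith
  have hUb_mem : Ub p < Mw p := by nlinarith
  exact ⟨hp2, hβ1, hplt2, hKey, hmw, hMw, hLb, hUb, hmw_neg, hMw_pos, hlen,
    hm1p, hm1_neg, hLb_neg, hUb_pos, hLb_mem, hUb_mem⟩

lemma hBsubO {p : ℝ} (h : PFacts p) : Bw p ⊆ Ow p := fun w hw =>
  ⟨lt_trans h.hLb_mem hw.1, lt_trans hw.2 h.hUb_mem⟩

/-- Generic: digit/remainder recursion gives a HasSum. -/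
lemma hasSum_of_remainders (β : ℝ) (hβ : 1 < β) (w v : ℕ → ℝ) (C : ℝ)
    (hrec : ∀ n, w (n+1) = β * w n - v n) (hbd : ∀ n, |w n| ≤ C) :
    HasSum (fun n => v n / β^(n+1)) (w 0) := by
  have hβ0 : (0:ℝ) < β := by linarith
  have hC : 0 ≤ C := le_trans (abs_nonneg _) (hbd 0)
  have hinv : (1/β) < 1 := by rw [div_lt_one hβ0]; linarith
  have hinv0 : (0:ℝ) ≤ 1/β := by positivity
  have hvb : ∀ n, |v n| ≤ (β+1)*C := by
    intro n
    have := hrec n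
    have h1 : v n = β * w n - w (n+1) := by linarith
    rw [h1]
    calc |β * w n - w (n+1)| ≤ |β * w n| + |w (n+1)| := abs_sub _ _
      _ ≤ β * C + C := by
          rw [abs_mul, abs_of_pos hβ0]
          gcongr
          exacts [hbd n, hbd (n+1)]
      _ = (β+1)*C := by ring
  have hsum : Summable (fun n => v n / β^(n+1)) := by
    apply Summable.of_norm_bounded (g := fun n => ((β+1)*C/β) * (1/β)^n)
      (((summable_geometric_of_lt_one hinv0 hinv).mul_left _))
    intro n
    rw [Real.norm_eq_abs, abs_div, abs_of_pos (by positivity : (0:ℝ) < β^(n+1))]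
    rw [div_le_iff₀ (by positivity)]
    calc |v n| ≤ (β+1)*C := hvb n
      _ = (β+1)*C/β * (1/β)^n * β^(n+1) := by
          rw [one_div, inv_pow, pow_succ]
          have hb1 : β^n ≠ 0 := by positivity
          field_simp
  have hps : ∀ n, ∑ m ∈ Finset.range n, v m / β^(m+1) = w 0 - w n / β^n := by
    intro n
    induction n with
    | zero => simp
    | succ n ih =>
      rw [Finset.sum_range_succ, ih, hrec]
      have h2 : β ^ n ≠ 0 := by positivity
      field_simp
      ring
  rw [hsum.hasSum_iff_tendsto_nat]
  simp only [hps]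
  have h2 : Filter.Tendsto (fun n => w n / β^n) atTop (nhds 0) := by
    have hb : ∀ n, ‖w n / β^n‖ ≤ C * (1/β)^n := by
      intro n
      rw [Real.norm_eq_abs, abs_div, abs_of_pos (by positivity : (0:ℝ) < β^n)]
      rw [div_le_iff₀ (by positivity)]
      calc |w n| ≤ C := hbd n
        _ = C * (1/β)^n * β^n := by rw [one_div, inv_pow]; field_simp
    exact squeeze_zero_norm hb (by
      simpa using (tendsto_pow_atTop_nhds_zero_of_lt_one hinv0 hinv).const_mul C)
  simpa using Filter.Tendsto.const_sub (w 0) h2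

end
noncomputable section
open scoped Classical

/-- pair of binary digits (b,f) chosen at a branching point, per bit -/
def bpair (p w : ℝ) (bit : Bool) : ℕ × ℕ :=
  if p^4 * w ≤ mw p then (if bit then (1,0) else (1,1))
  else if p^4 * w < Mw p + 1 - p^2 then (if bit then (1,1) else (0,0))
  else (if bit then (0,0) else (0,1))

def mstep (p w : ℝ) (bit : Bool) : ℕ × ℕ :=
  if w ∈ Bw p then bpair p w bit
  else if Ub p ≤ w then (0,1) else (1,0)

def pval (p : ℝ) (d : ℕ × ℕ) : ℝ := (d.2 : ℝ) - p^2 * (d.1 : ℝ)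

def mstate (p w₀ : ℝ) (ω : ℕ → Bool) : ℕ → ℝ × ℕ
  | 0 => (w₀, 0)
  | n+1 =>
      ((p^4 * (mstate p w₀ ω n).1 - pval p (mstep p (mstate p w₀ ω n).1 (ω (mstate p w₀ ω n).2))),
       if (mstate p w₀ ω n).1 ∈ Bw p then (mstate p w₀ ω n).2 + 1 else (mstate p w₀ ω n).2)

def mdig (p w₀ : ℝ) (ω : ℕ → Bool) (n : ℕ) : ℕ × ℕ :=
  mstep p (mstate p w₀ ω n).1 (ω (mstate p w₀ ω n).2)

lemma mstate_fst (p w₀ : ℝ) (ω : ℕ → Bool) (n : ℕ) :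
    (mstate p w₀ ω (n+1)).1 = p^4 * (mstate p w₀ ω n).1 - pval p (mdig p w₀ ω n) := rfl

lemma mstate_snd (p w₀ : ℝ) (ω : ℕ → Bool) (n : ℕ) :
    (mstate p w₀ ω (n+1)).2 =
      if (mstate p w₀ ω n).1 ∈ Bw p then (mstate p w₀ ω n).2 + 1 else (mstate p w₀ ω n).2 := rfl

lemma mdig_le (p w₀ : ℝ) (ω : ℕ → Bool) (n : ℕ) :
    (mdig p w₀ ω n).1 ≤ 1 ∧ (mdig p w₀ ω n).2 ≤ 1 := by
  unfold mdig mstep bpair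
  split_ifs <;> simp

set_option maxHeartbeats 1000000 in
lemma mstep_mem {p : ℝ} (h : PFacts p) {w : ℝ} (hw : w ∈ Ow p) (bit : Bool) :
    p^4 * w - pval p (mstep p w bit) ∈ Ow p := by
  obtain ⟨hw1, hw2⟩ := hw
  have hb0 : (0:ℝ) < p^4 := by nlinarith [h.hβ1]
  have hbw1 : p^4 * mw p < p^4 * w := by nlinarith
  have hbw2 : p^4 * w < p^4 * Mw p := by nlinarith
  have hmM : mw p + p^2 < Mw p := by nlinarith [h.hmw, h.hMw, h.hβ1, h.hp2, h.hKey, h.hplt2]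
  have hβm : p^4 * mw p = mw p - p^2 := by nlinarith [h.hmw]
  have hβM : p^4 * Mw p = Mw p + 1 := by nlinarith [h.hMw]
  unfold mstep
  split_ifs with hB hU
  · -- branching case
    obtain ⟨hB1, hB2⟩ := hB
    have hbL : p^4 * Lb p < p^4 * w := by nlinarith
    have hbU : p^4 * w < p^4 * Ub p := by nlinarith
    rw [h.hLb] at hbL
    rw [h.hUb] at hbU
    unfold bpair
    split_ifs with c1 c2 <;> cases bit <;>
      · simp only [pval]
        push_cast
        constructor <;> linarith [h.hp2, h.hlen]
  · -- forced top
    simp only [pval]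
    push_cast
    have : Mw p ≤ p^4 * w := by
      have := h.hUb
      nlinarith
    constructor <;> nlinarith [h.hlen]
  · -- forced bottom: w ≤ Lb p
    have hLe : w ≤ Lb p := by
      rcases lt_or_ge (Lb p) w with hlt | hle
      · exact absurd ⟨hlt, lt_of_not_ge hU⟩ hB
      · exact hle
    have : p^4 * w ≤ mw p + 1 - p^2 := by
      have := h.hLb
      nlinarith
    simp only [pval]
    push_cast
    constructor <;> nlinarith [h.hlen]

lemma mstate_mem {p : ℝ} (h : PFacts p) {w₀ : ℝ} (hw0 : w₀ ∈ Ow p) (ω : ℕ → Bool) :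
    ∀ n, (mstate p w₀ ω n).1 ∈ Ow p := by
  intro n
  induction n with
  | zero => exact hw0
  | succ n ih => exact mstep_mem h ih _

lemma mdig_hasSum {p : ℝ} (h : PFacts p) {w₀ : ℝ} (hw0 : w₀ ∈ Ow p) (ω : ℕ → Bool) :
    HasSum (fun n => pval p (mdig p w₀ ω n) / (p^4)^(n+1)) w₀ := by
  have := hasSum_of_remainders (p^4) h.hβ1 (fun n => (mstate p w₀ ω n).1)
    (fun n => pval p (mdig p w₀ ω n)) (|mw p| + |Mw p|)
    (fun n => mstate_fst p w₀ ω n) (fun n => ?_)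
  · exact this
  · obtain ⟨h1, h2⟩ := mstate_mem h hw0 ω n
    rw [abs_le]
    constructor
    · nlinarith [neg_abs_le (mw p), abs_nonneg (Mw p)]
    · nlinarith [le_abs_self (Mw p), abs_nonneg (mw p)]
end
noncomputable section
open scoped Classical

lemma exists_B {p : ℝ} (h : PFacts p) {w₀ : ℝ} (hw0 : w₀ ∈ Ow p) (ω : ℕ → Bool) (n : ℕ) :
    ∃ k, n ≤ k ∧ (mstate p w₀ ω k).1 ∈ Bw p := by
  by_contra hc
  push_neg at hc
  have hO : ∀ k, (mstate p w₀ ω k).1 ∈ Ow p := mstate_mem h hw0 ω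
  have hb0 : (0:ℝ) < p^4 := by nlinarith [h.hβ1]
  by_cases hcase : ∃ k, n ≤ k ∧ (mstate p w₀ ω k).1 ≤ Lb p
  · obtain ⟨k, hk, hkLb⟩ := hcase
    set d := (mstate p w₀ ω k).1 - mw p with hd
    have hd0 : 0 < d := by
      have := (hO k).1
      simp only [hd]
      linarith
    have hstay : ∀ j, (mstate p w₀ ω (k+j)).1 ≤ Lb p ∧
        (mstate p w₀ ω (k+j)).1 - mw p = (p^4)^j * d := by
      intro j
      induction j with
      | zero => exact ⟨hkLb, by simp [hd]⟩
      | succ j ih =>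
        obtain ⟨ih1, ih2⟩ := ih
        have hB : (mstate p w₀ ω (k+j)).1 ∉ Bw p := hc _ (by omega)
        have hU : ¬ (Ub p ≤ (mstate p w₀ ω (k+j)).1) := by
          have := h.hUb_pos
          have := h.hLb_neg
          push_neg
          linarith
        have hstep : (mstate p w₀ ω (k+j+1)).1 = p^4 * (mstate p w₀ ω (k+j)).1 + p^2 := by
          rw [show k+j+1 = (k+j)+1 from rfl, mstate_fst]
          unfold mdig mstep
          rw [if_neg hB, if_neg hU]
          simp [pval]
        have hβm : p^4 * mw p = mw p - p^2 := by nlinarith [h.hmw]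
        have hrecd : (mstate p w₀ ω (k+j+1)).1 - mw p = (p^4)^(j+1) * d := by
          rw [hstep, pow_succ]
          linear_combination p^4 * ih2 + hβm
        refine ⟨?_, hrecd⟩
        -- next value is ≤ Lb since it is < Ub (indeed ≤ mw+1 < 0 < Ub), in O, and not in B
        have hupper : (mstate p w₀ ω (k+j+1)).1 ≤ mw p + 1 := by
          have hL : p^4 * (mstate p w₀ ω (k+j)).1 ≤ mw p + 1 - p^2 := by
            have := h.hLb
            nlinarith
          linarith [hstep.le, hstep.ge]
        have hB' : (mstate p w₀ ω (k+j+1)).1 ∉ Bw p := hc _ (by omega)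
        have hlt : (mstate p w₀ ω (k+j+1)).1 < Ub p := by
          have h1 := h.hm1_neg
          have h2 := h.hUb_pos
          linarith
        rcases lt_or_ge (Lb p) ((mstate p w₀ ω (k+j+1)).1) with hgt | hle
        · exact absurd ⟨hgt, hlt⟩ hB'
        · exact hle
    obtain ⟨j, hj⟩ := pow_unbounded_of_one_lt ((Lb p - mw p)/d) h.hβ1
    obtain ⟨h1, h2⟩ := hstay j
    have : (p^4)^j * d ≤ Lb p - mw p := by linarith [h2.ge, h2.le]
    rw [div_lt_iff₀ hd0] at hj
    nlinarith
  · push_neg at hcase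
    have hstay : ∀ j, Ub p ≤ (mstate p w₀ ω (n+j)).1 ∧
        Mw p - (mstate p w₀ ω (n+j)).1 = (p^4)^j * (Mw p - (mstate p w₀ ω n).1) := by
      intro j
      induction j with
      | zero =>
        refine ⟨?_, by simp⟩
        have hB := hc n le_rfl
        have hLb := hcase n le_rfl
        rcases lt_or_ge ((mstate p w₀ ω n).1) (Ub p) with hlt | hle
        · exact absurd ⟨hLb, hlt⟩ hB
        · exact hle
      | succ j ih =>
        obtain ⟨ih1, ih2⟩ := ih
        have hB : (mstate p w₀ ω (n+j)).1 ∉ Bw p := hc _ (by omega)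
        have hstep : (mstate p w₀ ω (n+j+1)).1 = p^4 * (mstate p w₀ ω (n+j)).1 - 1 := by
          rw [show n+j+1 = (n+j)+1 from rfl, mstate_fst]
          unfold mdig mstep
          rw [if_neg hB, if_pos ih1]
          simp [pval]
        have hβM : p^4 * Mw p = Mw p + 1 := by nlinarith [h.hMw]
        have hrecd : Mw p - (mstate p w₀ ω (n+j+1)).1
            = (p^4)^(j+1) * (Mw p - (mstate p w₀ ω n).1) := by
          rw [hstep, pow_succ]
          linear_combination p^4 * ih2 - hβM
        refine ⟨?_, hrecd⟩
        have hB' : (mstate p w₀ ω (n+j+1)).1 ∉ Bw p := hc _ (by omega)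
        have hLb' := hcase (n+j+1) (by omega)
        rcases lt_or_ge ((mstate p w₀ ω (n+j+1)).1) (Ub p) with hlt | hle
        · exact absurd ⟨hLb', hlt⟩ hB'
        · exact hle
    have hd0 : 0 < Mw p - (mstate p w₀ ω n).1 := by
      have := (hO n).2
      linarith
    obtain ⟨j, hj⟩ := pow_unbounded_of_one_lt
      ((Mw p - Ub p)/(Mw p - (mstate p w₀ ω n).1)) h.hβ1
    obtain ⟨h1, h2⟩ := hstay j
    rw [div_lt_iff₀ hd0] at hj
    nlinarith [h2.ge, h2.le]
end
noncomputable section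
open scoped Classical

lemma counter_mono (p w₀ : ℝ) (ω : ℕ → Bool) : Monotone (fun n => (mstate p w₀ ω n).2) := by
  apply monotone_nat_of_le_succ
  intro n
  rw [mstate_snd]
  split_ifs <;> omega

lemma counter_unbounded {p : ℝ} (h : PFacts p) {w₀ : ℝ} (hw0 : w₀ ∈ Ow p) (ω : ℕ → Bool) :
    ∀ i, ∃ n, i ≤ (mstate p w₀ ω n).2 := by
  intro i
  induction i with
  | zero => exact ⟨0, by omega⟩
  | succ i ih =>
    obtain ⟨n, hn⟩ := ih
    obtain ⟨k, hk, hB⟩ := exists_B h hw0 ω n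
    refine ⟨k+1, ?_⟩
    have h1 := counter_mono p w₀ ω hk
    have h2 : (mstate p w₀ ω (k+1)).2 = (mstate p w₀ ω k).2 + 1 := by
      rw [mstate_snd, if_pos hB]
    simp only at h1
    omega

lemma counter_hits {p : ℝ} (h : PFacts p) {w₀ : ℝ} (hw0 : w₀ ∈ Ow p) (ω : ℕ → Bool) (i : ℕ) :
    ∃ n, (mstate p w₀ ω n).1 ∈ Bw p ∧ (mstate p w₀ ω n).2 = i := by
  have hex : ∃ n, i + 1 ≤ (mstate p w₀ ω n).2 := counter_unbounded h hw0 ω (i+1)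
  have h0 : (mstate p w₀ ω 0).2 = 0 := rfl
  obtain ⟨n, hn⟩ : ∃ n, Nat.find hex = n + 1 := by
    have : Nat.find hex ≠ 0 := by
      intro h'
      have := Nat.find_spec hex
      rw [h'] at this
      omega
    exact ⟨Nat.find hex - 1, by omega⟩
  have hspec := Nat.find_spec hex
  rw [hn] at hspec
  have hmin : ¬ (i + 1 ≤ (mstate p w₀ ω n).2) := Nat.find_min hex (by omega)
  by_cases hB : (mstate p w₀ ω n).1 ∈ Bw p
  · refine ⟨n, hB, ?_⟩
    have h2 : (mstate p w₀ ω (n+1)).2 = (mstate p w₀ ω n).2 + 1 := by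
      rw [mstate_snd, if_pos hB]
    omega
  · exfalso
    have h2 : (mstate p w₀ ω (n+1)).2 = (mstate p w₀ ω n).2 := by
      rw [mstate_snd, if_neg hB]
    omega

lemma mdig_injective {p : ℝ} (h : PFacts p) {w₀ : ℝ} (hw0 : w₀ ∈ Ow p) :
    Function.Injective (fun ω => mdig p w₀ ω) := by
  intro ω ω' hdig
  simp only [funext_iff] at hdig
  have hstate : ∀ n, mstate p w₀ ω n = mstate p w₀ ω' n := by
    intro n
    induction n with
    | zero => rfl
    | succ n ih =>
      have hd := hdig n
      refine Prod.ext ?_ ?_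
      · rw [mstate_fst, mstate_fst, ih, hd]
      · rw [mstate_snd, mstate_snd, ih]
  funext i
  obtain ⟨n, hB, hcnt⟩ := counter_hits h hw0 ω i
  have hd := hdig n
  unfold mdig at hd
  rw [← hstate n, hcnt] at hd
  unfold mstep at hd
  rw [if_pos hB, if_pos hB] at hd
  unfold bpair at hd
  split_ifs at hd <;> cases hbit : ω i <;> cases hbit' : ω' i <;> simp_all [Prod.ext_iff]
noncomputable section
open scoped Classical
open Set

lemma digit_summable {β : ℝ} (hβ : 1 < β) (g : ℕ → ℕ) (hg : ∀ n, g n ≤ 1) :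
    Summable (fun n => (g n : ℝ)/β^(n+1)) := by
  have hβ0 : (0:ℝ) < β := by linarith
  have hinv : (1/β) < 1 := by rw [div_lt_one hβ0]; linarith
  have hinv0 : (0:ℝ) ≤ 1/β := by positivity
  apply Summable.of_norm_bounded (g := fun n => (1/β)^n)
    (summable_geometric_of_lt_one hinv0 hinv)
  intro n
  rw [Real.norm_eq_abs, abs_div, abs_of_nonneg (by positivity : (0:ℝ) ≤ (g n:ℝ)),
    abs_of_pos (by positivity : (0:ℝ) < β^(n+1)), div_le_iff₀ (by positivity)]
  have h1 : (g n : ℝ) ≤ 1 := by exact_mod_cast hg n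
  calc (g n : ℝ) ≤ 1 := h1
    _ = (1/β)^(n+1) * β^(n+1) := by rw [div_pow, one_pow]; field_simp
    _ ≤ (1/β)^n * β^(n+1) := by
        have h2 := pow_le_pow_of_le_one hinv0 hinv.le (Nat.le_succ n)
        simp only [Nat.succ_eq_add_one] at h2
        exact mul_le_mul_of_nonneg_right h2 (by positivity)

lemma pair_sum_split {p : ℝ} (h : PFacts p) (d : ℕ → ℕ × ℕ)
    (hd : ∀ n, (d n).1 ≤ 1 ∧ (d n).2 ≤ 1) {w : ℝ}
    (hs : HasSum (fun n => pval p (d n) / (p^4)^(n+1)) w) :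
    ∃ u v : ℝ, HasSum (fun n => ((d n).1 : ℝ)/(p^4)^(n+1)) u ∧
      HasSum (fun n => ((d n).2 : ℝ)/(p^4)^(n+1)) v ∧ v - p^2 * u = w := by
  have hu := (digit_summable h.hβ1 (fun n => (d n).1) (fun n => (hd n).1)).hasSum
  have hv := (digit_summable h.hβ1 (fun n => (d n).2) (fun n => (hd n).2)).hasSum
  refine ⟨_, _, hu, hv, ?_⟩
  have hcomb := hv.sub (hu.mul_left (p^2))
  have heq : (fun n => ((d n).2 : ℝ)/(p^4)^(n+1) - p^2 * (((d n).1 : ℝ)/(p^4)^(n+1)))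
      = fun n => pval p (d n) / (p^4)^(n+1) := by
    funext n
    unfold pval
    ring
  rw [heq] at hcomb
  exact hcomb.unique hs

lemma exists_pair {p : ℝ} (h : PFacts p) {w : ℝ} (hw : w ∈ Icc (mw p) (Mw p)) :
    ∃ d : ℕ → ℕ × ℕ, (∀ n, (d n).1 ≤ 1 ∧ (d n).2 ≤ 1) ∧
      HasSum (fun n => pval p (d n) / (p^4)^(n+1)) w := by
  rcases eq_or_lt_of_le hw.1 with he | h1
  · refine ⟨fun _ => (1,0), fun n => by norm_num, ?_⟩
    have hh := hasSum_of_remainders (p^4) h.hβ1 (fun _ => mw p) (fun _ => pval p (1,0))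
      |mw p| (fun n => ?_) (fun n => le_rfl)
    · simpa [← he] using hh
    · show mw p = p^4 * mw p - pval p (1,0)
      simp only [pval]
      push_cast
      nlinarith [h.hmw]
  rcases eq_or_lt_of_le hw.2 with he2 | h2
  · refine ⟨fun _ => (0,1), fun n => by norm_num, ?_⟩
    have hh := hasSum_of_remainders (p^4) h.hβ1 (fun _ => Mw p) (fun _ => pval p (0,1))
      |Mw p| (fun n => ?_) (fun n => le_rfl)
    · simpa [he2] using hh
    · show Mw p = p^4 * Mw p - pval p (0,1)
      simp only [pval]
      push_cast
      nlinarith [h.hMw]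
  · exact ⟨mdig p w (fun _ => false), fun n => mdig_le p w _ n,
      mdig_hasSum h ⟨h1, h2⟩ (fun _ => false)⟩

lemma family {p : ℝ} (h : PFacts p) {wx wy : ℝ} (hwx : wx ∈ Icc (mw p) (Mw p))
    (hwy : wy ∈ Icc (mw p) (Mw p)) (hint : wx ∈ Ow p ∨ wy ∈ Ow p) :
    ∃ F : (ℕ → Bool) → (ℕ → ℕ × ℕ) × (ℕ → ℕ × ℕ),
      Function.Injective F ∧ ∀ ω,
        (∀ n, ((F ω).1 n).1 ≤ 1 ∧ ((F ω).1 n).2 ≤ 1) ∧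
        (∀ n, ((F ω).2 n).1 ≤ 1 ∧ ((F ω).2 n).2 ≤ 1) ∧
        HasSum (fun n => pval p ((F ω).1 n) / (p^4)^(n+1)) wx ∧
        HasSum (fun n => pval p ((F ω).2 n) / (p^4)^(n+1)) wy := by
  rcases hint with hI | hI
  · obtain ⟨dy, hdy1, hdy2⟩ := exists_pair h hwy
    refine ⟨fun ω => (mdig p wx ω, dy), ?_, fun ω =>
      ⟨fun n => mdig_le p wx ω n, hdy1, mdig_hasSum h hI ω, hdy2⟩⟩
    intro ω ω' hF
    exact mdig_injective h hI (congrArg Prod.fst hF)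
  · obtain ⟨dx, hdx1, hdx2⟩ := exists_pair h hwx
    refine ⟨fun ω => (dx, mdig p wy ω), ?_, fun ω =>
      ⟨hdx1, fun n => mdig_le p wy ω n, hdx2, mdig_hasSum h hI ω⟩⟩
    intro ω ω' hF
    exact mdig_injective h hI (congrArg Prod.snd hF)
end

open Set Filter Topology Complex

section
variable (p : ℝ) (q : ℂ)

lemma q_pow_four_mul (hq : q = Complex.I * p) (m : ℕ) :
    q ^ (4*m) = ((p:ℂ)^4)^m := by
  rw [hq, pow_mul]
  congr 1
  rw [mul_pow]
  simp [Complex.I_pow_four]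

lemma class_term (hp : p ≠ 0) (hq : q = Complex.I * p) (d : ℕ) (m j : ℕ) (hj : j = 1 ∨ j = 2 ∨ j = 3 ∨ j = 4) :
    (d : ℂ) / q ^ (4*m+j) =
      (if j = 1 then -Complex.I*(p:ℂ)^3 else if j = 2 then -(p:ℂ)^2
        else if j = 3 then Complex.I*(p:ℂ) else 1) * ((d : ℝ) / ((p:ℝ)^4)^(m+1) : ℝ) := by
  have hP : (p:ℂ) ≠ 0 := Complex.ofReal_ne_zero.mpr hp
  have hPm : ((p:ℂ)^4)^m ≠ 0 := pow_ne_zero m (pow_ne_zero 4 hP)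
  have hqm : q ^ (4*m) = ((p:ℂ)^4)^m := q_pow_four_mul p q hq m
  push_cast
  rcases hj with rfl | rfl | rfl | rfl
  · rw [show 4*m+1 = (4*m)+1 from rfl, pow_succ, hqm, hq]
    rw [if_pos rfl]
    field_simp
    ring_nf
    rw [Complex.I_sq]
    ring
  · rw [show 4*m+2 = (4*m)+2 from rfl, pow_add, hqm, hq]
    norm_num
    field_simp
    ring_nf
    rw [Complex.I_sq]
    ring
  · rw [show 4*m+3 = (4*m)+3 from rfl, pow_add, hqm, hq]
    norm_num
    field_simp
    ring_nf
    simp [Complex.I_pow_four]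
  · rw [show 4*m+4 = 4*(m+1) from by ring, q_pow_four_mul p q hq]
    norm_num

end

def interleave (a b e f : ℕ → ℕ) : ℕ → ℕ := fun k =>
  if k = 0 then 0
  else if k % 4 = 1 then a (k/4)
  else if k % 4 = 2 then b (k/4)
  else if k % 4 = 3 then e (k/4)
  else f (k/4 - 1)

lemma interleave_le (a b e f : ℕ → ℕ) (ha : ∀ n, a n ≤ 1) (hb : ∀ n, b n ≤ 1)
    (he : ∀ n, e n ≤ 1) (hf : ∀ n, f n ≤ 1) (k : ℕ) : interleave a b e f k ≤ 1 := by
  unfold interleave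
  split_ifs <;> first | simp | apply ha | apply hb | apply he | apply hf

lemma interleave_1 (a b e f : ℕ → ℕ) (m : ℕ) : interleave a b e f (4*m+1) = a m := by
  unfold interleave
  rw [if_neg (by omega), if_pos (by omega), Nat.mul_add_div (by norm_num)]
  norm_num
lemma interleave_2 (a b e f : ℕ → ℕ) (m : ℕ) : interleave a b e f (4*m+2) = b m := by
  unfold interleave
  rw [if_neg (by omega), if_neg (by omega), if_pos (by omega),
    Nat.mul_add_div (by norm_num)]
  norm_num
lemma interleave_3 (a b e f : ℕ → ℕ) (m : ℕ) : interleave a b e f (4*m+3) = e m := by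
  unfold interleave
  rw [if_neg (by omega), if_neg (by omega), if_neg (by omega), if_pos (by omega),
    Nat.mul_add_div (by norm_num)]
  norm_num
lemma interleave_4 (a b e f : ℕ → ℕ) (m : ℕ) : interleave a b e f (4*m+4) = f m := by
  unfold interleave
  rw [if_neg (by omega), if_neg (by omega), if_neg (by omega), if_neg (by omega)]
  congr 1
  omega

lemma assemble (p : ℝ) (hp : p ≠ 0) (q : ℂ) (hq : q = Complex.I * p)
    (a b e f : ℕ → ℕ) (va vb ve vf : ℝ)
    (ha : HasSum (fun m => (a m:ℝ)/((p^4):ℝ)^(m+1)) va)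
    (hbs : HasSum (fun m => (b m:ℝ)/((p^4):ℝ)^(m+1)) vb)
    (hes : HasSum (fun m => (e m:ℝ)/((p^4):ℝ)^(m+1)) ve)
    (hfs : HasSum (fun m => (f m:ℝ)/((p^4):ℝ)^(m+1)) vf) :
    HasSum (fun k : ℕ => (interleave a b e f (k+1) : ℂ) / q^(k+1))
      (((vf - p^2*vb : ℝ) : ℂ) + ((p*ve - p^3*va : ℝ) : ℂ) * Complex.I) := by
  set g : ℕ → ℂ := fun k => (interleave a b e f (k+1) : ℂ)/q^(k+1) with hg
  have h0 : HasSum (fun m => g (4*m)) ((-Complex.I*(p:ℂ)^3) * va) := by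
    have h := (Complex.hasSum_ofReal.mpr ha).mul_left (-Complex.I*(p:ℂ)^3)
    convert h using 1
    · rfl
    funext m
    show (interleave a b e f (4*m+1) : ℂ)/q^(4*m+1) = _
    rw [interleave_1]
    have := class_term p q hp hq (a m) m 1 (Or.inl rfl)
    simpa using this
  have h1 : HasSum (fun m => g (4*m+1)) ((-(p:ℂ)^2) * vb) := by
    have h := (Complex.hasSum_ofReal.mpr hbs).mul_left (-(p:ℂ)^2)
    convert h using 1
    · rfl
    funext m
    show (interleave a b e f (4*m+2) : ℂ)/q^(4*m+2) = _
    rw [interleave_2]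
    have := class_term p q hp hq (b m) m 2 (by norm_num)
    simpa using this
  have h2 : HasSum (fun m => g (4*m+2)) ((Complex.I*(p:ℂ)) * ve) := by
    have h := (Complex.hasSum_ofReal.mpr hes).mul_left (Complex.I*(p:ℂ))
    convert h using 1
    · rfl
    funext m
    show (interleave a b e f (4*m+3) : ℂ)/q^(4*m+3) = _
    rw [interleave_3]
    have := class_term p q hp hq (e m) m 3 (by norm_num)
    simpa using this
  have h3 : HasSum (fun m => g (4*m+3)) ((vf : ℂ)) := by
    have h := Complex.hasSum_ofReal.mpr hfs
    convert h using 1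
    funext m
    show (interleave a b e f (4*m+4) : ℂ)/q^(4*m+4) = _
    rw [interleave_4]
    have := class_term p q hp hq (f m) m 4 (by norm_num)
    simpa using this
  have e0 : (fun k : ℕ => g (2*(2*k))) = (fun k => g (4*k)) :=
    funext fun k => by rw [show 2*(2*k)=4*k by ring]
  have e2 : (fun k : ℕ => g (2*(2*k+1))) = (fun k => g (4*k+2)) :=
    funext fun k => by rw [show 2*(2*k+1)=4*k+2 by ring]
  have e1 : (fun k : ℕ => g (2*(2*k)+1)) = (fun k => g (4*k+1)) :=
    funext fun k => by rw [show 2*(2*k)+1=4*k+1 by ring]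
  have e3 : (fun k : ℕ => g (2*(2*k+1)+1)) = (fun k => g (4*k+3)) :=
    funext fun k => by rw [show 2*(2*k+1)+1=4*k+3 by ring]
  have heven : HasSum (fun k => g (2*k))
      ((-Complex.I*(p:ℂ)^3) * va + (Complex.I*(p:ℂ)) * ve) :=
    HasSum.even_add_odd (e0 ▸ h0) (e2 ▸ h2)
  have hodd : HasSum (fun k => g (2*k+1)) ((-(p:ℂ)^2) * vb + (vf:ℂ)) :=
    HasSum.even_add_odd (e1 ▸ h1) (e3 ▸ h3)
  have htot := HasSum.even_add_odd heven hodd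
  convert htot using 1
  push_cast
  ring
set_option maxHeartbeats 1000000 in
theorem continuum_expansions_imaginary_base (p : ℝ) (hp1 : 1 < p)
    (hp2 : p < Real.sqrt ((1 + Real.sqrt 5) / 2)) (q : ℂ) (hq : q = Complex.I * p)
    (z : ℂ)
    (hre : z.re ∈ Set.Icc (-p ^ 2 / (p ^ 4 - 1)) (1 / (p ^ 4 - 1)))
    (him : z.im ∈ Set.Icc (-p ^ 3 / (p ^ 4 - 1)) (p / (p ^ 4 - 1)))
    (hvertex : ¬ ((z.re = -p ^ 2 / (p ^ 4 - 1) ∨ z.re = 1 / (p ^ 4 - 1)) ∧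
        (z.im = -p ^ 3 / (p ^ 4 - 1) ∨ z.im = p / (p ^ 4 - 1)))) :
    Cardinal.mk {c : ℕ → ℕ | IsExpansionC q z c} = Cardinal.continuum := by
  classical
  have hp0 : 0 < p := by linarith
  have hpφ : p^2 < (1 + Real.sqrt 5)/2 := (Real.lt_sqrt hp0.le).mp hp2
  have h := pfacts hp1 hpφ
  have hne : p^4 - 1 ≠ 0 := by nlinarith [h.hβ1]
  have hre' : z.re ∈ Set.Icc (mw p) (Mw p) := by
    simpa [mw, Mw] using hre
  have e1 : (-p^3/(p^4-1)) = mw p * p := by unfold mw; rw [div_mul_eq_mul_div]; ring_nf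
  have e2 : (p/(p^4-1)) = Mw p * p := by unfold Mw; rw [div_mul_eq_mul_div]; ring_nf
  have him' : z.im / p ∈ Set.Icc (mw p) (Mw p) := by
    obtain ⟨h1, h2⟩ := him
    rw [e1] at h1
    rw [e2] at h2
    constructor
    · rw [le_div_iff₀ hp0]; linarith
    · rw [div_le_iff₀ hp0]; linarith
  have hint : z.re ∈ Ow p ∨ z.im / p ∈ Ow p := by
    by_cases hx : z.re = -p ^ 2 / (p ^ 4 - 1) ∨ z.re = 1 / (p ^ 4 - 1)
    · right
      have hy : ¬ (z.im = -p^3/(p^4-1) ∨ z.im = p/(p^4-1)) := fun hy => hvertex ⟨hx, hy⟩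
      push_neg at hy
      constructor
      · apply lt_of_le_of_ne him'.1
        intro hcon
        apply hy.1
        rw [e1, hcon]
        field_simp
      · apply lt_of_le_of_ne him'.2
        intro hcon
        apply hy.2
        rw [e2, ← hcon]
        field_simp
    · left
      push_neg at hx
      have hx1 : z.re ≠ mw p := by simpa [mw] using hx.1
      have hx2 : z.re ≠ Mw p := by simpa [Mw] using hx.2
      exact ⟨lt_of_le_of_ne hre'.1 (Ne.symm hx1), lt_of_le_of_ne hre'.2 hx2⟩
  obtain ⟨F, hFinj, hF⟩ := family h hre' him' hint
  set cfun : (ℕ → Bool) → (ℕ → ℕ) := fun ω => interleave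
    (fun m => ((F ω).2 m).1) (fun m => ((F ω).1 m).1)
    (fun m => ((F ω).2 m).2) (fun m => ((F ω).1 m).2) with hcfun
  have hmem : ∀ ω, cfun ω ∈ {c : ℕ → ℕ | IsExpansionC q z c} := by
    intro ω
    obtain ⟨hb1, hb2, hsx, hsy⟩ := hF ω
    obtain ⟨vb, vf, hvb, hvf, hx⟩ := pair_sum_split h _ hb1 hsx
    obtain ⟨va, ve, hva, hve, hy⟩ := pair_sum_split h _ hb2 hsy
    constructor
    · exact fun k => interleave_le _ _ _ _ (fun n => (hb2 n).1) (fun n => (hb1 n).1)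
        (fun n => (hb2 n).2) (fun n => (hb1 n).2) k
    · have hassemble := assemble p (ne_of_gt hp0) q hq
        (fun m => ((F ω).2 m).1) (fun m => ((F ω).1 m).1)
        (fun m => ((F ω).2 m).2) (fun m => ((F ω).1 m).2) va vb ve vf hva hvb hve hvf
      set X : ℝ := vf - p^2*vb with hX
      set Y : ℝ := p*ve - p^3*va with hY
      have hz : ((X:ℂ)) + ((Y:ℂ)) * Complex.I = z := by
        apply Complex.ext
        · simpa using hx
        · simp only [Complex.add_im, Complex.ofReal_im, Complex.mul_im, Complex.I_im,
            Complex.ofReal_re, Complex.I_re]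
          have hyy : ve - p^2 * va = z.im / p := hy
          rw [eq_div_iff (ne_of_gt hp0)] at hyy
          simp only [hY]
          nlinarith [hyy]
      rw [hz] at hassemble
      exact hassemble
  have hinj : Function.Injective cfun := by
    intro ω ω' hc
    apply hFinj
    have hcc : ∀ k, cfun ω k = cfun ω' k := fun k => congrFun hc k
    refine Prod.ext (funext fun m => Prod.ext ?_ ?_) (funext fun m => Prod.ext ?_ ?_)
    · have h2 := hcc (4*m+2)
      simp only [hcfun, interleave_2] at h2
      exact h2
    · have h2 := hcc (4*m+4)
      simp only [hcfun, interleave_4] at h2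
      exact h2
    · have h2 := hcc (4*m+1)
      simp only [hcfun, interleave_1] at h2
      exact h2
    · have h2 := hcc (4*m+3)
      simp only [hcfun, interleave_3] at h2
      exact h2
  have hBcard : Cardinal.mk (ℕ → Bool) = Cardinal.continuum := by
    rw [Cardinal.mk_arrow, Cardinal.mk_bool, Cardinal.mk_nat]
    simp [Cardinal.two_power_aleph0]
  apply le_antisymm
  · -- upper bound
    have hup : Cardinal.mk {c : ℕ → ℕ | IsExpansionC q z c} ≤ Cardinal.mk (ℕ → Bool) := by
      apply Cardinal.mk_le_of_injective
        (f := fun c => fun k => decide ((c : {c : ℕ → ℕ | IsExpansionC q z c}).1 k = 1))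
      intro c c' hcc
      apply Subtype.ext
      funext k
      have hk := congrFun hcc k
      simp only [decide_eq_decide] at hk
      have b1 := c.2.1 k
      have b2 := c'.2.1 k
      omega
    rwa [hBcard] at hup
  · have hlow : Cardinal.mk (ℕ → Bool) ≤ Cardinal.mk {c : ℕ → ℕ | IsExpansionC q z c} :=
      Cardinal.mk_le_of_injective (f := fun ω => (⟨cfun ω, hmem ω⟩ : {c : ℕ → ℕ | IsExpansionC q z c}))
        (fun ω ω' hww => hinj (by simpa using congrArg Subtype.val hww))
    rwa [hBcard] at hlow
end
end

section
/- Let ω ∈ ℂ with |ω| = 1 and ω⁴ ≠ 1, and let R > 0. Then there exists ε > 0 such that for all real p with 1 < p < 1 + ε, every complex z with |z| ≤ R has continuum many expansions in base q = pω with digits {0,1}. -/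
noncomputable def Complex.abs : AbsoluteValue ℂ ℝ := NormedField.toAbsoluteValue ℂ

theorem Complex.norm_eq_abs (z : ℂ) : ‖z‖ = Complex.abs z := rfl

theorem Complex.abs_mul_exp_arg_mul_I (x : ℂ) :
    (Complex.abs x : ℂ) * Complex.exp (x.arg * Complex.I) = x :=
  Complex.norm_mul_exp_arg_mul_I x

theorem Complex.abs_ofReal (r : ℝ) : Complex.abs (r : ℂ) = |r| := by
  rw [← Complex.norm_eq_abs]; simp

theorem Complex.abs_natCast (n : ℕ) : Complex.abs (n : ℂ) = n := by
  rw [← Complex.norm_eq_abs]; simp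

theorem Complex.sq_abs (z : ℂ) : Complex.abs z ^ 2 = Complex.normSq z := Complex.sq_norm z

namespace ContExpAux
open Real Filter Topology

lemma cos_step (φ : ℝ) (hφ0 : 0 < φ) (hφ : φ ≤ 2*π/3) (α : ℝ) :
    ∃ j : ℕ, (j:ℝ) ≤ 2*π/φ + 1 ∧ 1/2 ≤ Real.cos (α + j * φ) := by
  have hπ := Real.pi_pos
  set M : ℤ := ⌈(α + π/3) / (2*π)⌉ with hM
  have h2π : (0:ℝ) < 2*π := by linarith
  have hMge : α + π/3 ≤ 2*π*M := by
    have h := Int.le_ceil ((α + π/3) / (2*π))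
    rw [← hM, div_le_iff₀ h2π] at h; linarith
  have hMlt : (M:ℝ) < (α + π/3)/(2*π) + 1 := Int.ceil_lt_add_one _
  have hMlt' : 2*π*M < α + π/3 + 2*π := by
    rw [div_add' _ _ _ h2π.ne', lt_div_iff₀ h2π] at hMlt; linarith
  set a : ℝ := 2*π*M - π/3 with ha
  have haα : α ≤ a := by simp only [ha]; linarith
  set j : ℕ := ⌈(a - α)/φ⌉₊ with hj
  have hnn : 0 ≤ (a - α)/φ := div_nonneg (by linarith) hφ0.le
  have hjge : a - α ≤ j * φ := by
    have h := Nat.le_ceil ((a - α)/φ)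
    rw [← hj, div_le_iff₀ hφ0] at h; linarith
  have hjlt : (j:ℝ) < (a - α)/φ + 1 := Nat.ceil_lt_add_one hnn
  have hjφ : (j:ℝ) * φ < a - α + φ := by
    rw [div_add' _ _ _ hφ0.ne', lt_div_iff₀ hφ0] at hjlt; linarith
  refine ⟨j, ?_, ?_⟩
  · have h1 : a - α < 2*π := by simp only [ha]; linarith
    have h2 : (a - α)/φ ≤ 2*π/φ := by gcongr
    linarith
  · have key : |α + j*φ - 2*π*M| ≤ π/3 := by
      rw [abs_le]
      constructor
      · simp only [ha] at hjge; linarith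
      · simp only [ha] at hjφ; linarith
    have hc : Real.cos (α + j*φ) = Real.cos (α + j*φ - 2*π*M) := by
      have h := Real.cos_add_int_mul_two_pi (α + j*φ - 2*π*M) M
      rw [show α + (j:ℝ)*φ - 2*π*M + M*(2*π) = α + j*φ by ring] at h
      exact h
    rw [hc, ← Real.cos_abs]
    calc (1:ℝ)/2 = Real.cos (π/3) := by rw [Real.cos_pi_div_three]
    _ ≤ Real.cos |α + j*φ - 2*π*M| :=
        Real.cos_le_cos_of_nonneg_of_le_pi (abs_nonneg _) (by linarith) key

lemma angle_lemma (u : ℂ) (hu : Complex.abs u = 1) (hu2 : u^2 ≠ 1) :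
    ∃ N : ℕ, ∀ v : ℂ, ∃ k ≤ N, Complex.abs v / 2 ≤ (u ^ k * v).re := by
  have hπ := Real.pi_pos
  have hu1 : u ≠ 1 := by rintro rfl; exact hu2 (one_pow 2)
  have hun : u ≠ -1 := by rintro rfl; exact hu2 (by ring)
  set θ := u.arg with hθ
  have hexpu : Complex.exp (θ * Complex.I) = u := by
    have h := Complex.abs_mul_exp_arg_mul_I u
    rwa [hu, Complex.ofReal_one, one_mul] at h
  have hθ0 : θ ≠ 0 := by
    intro h; apply hu1; rw [← hexpu, h]; simp
  have hθpi : θ < π := by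
    rcases lt_or_eq_of_le (Complex.arg_le_pi u) with h | h
    · exact h
    · exfalso; apply hun; rw [← hexpu, hθ.trans h]; exact Complex.exp_pi_mul_I
  have hθgt : -π < θ := Complex.neg_pi_lt_arg u
  -- produce m, φ
  obtain ⟨m, φ, hm2, hexp, hφne, hφle⟩ :
      ∃ (m : ℕ) (φ : ℝ), m ≤ 2 ∧ u ^ m = Complex.exp (φ * Complex.I) ∧ φ ≠ 0 ∧ |φ| ≤ 2*π/3 := by
    rcases le_or_gt |θ| (2*π/3) with h | h
    · exact ⟨1, θ, one_le_two, by rw [pow_one, hexpu], hθ0, h⟩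
    · rcases lt_or_ge 0 θ with hpos | hneg
      · refine ⟨2, 2*θ - 2*π, le_rfl, ?_, by rw [abs_of_pos hpos] at h; nlinarith, ?_⟩
        · rw [← hexpu, ← Complex.exp_nat_mul]
          rw [show ((2*θ - 2*π : ℝ) : ℂ) * Complex.I
              = (2:ℕ) * ((θ:ℝ) * Complex.I) - 2*π*Complex.I by push_cast; ring]
          rw [Complex.exp_sub, Complex.exp_two_pi_mul_I, div_one]
        · rw [abs_of_pos hpos] at h
          rw [abs_of_neg (by nlinarith)]
          nlinarith
      · have hneg' : θ < 0 := lt_of_le_of_ne hneg (by simpa using hθ0) |>.trans_le le_rfl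
        refine ⟨2, 2*θ + 2*π, le_rfl, ?_, by rw [abs_of_neg hneg'] at h; nlinarith, ?_⟩
        · rw [← hexpu, ← Complex.exp_nat_mul]
          rw [show ((2*θ + 2*π : ℝ) : ℂ) * Complex.I
              = (2:ℕ) * ((θ:ℝ) * Complex.I) + 2*π*Complex.I by push_cast; ring]
          rw [Complex.exp_add, Complex.exp_two_pi_mul_I, mul_one]
        · rw [abs_of_neg hneg'] at h
          rw [abs_of_pos (by nlinarith)]
          nlinarith
  have hφpos : 0 < |φ| := abs_pos.mpr hφne
  refine ⟨2 * ⌈2*π/|φ| + 1⌉₊, fun v => ?_⟩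
  rcases eq_or_ne v 0 with rfl | hv0
  · exact ⟨0, Nat.zero_le _, by simp⟩
  · set α := v.arg with hα
    have hv : (Complex.abs v : ℂ) * Complex.exp (α * Complex.I) = v :=
      Complex.abs_mul_exp_arg_mul_I v
    -- get j from cos_step
    obtain ⟨j, hjle, hjcos⟩ := cos_step |φ| hφpos hφle (if 0 ≤ φ then α else -α)
    have hcosβ : 1/2 ≤ Real.cos (α + j * φ) := by
      rcases le_or_gt 0 φ with hsg | hsg
      · rwa [if_pos hsg, abs_of_nonneg hsg] at hjcos
      · rw [if_neg (not_le.mpr hsg), abs_of_neg hsg] at hjcos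
        rw [show -α + (j:ℝ) * -φ = -(α + j * φ) by ring, Real.cos_neg] at hjcos
        exact hjcos
    refine ⟨m * j, ?_, ?_⟩
    · have hj : j ≤ ⌈2*π/|φ| + 1⌉₊ := by
        rw [← Nat.ceil_natCast (R := ℝ) j]
        exact Nat.ceil_le_ceil hjle
      calc m * j ≤ 2 * j := Nat.mul_le_mul_right _ hm2
      _ ≤ 2 * ⌈2*π/|φ| + 1⌉₊ := Nat.mul_le_mul_left _ hj
    · have hpow : u ^ (m * j) = Complex.exp (((j * φ : ℝ)) * Complex.I) := by
        rw [pow_mul, hexp, ← Complex.exp_nat_mul]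
        norm_cast
        push_cast
        ring_nf
      have : u ^ (m * j) * v = (Complex.abs v : ℂ) * Complex.exp (((α + j * φ : ℝ)) * Complex.I) := by
        conv_lhs => rw [hpow, ← hv]
        rw [mul_left_comm, ← Complex.exp_add]
        congr 1
        push_cast
        ring
      rw [this, Complex.re_ofReal_mul, Complex.exp_ofReal_mul_I_re]
      have := Complex.abs.nonneg v
      nlinarith


lemma pow_one_add_le (ε : ℝ) (h0 : 0 ≤ ε) (h1 : ε ≤ 1) (n : ℕ) :
    (1+ε)^n ≤ 1 + ((2:ℝ)^n - 1) * ε := by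
  induction n with
  | zero => simp
  | succ n ih =>
    have h2n : (1:ℝ) ≤ 2^n := one_le_pow₀ one_le_two
    have hnn : (0:ℝ) ≤ (1+ε)^n := by positivity
    calc (1+ε)^(n+1) = (1+ε)^n * (1+ε) := pow_succ _ _
    _ ≤ (1 + ((2:ℝ)^n - 1)*ε) * (1+ε) := by nlinarith
    _ ≤ 1 + ((2:ℝ)^(n+1) - 1)*ε := by
      rw [pow_succ]
      have key : ((2:ℝ)^n - 1) * ε * ε ≤ ((2:ℝ)^n - 1) * ε * 1 :=
        mul_le_mul_of_nonneg_left h1 (mul_nonneg (by linarith) h0)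
      nlinarith [key]

noncomputable section Proc

/-- transition of the expansion automaton -/
def nextSt (Q : ℂ) (ksel : ℂ → ℕ) (t : ℕ → Bool) (s : ℂ × ℕ) : ℂ × ℕ :=
  if Complex.abs s.1 < 2 then (Q * s.1 - (cond (t s.2) 1 0), s.2 + 1)
  else (Q ^ (ksel s.1 + 1) * s.1 - 1, s.2)

def st (Q : ℂ) (ksel : ℂ → ℕ) (z : ℂ) (t : ℕ → Bool) : ℕ → ℂ × ℕ
  | 0 => (z, 0)
  | n + 1 => nextSt Q ksel t (st Q ksel z t n)

def blockLen (ksel : ℂ → ℕ) (s : ℂ × ℕ) : ℕ :=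
  if Complex.abs s.1 < 2 then 1 else ksel s.1 + 1

def blockDig (t : ℕ → Bool) (s : ℂ × ℕ) : ℕ :=
  if Complex.abs s.1 < 2 then (cond (t s.2) 1 0) else 1

def pos (Q : ℂ) (ksel : ℂ → ℕ) (z : ℂ) (t : ℕ → Bool) : ℕ → ℕ
  | 0 => 0
  | n + 1 => pos Q ksel z t n + blockLen ksel (st Q ksel z t n)

open Classical in
def dig (Q : ℂ) (ksel : ℂ → ℕ) (z : ℂ) (t : ℕ → Bool) (j : ℕ) : ℕ :=
  if ∃ n, j = 2 * pos Q ksel z t (n + 1) ∧ blockDig t (st Q ksel z t n) = 1 then 1 else 0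

variable (Q u : ℂ) (A C : ℝ) (N : ℕ) (ksel : ℂ → ℕ) (z : ℂ) (t : ℕ → Bool)

lemma dig_le_one (j : ℕ) : dig Q ksel z t j ≤ 1 := by
  unfold dig; split <;> omega

lemma blockDig_le_one (s : ℂ × ℕ) : blockDig t s ≤ 1 := by
  unfold blockDig; split
  · cases t s.2 <;> simp
  · exact le_rfl

lemma blockLen_pos (s : ℂ × ℕ) : 1 ≤ blockLen ksel s := by
  unfold blockLen; split <;> omega

lemma st_succ_fst (n : ℕ) :
    (st Q ksel z t (n+1)).1
      = Q ^ (blockLen ksel (st Q ksel z t n)) * (st Q ksel z t n).1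
        - (blockDig t (st Q ksel z t n) : ℂ) := by
  show (nextSt Q ksel t (st Q ksel z t n)).1 = _
  unfold nextSt blockLen blockDig
  split
  · cases t (st Q ksel z t n).2 <;> simp
  · simp

lemma st_succ_snd (n : ℕ) :
    (st Q ksel z t (n+1)).2
      = if Complex.abs (st Q ksel z t n).1 < 2
        then (st Q ksel z t n).2 + 1 else (st Q ksel z t n).2 := by
  show (nextSt Q ksel t (st Q ksel z t n)).2 = _
  unfold nextSt; split <;> simp

lemma snd_mono : Monotone fun n => (st Q ksel z t n).2 := by
  apply monotone_nat_of_le_succ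
  intro n
  rw [st_succ_snd]; split <;> omega

lemma pos_strictMono : StrictMono (pos Q ksel z t) := by
  apply strictMono_nat_of_lt_succ
  intro n
  have := blockLen_pos ksel (st Q ksel z t n)
  show pos Q ksel z t n < pos Q ksel z t n + _
  omega

lemma dig_between (n j : ℕ) (h1 : 2 * pos Q ksel z t n < j)
    (h2 : j < 2 * pos Q ksel z t (n+1)) : dig Q ksel z t j = 0 := by
  unfold dig
  rw [if_neg]
  rintro ⟨m, hm, -⟩
  have hmono := (pos_strictMono Q ksel z t).monotone
  rcases le_or_gt (m+1) n with h | h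
  · have := hmono h
    omega
  · have := hmono (show n + 1 ≤ m + 1 by omega)
    omega

lemma dig_at (n : ℕ) :
    dig Q ksel z t (2 * pos Q ksel z t (n+1)) = blockDig t (st Q ksel z t n) := by
  unfold dig
  by_cases hd : blockDig t (st Q ksel z t n) = 1
  · rw [if_pos ⟨n, rfl, hd⟩, hd]
  · rw [if_neg]
    · have := blockDig_le_one t (st Q ksel z t n)
      omega
    · rintro ⟨m, hm, hm1⟩
      have : m + 1 = n + 1 := (pos_strictMono Q ksel z t).injective (by omega)
      have : m = n := by omega
      subst this
      exact hd hm1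

lemma sum_eq (q : ℂ) (hq : Q = q^2) (hq0 : q ≠ 0) (n : ℕ) :
    ∑ k ∈ Finset.range (2 * pos Q ksel z t n), ((dig Q ksel z t (k+1) : ℂ)) / q^(k+1)
      = z - (st Q ksel z t n).1 / Q ^ (pos Q ksel z t n) := by
  have hQ0 : Q ≠ 0 := by rw [hq]; exact pow_ne_zero _ hq0
  induction n with
  | zero => simp [pos, st]
  | succ n ih =>
    have hmono := (pos_strictMono Q ksel z t).monotone
    have hlt : pos Q ksel z t n < pos Q ksel z t (n+1) := pos_strictMono Q ksel z t (by omega)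
    have hle : 2 * pos Q ksel z t n ≤ 2 * pos Q ksel z t (n+1) := by omega
    rw [Finset.range_eq_Ico, ← Finset.sum_Ico_consecutive _ (Nat.zero_le _) hle,
        ← Finset.range_eq_Ico, ih]
    have hblock : ∑ k ∈ Finset.Ico (2 * pos Q ksel z t n) (2 * pos Q ksel z t (n+1)),
        ((dig Q ksel z t (k+1) : ℂ)) / q^(k+1)
        = (blockDig t (st Q ksel z t n) : ℂ) / q ^ (2 * pos Q ksel z t (n+1)) := by
      rw [Finset.sum_eq_single_of_mem (2 * pos Q ksel z t (n+1) - 1)]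
      · rw [show 2 * pos Q ksel z t (n+1) - 1 + 1 = 2 * pos Q ksel z t (n+1) by omega,
            dig_at]
      · rw [Finset.mem_Ico]; omega
      · intro k hk hne
        rw [Finset.mem_Ico] at hk
        rw [dig_between Q ksel z t n (k+1) (by omega) (by omega)]
        simp
    rw [hblock]
    have hlen : pos Q ksel z t (n+1)
        = pos Q ksel z t n + blockLen ksel (st Q ksel z t n) := rfl
    have hst := st_succ_fst Q ksel z t n
    rw [hst, hlen]
    rw [show q ^ (2 * (pos Q ksel z t n + blockLen ksel (st Q ksel z t n)))
        = Q ^ (pos Q ksel z t n + blockLen ksel (st Q ksel z t n)) by rw [hq, ← pow_mul]]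
    rw [pow_add]
    field_simp
    ring



lemma le_of_sq_le_sq' (x y : ℝ) (hx : 0 ≤ x) (hy : 0 ≤ y) (h : x^2 ≤ y^2) : x ≤ y := by
  nlinarith

/-- key descent estimate -/
lemma descent_est (hQ : Q = (A:ℂ) * u) (hu : Complex.abs u = 1)
    (hA1 : 1 < A) (hAN : A ^ (2*(N+1)) ≤ 1 + 1/(4*C)) (hC : 4 ≤ C)
    (hkN : ∀ r : ℂ, ksel r ≤ N)
    (hkre : ∀ r : ℂ, Complex.abs r / 2 ≤ (u ^ (ksel r + 1) * r).re)
    (r : ℂ) (h2 : 2 ≤ Complex.abs r) (hrC : Complex.abs r ≤ C) :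
    Complex.abs (Q ^ (ksel r + 1) * r - 1) ^ 2 ≤ Complex.abs r ^ 2 - 1/2 := by
  set k := ksel r with hk
  have hA0 : (0:ℝ) < A := by linarith
  set w : ℂ := Q ^ (k+1) * r with hw
  -- |w - 1|^2 = |w|^2 + 1 - 2 w.re
  have hsq : Complex.abs (w - 1) ^ 2 = Complex.abs w ^ 2 + 1 - 2 * w.re := by
    rw [Complex.sq_abs, Complex.sq_abs, Complex.normSq_sub]
    simp [Complex.normSq_one]
  -- |w| = A^(k+1) * |r|
  have habsw : Complex.abs w = A^(k+1) * Complex.abs r := by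
    rw [hw, map_mul, map_pow, hQ, map_mul, hu, Complex.abs_ofReal, abs_of_pos hA0, mul_one]
  -- w.re ≥ |r|/2
  have hwre : Complex.abs r / 2 ≤ w.re := by
    have h1 : w = ((A^(k+1) : ℝ) : ℂ) * (u ^ (k+1) * r) := by
      rw [hw, hQ]; push_cast; ring
    rw [h1, Complex.re_ofReal_mul]
    have h2' := hkre r
    have h3 : (1:ℝ) ≤ A^(k+1) := one_le_pow₀ hA1.le
    nlinarith [Complex.abs.nonneg r]
  have hpowle : (A^(k+1))^2 ≤ 1 + 1/(4*C) := by
    rw [← pow_mul]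
    calc A ^ ((k+1)*2) ≤ A ^ (2*(N+1)) :=
      pow_le_pow_right₀ hA1.le (by have := hkN r; omega)
    _ ≤ 1 + 1/(4*C) := hAN
  have hC0 : (0:ℝ) < C := by linarith
  have habs2 : Complex.abs r ^ 2 / (4*C) ≤ Complex.abs r / 4 := by
    rw [div_le_div_iff₀ (by linarith) (by norm_num)]
    nlinarith [Complex.abs.nonneg r]
  rw [hsq, habsw]
  have e1 : (A^(k+1) * Complex.abs r)^2 = (A^(k+1))^2 * Complex.abs r ^2 := by ring
  rw [e1]
  have e2 : (A^(k+1))^2 * Complex.abs r ^2 ≤ (1 + 1/(4*C)) * Complex.abs r ^ 2 := by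
    nlinarith [Complex.abs.nonneg r, sq_nonneg (Complex.abs r)]
  have e3 : (1 + 1/(4*C)) * Complex.abs r ^2
      = Complex.abs r^2 + Complex.abs r^2/(4*C) := by ring
  have e4 : (A^(k+1))^2 * Complex.abs r ^2 ≤ Complex.abs r^2 + Complex.abs r/4 := by
    linarith
  linarith

/-- branch step stays within bound 4 -/
lemma branch_est (hQ : Q = (A:ℂ) * u) (hu : Complex.abs u = 1)
    (hA0 : 0 < A) (hA2 : A ≤ 3/2) (r : ℂ) (hr : Complex.abs r < 2) (d : ℕ) (hd : d ≤ 1) :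
    Complex.abs (Q * r - (d:ℂ)) ≤ 4 := by
  have h1 : Complex.abs (Q * r - (d:ℂ)) ≤ Complex.abs (Q * r) + Complex.abs (d:ℂ) := by
    have := norm_sub_le (Q * r) (d:ℂ)
    simpa [Complex.norm_eq_abs, Complex.abs_natCast] using this
  have h2 : Complex.abs (Q * r) = A * Complex.abs r := by
    rw [map_mul, hQ, map_mul, hu, Complex.abs_ofReal, abs_of_pos hA0, mul_one]
  have h3 : Complex.abs (d:ℂ) ≤ 1 := by
    rw [Complex.abs_natCast]
    exact_mod_cast hd
  have h4 : A * Complex.abs r ≤ 3 := by nlinarith [Complex.abs.nonneg r]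
  linarith

lemma invariant (hQ : Q = (A:ℂ) * u) (hu : Complex.abs u = 1)
    (hA1 : 1 < A) (hA2 : A ≤ 3/2) (hAN : A ^ (2*(N+1)) ≤ 1 + 1/(4*C)) (hC : 4 ≤ C)
    (hkN : ∀ r : ℂ, ksel r ≤ N)
    (hkre : ∀ r : ℂ, Complex.abs r / 2 ≤ (u ^ (ksel r + 1) * r).re)
    (hz : Complex.abs z ≤ C) :
    ∀ n, Complex.abs (st Q ksel z t n).1 ≤ C := by
  intro n
  induction n with
  | zero => exact hz
  | succ n ih =>
    show Complex.abs (nextSt Q ksel t (st Q ksel z t n)).1 ≤ C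
    unfold nextSt
    split
    · next hbr =>
      show Complex.abs (Q * (st Q ksel z t n).1 - cond (t (st Q ksel z t n).2) 1 0) ≤ C
      have hex : ∃ d : ℕ, d ≤ 1 ∧ (cond (t (st Q ksel z t n).2) 1 0 : ℂ) = (d:ℂ) := by
        cases t (st Q ksel z t n).2
        · exact ⟨0, by omega, by simp⟩
        · exact ⟨1, le_rfl, by simp⟩
      obtain ⟨d, hd1, hd2⟩ := hex
      rw [hd2]
      exact (branch_est Q u A hQ hu (by linarith) hA2 _ hbr d hd1).trans hC
    · next hbr =>
      show Complex.abs (Q ^ (ksel (st Q ksel z t n).1 + 1) * (st Q ksel z t n).1 - 1) ≤ C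
      push_neg at hbr
      have hd := descent_est Q u A C N ksel hQ hu hA1 hAN hC hkN hkre
        (st Q ksel z t n).1 hbr ih
      apply le_of_sq_le_sq' _ _ (Complex.abs.nonneg _) (by linarith)
      nlinarith [Complex.abs.nonneg (st Q ksel z t n).1]


section Analytic
variable (hQ : Q = (A:ℂ) * u) (hu : Complex.abs u = 1)
    (hA1 : 1 < A) (hA2 : A ≤ 3/2) (hAN : A ^ (2*(N+1)) ≤ 1 + 1/(4*C)) (hC : 4 ≤ C)
    (hkN : ∀ r : ℂ, ksel r ≤ N)
    (hkre : ∀ r : ℂ, Complex.abs r / 2 ≤ (u ^ (ksel r + 1) * r).re)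
    (hz : Complex.abs z ≤ C)

include hQ hu hA1 hA2 hAN hC hkN hkre hz

lemma reach : ∀ n, ∃ m, n ≤ m ∧ Complex.abs (st Q ksel z t m).1 < 2 := by
  intro n
  by_contra hcon
  push_neg at hcon
  have hstep : ∀ j : ℕ, Complex.abs (st Q ksel z t (n+j)).1 ^ 2 ≤ C^2 - j * (1/2) := by
    intro j
    induction j with
    | zero =>
      have h := invariant Q u A C N ksel z t hQ hu hA1 hA2 hAN hC hkN hkre hz n
      simp only [Nat.add_zero, Nat.cast_zero, zero_mul, sub_zero]
      nlinarith [Complex.abs.nonneg (st Q ksel z t n).1]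
    | succ j ih =>
      have hge : 2 ≤ Complex.abs (st Q ksel z t (n+j)).1 := hcon _ (by omega)
      have hC' := invariant Q u A C N ksel z t hQ hu hA1 hA2 hAN hC hkN hkre hz (n+j)
      have heq : (st Q ksel z t (n+j+1)).1
          = Q ^ (ksel (st Q ksel z t (n+j)).1 + 1) * (st Q ksel z t (n+j)).1 - 1 := by
        show (nextSt Q ksel t (st Q ksel z t (n+j))).1 = _
        unfold nextSt
        rw [if_neg (by push_neg; exact hge)]
      rw [show n + (j+1) = n + j + 1 by omega, heq]
      have := descent_est Q u A C N ksel hQ hu hA1 hAN hC hkN hkre _ hge hC'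
      push_cast
      linarith
  have h4 : 2 ≤ Complex.abs (st Q ksel z t (n + ⌈2*C^2⌉₊)).1 := hcon _ (by omega)
  have h5 := hstep ⌈2*C^2⌉₊
  have h6 : (2*C^2 : ℝ) ≤ (⌈2*C^2⌉₊ : ℝ) := Nat.le_ceil _
  nlinarith [Complex.abs.nonneg (st Q ksel z t (n + ⌈2*C^2⌉₊)).1]

lemma reach_first : ∀ n, ∃ m, n ≤ m ∧ Complex.abs (st Q ksel z t m).1 < 2
    ∧ (st Q ksel z t m).2 = (st Q ksel z t n).2 := by
  intro n
  classical
  have hex : ∃ m, n ≤ m ∧ Complex.abs (st Q ksel z t m).1 < 2 :=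
    reach Q u A C N ksel z t hQ hu hA1 hA2 hAN hC hkN hkre hz n
  set P : ℕ → Prop := fun m => n ≤ m ∧ Complex.abs (st Q ksel z t m).1 < 2 with hP
  have hexP : ∃ m, P m := hex
  set m := Nat.find hexP with hm
  obtain ⟨hnm, hbr⟩ := Nat.find_spec hexP
  refine ⟨m, hnm, hbr, ?_⟩
  have hconst : ∀ j, n + j ≤ m → (st Q ksel z t (n+j)).2 = (st Q ksel z t n).2 := by
    intro j
    induction j with
    | zero => intro _; rfl
    | succ j ih =>
      intro hje
      have hj : n + j < m := by omega
      have hnb : ¬ Complex.abs (st Q ksel z t (n+j)).1 < 2 := by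
        intro hb
        exact Nat.find_min hexP hj ⟨by omega, hb⟩
      rw [show n + (j+1) = (n+j) + 1 by omega, st_succ_snd, if_neg hnb]
      exact ih (by omega)
  have := hconst (m - n) (by omega)
  rwa [show n + (m - n) = m by omega] at this

lemma consume : ∀ b, ∃ n, (st Q ksel z t n).2 = b ∧ Complex.abs (st Q ksel z t n).1 < 2 := by
  intro b
  induction b with
  | zero =>
    obtain ⟨m, _, hbr, hsnd⟩ :=
      reach_first Q u A C N ksel z t hQ hu hA1 hA2 hAN hC hkN hkre hz 0
    exact ⟨m, by rw [hsnd]; rfl, hbr⟩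
  | succ b ih =>
    obtain ⟨n, hn2, hnb⟩ := ih
    obtain ⟨m, _, hbr, hsnd⟩ :=
      reach_first Q u A C N ksel z t hQ hu hA1 hA2 hAN hC hkN hkre hz (n+1)
    refine ⟨m, ?_, hbr⟩
    rw [hsnd, st_succ_snd, if_pos hnb, hn2]

end Analytic

lemma st_congr (t' : ℕ → Bool) (b : ℕ) (hb : ∀ j < b, t j = t' j) :
    ∀ n, (st Q ksel z t n).2 ≤ b → st Q ksel z t' n = st Q ksel z t n := by
  intro n
  induction n with
  | zero => intro _; rfl
  | succ n ih =>
    intro h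
    have hmono := snd_mono Q ksel z t (show n ≤ n + 1 by omega)
    have hn : (st Q ksel z t n).2 ≤ b := le_trans hmono h
    have he := ih hn
    show nextSt Q ksel t' (st Q ksel z t' n) = nextSt Q ksel t (st Q ksel z t n)
    rw [he]
    unfold nextSt
    split
    · next hbr =>
      have hlt : (st Q ksel z t n).2 < b := by
        have h2 := st_succ_snd Q ksel z t n
        rw [if_pos hbr] at h2
        omega
      rw [hb _ hlt]
    · rfl


end Proc
end ContExpAux

open Real Filter Topology ContExpAux in
theorem continuum_expansions_complex_base (ω : ℂ) (hω : ‖ω‖ = 1)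
    (hω4 : ω ^ 4 ≠ 1) (R : ℝ) (hR : 0 < R) :
    ∃ ε > 0, ∀ p : ℝ, 1 < p → p < 1 + ε →
      ∀ z : ℂ, ‖z‖ ≤ R →
        Cardinal.mk {c : ℕ → ℕ | IsExpansionC ((p : ℂ) * ω) z c} = Cardinal.continuum := by
  classical
  rw [Complex.norm_eq_abs] at hω
  have hω0 : ω ≠ 0 := fun h => by simp [h] at hω
  have hu : Complex.abs (ω^2) = 1 := by rw [map_pow, hω, one_pow]
  have hu2 : (ω^2)^2 ≠ 1 := by rw [← pow_mul]; exact hω4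
  obtain ⟨N, hN⟩ := angle_lemma (ω^2) hu hu2
  set C : ℝ := max R 4 with hCdef
  have hC4 : (4:ℝ) ≤ C := le_max_right _ _
  have hC0 : (0:ℝ) < C := by linarith
  set K : ℝ := 2 ^ (4*(N+1)) - 1 with hKdef
  have hK0 : (0:ℝ) < K := by
    have : (1:ℝ) < 2 ^ (4*(N+1)) := one_lt_pow₀ (by norm_num) (by omega)
    rw [hKdef]; linarith
  refine ⟨min (1/6) (1/(4*C*K)), lt_min (by norm_num) (by positivity), ?_⟩
  intro p hp1 hp2 z hz
  have hεle : min (1/6 : ℝ) (1/(4*C*K)) ≤ 1/6 := min_le_left _ _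
  have hε1 : p < 1 + 1/6 := by linarith
  set q : ℂ := (p:ℂ) * ω with hqdef
  have hp0 : (0:ℝ) < p := by linarith
  have hq0 : q ≠ 0 := mul_ne_zero (by exact_mod_cast hp0.ne') hω0
  have habsq : Complex.abs q = p := by
    rw [hqdef, map_mul, Complex.abs_ofReal, hω, mul_one, abs_of_pos hp0]
  set A : ℝ := p^2 with hAdef
  have hA1 : 1 < A := by rw [hAdef]; nlinarith
  have hA2 : A ≤ 3/2 := by rw [hAdef]; nlinarith
  have hA0 : (0:ℝ) < A := by linarith
  set Q : ℂ := q^2 with hQdef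
  have hQu : Q = (A:ℂ) * ω^2 := by rw [hQdef, hqdef, hAdef]; push_cast; ring
  have hQ0 : Q ≠ 0 := pow_ne_zero _ hq0
  have habsQ : Complex.abs Q = A := by
    rw [hQu, map_mul, Complex.abs_ofReal, hu, mul_one, abs_of_pos hA0]
  have hAN : A ^ (2*(N+1)) ≤ 1 + 1/(4*C) := by
    have e1 : A ^ (2*(N+1)) = p ^ (4*(N+1)) := by
      rw [hAdef, ← pow_mul, show 2*(2*(N+1)) = 4*(N+1) by ring]
    rw [e1]
    calc p ^ (4*(N+1)) ≤ (1 + min (1/6 : ℝ) (1/(4*C*K))) ^ (4*(N+1)) :=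
      pow_le_pow_left₀ (by linarith) (le_of_lt hp2) _
    _ ≤ 1 + ((2:ℝ)^(4*(N+1)) - 1) * (min (1/6 : ℝ) (1/(4*C*K))) :=
      pow_one_add_le _ (le_min (by norm_num) (by positivity)) (by linarith) _
    _ ≤ 1 + K * (1/(4*C*K)) := by
        have h1 : ((2:ℝ)^(4*(N+1)) - 1) = K := by rw [hKdef]
        rw [h1]
        have := mul_le_mul_of_nonneg_left (min_le_right (1/6 : ℝ) (1/(4*C*K))) hK0.le
        linarith
    _ = 1 + 1/(4*C) := by
        congr 1
        field_simp
  have hsel : ∀ r : ℂ, ∃ k, k ≤ N ∧ Complex.abs r / 2 ≤ ((ω^2) ^ (k+1) * r).re := by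
    intro r
    obtain ⟨k, hk, hre⟩ := hN ((ω^2) * r)
    refine ⟨k, hk, ?_⟩
    rw [map_mul, hu, one_mul] at hre
    rwa [show (ω^2)^(k+1) * r = (ω^2)^k * ((ω^2) * r) by ring]
  choose ksel hkN hkre using hsel
  have hzC : Complex.abs z ≤ C := le_trans hz (le_max_left _ _)
  -- the digit functions
  set F : (ℕ → Bool) → (ℕ → ℕ) := fun t => dig Q ksel z t with hF
  -- membership
  have hmem : ∀ t, IsExpansionC q z (F t) := by
    intro t
    constructor
    · intro k; exact dig_le_one Q ksel z t k
    · -- HasSum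
      set f : ℕ → ℂ := fun k => ((dig Q ksel z t (k+1) : ℕ) : ℂ) / q^(k+1) with hf
      have hqgt : 1 < Complex.abs q := by rw [habsq]; exact hp1
      have hsum : Summable f := by
        have hgeo : Summable (fun k : ℕ => (1/p)^(k+1)) := by
          have h := (summable_geometric_of_lt_one (r := 1/p) (by positivity)
            (by rw [div_lt_one hp0]; linarith)).mul_right (1/p)
          simpa [pow_succ] using h
        apply Summable.of_norm_bounded hgeo
        intro k
        rw [hf]
        simp only
        rw [norm_div, norm_pow, Complex.norm_eq_abs, Complex.norm_eq_abs, habsq,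
          Complex.abs_natCast]
        rw [one_div, inv_pow, ← one_div]
        have hdle : ((dig Q ksel z t (k+1) : ℕ):ℝ) ≤ 1 := by
          exact_mod_cast dig_le_one Q ksel z t (k+1)
        gcongr
      -- partial sums converge to z
      have hposmono := pos_strictMono Q ksel z t
      have hposn : ∀ n, n ≤ pos Q ksel z t n := fun n => hposmono.le_apply
      have h2 : Tendsto (fun n => 2 * pos Q ksel z t n) atTop atTop := by
        apply tendsto_atTop_atTop.mpr
        intro b
        exact ⟨b, fun a ha => by have := hposn a; omega⟩
      have h3 : Tendsto (fun n => ∑ k ∈ Finset.range (2 * pos Q ksel z t n), f k)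
          atTop (𝓝 (∑' k, f k)) := (hsum.hasSum.tendsto_sum_nat).comp h2
      have h4 : (fun n => ∑ k ∈ Finset.range (2 * pos Q ksel z t n), f k)
          = fun n => z - (st Q ksel z t n).1 / Q ^ (pos Q ksel z t n) :=
        funext (sum_eq Q ksel z t q hQdef hq0)
      have h5 : Tendsto (fun n => (st Q ksel z t n).1 / Q ^ (pos Q ksel z t n))
          atTop (𝓝 0) := by
        have hlim : Tendsto (fun n : ℕ => C * (1/A)^n) atTop (𝓝 0) := by
          have h := tendsto_pow_atTop_nhds_zero_of_lt_one
            (show (0:ℝ) ≤ 1/A by positivity) (by rw [div_lt_one hA0]; linarith)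
          simpa using h.const_mul C
        apply squeeze_zero_norm ?_ hlim
        intro n
        have hinv := invariant Q (ω^2) A C N ksel z t hQu hu hA1 hA2 hAN hC4 hkN hkre hzC n
        rw [norm_div, norm_pow, Complex.norm_eq_abs, Complex.norm_eq_abs, habsQ]
        have hpow : A ^ n ≤ A ^ (pos Q ksel z t n) :=
          pow_le_pow_right₀ hA1.le (hposn n)
        calc Complex.abs (st Q ksel z t n).1 / A ^ (pos Q ksel z t n)
            ≤ C / A ^ (pos Q ksel z t n) := by gcongr
        _ ≤ C / A ^ n := by
            apply div_le_div_of_nonneg_left hC0.le (by positivity) hpow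
        _ = C * (1/A)^n := by rw [one_div, inv_pow, ← one_div, div_eq_mul_one_div]
      have h6 : Tendsto (fun n => z - (st Q ksel z t n).1 / Q ^ (pos Q ksel z t n))
          atTop (𝓝 (z - 0)) := tendsto_const_nhds.sub h5
      rw [sub_zero] at h6
      rw [h4] at h3
      have htsum : (∑' k, f k) = z := tendsto_nhds_unique h3 h6
      exact hsum.hasSum_iff.mpr htsum
  -- injectivity
  have hinj : Function.Injective F := by
    intro t t' hFeq
    by_contra hne
    have hEx : ∃ b, t b ≠ t' b := Function.ne_iff.mp hne
    set b := Nat.find hEx with hbdef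
    have hb : t b ≠ t' b := Nat.find_spec hEx
    have hmin : ∀ j < b, t j = t' j := fun j hj => not_not.mp (Nat.find_min hEx hj)
    obtain ⟨n, hn2, hnb⟩ :=
      consume Q (ω^2) A C N ksel z t hQu hu hA1 hA2 hAN hC4 hkN hkre hzC b
    have hstEq : ∀ m ≤ n, st Q ksel z t' m = st Q ksel z t m := by
      intro m hm
      apply st_congr Q ksel z t t' b hmin
      calc (st Q ksel z t m).2 ≤ (st Q ksel z t n).2 := snd_mono Q ksel z t hm
      _ = b := hn2
    have hposEq : ∀ m, m ≤ n + 1 → pos Q ksel z t' m = pos Q ksel z t m := by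
      intro m hm
      induction m with
      | zero => rfl
      | succ m ih =>
        show pos Q ksel z t' m + blockLen ksel (st Q ksel z t' m)
            = pos Q ksel z t m + blockLen ksel (st Q ksel z t m)
        rw [ih (by omega), hstEq m (by omega)]
    have hd1 := dig_at Q ksel z t n
    have hd2 := dig_at Q ksel z t' n
    rw [hposEq (n+1) le_rfl, hstEq n le_rfl] at hd2
    have hdig : blockDig t (st Q ksel z t n) = blockDig t' (st Q ksel z t n) := by
      rw [← hd1, ← hd2]
      exact congrFun hFeq _
    unfold blockDig at hdig
    rw [if_pos hnb, if_pos hnb, hn2] at hdig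
    apply hb
    cases htb : t b <;> cases htb' : t' b <;> rw [htb, htb'] at hdig <;> simp_all
  -- cardinality
  have hNN : Cardinal.mk (ℕ → ℕ) = Cardinal.continuum := by
    rw [Cardinal.mk_arrow, Cardinal.mk_nat, Cardinal.lift_aleph0,
      Cardinal.power_self_eq le_rfl, Cardinal.continuum]
  have hNB : Cardinal.mk (ℕ → Bool) = Cardinal.continuum := by
    rw [Cardinal.mk_arrow, Cardinal.mk_nat, Cardinal.mk_bool, Cardinal.lift_aleph0,
      Cardinal.lift_two, Cardinal.continuum]
  apply le_antisymm
  · exact le_of_le_of_eq (Cardinal.mk_set_le _) hNN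
  · have hG : Function.Injective
        (fun t => (⟨F t, hmem t⟩ : {c : ℕ → ℕ | IsExpansionC q z c})) := by
      intro t t' h
      exact hinj (congrArg Subtype.val h)
    rw [← hNB]
    exact Cardinal.mk_le_of_injective hG
end

section
/- Let m ≥ 3 be an integer, ω a complex number with ω^m = 1, and 1 < p ≤ 2^{1/m}, q = pω. Then J_q equals the set of complex numbers of the form ∑_{j=1}^m (pω)^{m-j} α_j with real numbers 0 ≤ α_j ≤ 1/(p^m - 1) for all j. -/
noncomputable def grRem (β α : ℝ) : ℕ → ℝ
  | 0 => α
  | (n+1) => β * grRem β α n - (if 1 ≤ β * grRem β α n then 1 else 0)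

noncomputable def grDig (β α : ℝ) (n : ℕ) : ℕ := if 1 ≤ β * grRem β α n then 1 else 0

lemma grDig_le_one (β α : ℝ) (n : ℕ) : grDig β α n ≤ 1 := by
  unfold grDig; split <;> simp

lemma grRem_mem {β α : ℝ} (hβ1 : 1 < β) (hβ2 : β ≤ 2)
    (hα : α ∈ Set.Icc (0:ℝ) (1/(β-1))) (n : ℕ) :
    grRem β α n ∈ Set.Icc (0:ℝ) (1/(β-1)) := by
  induction n with
  | zero => exact hα
  | succ n ih =>
    obtain ⟨h0, h1⟩ := ih
    have hb0 : (0:ℝ) < β - 1 := by linarith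
    have hle1 : (1:ℝ) ≤ 1/(β-1) := by
      rw [le_div_iff₀ hb0]; linarith
    have hβ : β * (1/(β-1)) = 1/(β-1) + 1 := by field_simp; ring
    have hmul : β * grRem β α n ≤ β * (1/(β-1)) :=
      mul_le_mul_of_nonneg_left h1 (by linarith)
    have hnn : 0 ≤ β * grRem β α n := mul_nonneg (by linarith) h0
    simp only [grRem]
    split
    · exact ⟨by linarith, by linarith⟩
    · rename_i h
      push_neg at h
      exact ⟨by linarith, by linarith⟩

lemma grRem_key {β α : ℝ} (hβ1 : 1 < β) (n : ℕ) :
    grRem β α n / β^n = (grDig β α n : ℝ)/β^(n+1) + grRem β α (n+1)/β^(n+1) := by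
  have hβ0 : (0:ℝ) < β := by linarith
  have h : grRem β α (n+1) = β * grRem β α n - (grDig β α n : ℝ) := by
    simp only [grRem, grDig]; split <;> simp
  rw [h]
  field_simp
  ring

lemma grRem_partial {β α : ℝ} (hβ1 : 1 < β) (n : ℕ) :
    α = ∑ i ∈ Finset.range n, (grDig β α i : ℝ)/β^(i+1) + grRem β α n / β^n := by
  induction n with
  | zero => simp [grRem]
  | succ n ih =>
    rw [Finset.sum_range_succ, add_assoc, ← grRem_key hβ1 n]
    exact ih

lemma grHasSum {β α : ℝ} (hβ1 : 1 < β) (hβ2 : β ≤ 2)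
    (hα : α ∈ Set.Icc (0:ℝ) (1/(β-1))) :
    HasSum (fun i => (grDig β α i : ℝ)/β^(i+1)) α := by
  have hβ0 : (0:ℝ) < β := by linarith
  have hr1 : (0:ℝ) ≤ 1/β := by positivity
  have hr2 : 1/β < 1 := by rw [div_lt_one hβ0]; exact hβ1
  have hg : Summable (fun i : ℕ => (1/β)^(i+1)) := by
    simpa [pow_succ] using (summable_geometric_of_lt_one hr1 hr2).mul_right (1/β)
  have hsum : Summable (fun i => (grDig β α i : ℝ)/β^(i+1)) := by
    refine Summable.of_nonneg_of_le (fun i => by positivity) (fun i => ?_) hg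
    rw [div_pow, one_pow]
    exact div_le_div_of_nonneg_right (by exact_mod_cast grDig_le_one β α i) (by positivity)
  have h1 := hsum.hasSum
  have h2 := h1.tendsto_sum_nat
  have hrem : Filter.Tendsto (fun n : ℕ => grRem β α n / β^n) Filter.atTop (nhds 0) := by
    have hub : ∀ n : ℕ, grRem β α n / β^n ≤ (1/(β-1)) * (1/β)^n := fun n => by
      rw [div_pow, one_pow, mul_div_assoc', mul_one]
      exact div_le_div_of_nonneg_right (grRem_mem hβ1 hβ2 hα n).2 (by positivity)
    have hlb : ∀ n : ℕ, 0 ≤ grRem β α n / β^n := fun n => by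
      have := (grRem_mem hβ1 hβ2 hα n).1; positivity
    have := (tendsto_pow_atTop_nhds_zero_of_lt_one hr1 hr2).const_mul (1/(β-1))
    rw [mul_zero] at this
    exact squeeze_zero hlb hub this
  have h3 : Filter.Tendsto (fun n => ∑ i ∈ Finset.range n, (grDig β α i : ℝ)/β^(i+1))
      Filter.atTop (nhds α) := by
    have heq : (fun n => ∑ i ∈ Finset.range n, (grDig β α i : ℝ)/β^(i+1))
        = fun n => α - grRem β α n / β^n := by
      funext n; have := grRem_partial (α := α) hβ1 n; linarith
    rw [heq]
    simpa using tendsto_const_nhds.sub hrem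
  rwa [tendsto_nhds_unique h2 h3] at h1


lemma geom_tail {β : ℝ} (hβ : 1 < β) : HasSum (fun i : ℕ => 1/β^(i+1)) (1/(β-1)) := by
  have hβ0 : (0:ℝ) < β := by linarith
  have h0 : (0:ℝ) ≤ 1/β := by positivity
  have h1 : 1/β < 1 := by rw [div_lt_one hβ0]; exact hβ
  have h := (hasSum_geometric_of_lt_one h0 h1).mul_right (1/β)
  have heq : (fun i : ℕ => (1/β)^i * (1/β)) = fun i : ℕ => 1/β^(i+1) := by
    funext i; rw [← pow_succ, div_pow, one_pow]
  have hval : (1 - 1/β)⁻¹ * (1/β) = 1/(β-1) := by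
    have hb1 : (β:ℝ) - 1 ≠ 0 := by intro h; rw [sub_eq_zero] at h; linarith
    field_simp
  rwa [heq, hval] at h

lemma term_eq (m j i : ℕ) (hj : j < m) (q : ℂ) (hq0 : q ≠ 0) (p : ℝ) (hp0 : 0 < p)
    (hqm : q^m = ((p^m : ℝ) : ℂ)) (n : ℕ) :
    ((n:ℂ))/q^(i*m+j+1) = q^(m-1-j) * (((n:ℝ)/p^(m*(i+1)) : ℝ) : ℂ) := by
  have hpc : ((p:ℂ))^(m*(i+1)) ≠ 0 := by
    apply pow_ne_zero; exact_mod_cast hp0.ne'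
  have key : q^(i*m+j+1) * q^(m-1-j) = ((p:ℂ))^(m*(i+1)) := by
    rw [← pow_add]
    have h1 : m - 1 - j = m - (j+1) := by omega
    have h2 : (j+1) + (m-(j+1)) = m := Nat.add_sub_cancel' hj
    have he : i*m+j+1 + (m-1-j) = m*(i+1) := by
      rw [h1, add_assoc (i*m) j 1, add_assoc (i*m) (j+1) _, h2, Nat.mul_add, Nat.mul_one,
        Nat.mul_comm]
    rw [he, pow_mul, hqm]
    push_cast
    rw [← pow_mul]
  push_cast
  rw [← key]
  field_simp

lemma sum_c_summable (q : ℂ) (p : ℝ) (hp1 : 1 < p) (habs : ‖q‖ = p)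
    (c : ℕ → ℕ) (hc : ∀ k, c k ≤ 1) :
    Summable (fun k : ℕ => (c (k+1) : ℂ)/q^(k+1)) := by
  have hp0 : (0:ℝ) < p := by linarith
  apply Summable.of_norm
  have hg : Summable (fun k : ℕ => (1/p)^(k+1)) := by
    have h1 : 1/p < 1 := by rw [div_lt_one hp0]; exact hp1
    simpa [pow_succ] using (summable_geometric_of_lt_one (by positivity) h1).mul_right (1/p)
  refine Summable.of_nonneg_of_le (fun k => norm_nonneg _) (fun k => ?_) hg
  rw [norm_div, norm_pow, Complex.norm_natCast, habs,
    div_pow, one_pow]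
  apply div_le_div_of_nonneg_right ?_ (by positivity)
  exact_mod_cast hc (k+1)

lemma group_tsum (m : ℕ) (hm0 : 0 < m) (q : ℂ) (hq0 : q ≠ 0) (p : ℝ) (hp1 : 1 < p)
    (habs : ‖q‖ = p) (hqm : q^m = ((p^m : ℝ) : ℂ)) (c : ℕ → ℕ) (hc : ∀ k, c k ≤ 1) :
    ∑' k : ℕ, (c (k+1) : ℂ)/q^(k+1)
      = ∑ j : Fin m, q^(m-1-(j:ℕ)) *
          ((∑' i : ℕ, (c (i*m+(j:ℕ)+1) : ℝ)/p^(m*(i+1)) : ℝ) : ℂ) := by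
  haveI : NeZero m := ⟨by omega⟩
  set f : ℕ → ℂ := fun k => (c (k+1) : ℂ)/q^(k+1) with hf
  have hfs : Summable f := sum_c_summable q p hp1 habs c hc
  have h1 : ∑' x : Fin m × ℕ, f (x.2 * m + (x.1 : ℕ)) = ∑' k, f k := by
    have := ((Equiv.prodComm (Fin m) ℕ).trans (Nat.divModEquiv m).symm).tsum_eq f
    simpa using this
  have hsx : Summable (fun x : Fin m × ℕ => f (x.2 * m + (x.1 : ℕ))) := by
    have := ((Equiv.prodComm (Fin m) ℕ).trans (Nat.divModEquiv m).symm).summable_iff.2 hfs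
    apply this.congr
    intro x
    simp
  rw [← h1]
  rw [Summable.tsum_prod hsx, tsum_fintype]
  congr 1
  funext j
  have : ∀ i : ℕ, f (i * m + (j:ℕ)) = q^(m-1-(j:ℕ)) * (((c (i*m+(j:ℕ)+1) : ℝ)/p^(m*(i+1)) : ℝ) : ℂ) := by
    intro i
    show (c (i*m+(j:ℕ)+1) : ℂ)/q^(i*m+(j:ℕ)+1) = _
    exact term_eq m j i j.isLt q hq0 p (by linarith) hqm _
  rw [tsum_congr this, tsum_mul_left, ← Complex.ofReal_tsum]

theorem J_root_of_unity_base (m : ℕ) (hm : 3 ≤ m) (ω : ℂ) (hω : ω ^ m = 1)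
    (p : ℝ) (hp1 : 1 < p) (hp2 : p ≤ (2 : ℝ) ^ ((1 : ℝ) / m)) (q : ℂ)
    (hq : q = (p : ℂ) * ω) :
    JC q = {z : ℂ | ∃ α : Fin m → ℝ,
      (∀ j, α j ∈ Set.Icc (0 : ℝ) (1 / (p ^ m - 1))) ∧
      z = ∑ j : Fin m, q ^ (m - 1 - (j : ℕ)) * (α j : ℂ)} := by
  have hm0 : 0 < m := by omega
  have hp0 : (0:ℝ) < p := by linarith
  have habsω : ‖ω‖ = 1 := by
    have h := congrArg (‖·‖) hω
    rw [norm_pow, norm_one] at h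
    rcases (pow_eq_one_iff_of_ne_zero (by omega)).1 h with h' | ⟨h', _⟩
    · exact h'
    · exfalso; have := norm_nonneg ω; rw [h'] at this; linarith
  have hω0 : ω ≠ 0 := by
    intro h; rw [h, zero_pow (by omega)] at hω; exact one_ne_zero hω.symm
  have hq0 : q ≠ 0 := by
    rw [hq]; exact mul_ne_zero (by exact_mod_cast hp0.ne') hω0
  have habs : ‖q‖ = p := by
    rw [hq, norm_mul, Complex.norm_real, habsω, mul_one, Real.norm_eq_abs, abs_of_pos hp0]
  have hqm : q^m = ((p^m : ℝ) : ℂ) := by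
    rw [hq, mul_pow, hω, mul_one]; push_cast; ring
  have hpm1 : 1 < p^m := one_lt_pow₀ hp1 (by omega)
  have hpm2 : p^m ≤ 2 := by
    calc p^m ≤ ((2:ℝ)^((1:ℝ)/m))^m := pow_le_pow_left₀ hp0.le hp2 m
    _ = 2 := by
      rw [← Real.rpow_natCast ((2:ℝ)^((1:ℝ)/m)) m, ← Real.rpow_mul (by norm_num),
        one_div, inv_mul_cancel₀ (by exact_mod_cast hm0.ne' : (m:ℝ) ≠ 0), Real.rpow_one]
  ext z
  simp only [JC, IsExpansionC, Set.mem_setOf_eq]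
  constructor
  · rintro ⟨c, hc, hsum⟩
    have hgeo := geom_tail hpm1
    refine ⟨fun j => ∑' i : ℕ, (c (i*m+(j:ℕ)+1) : ℝ)/p^(m*(i+1)), fun j => ?_, ?_⟩
    · have hmaj : ∀ i : ℕ, (c (i*m+(j:ℕ)+1) : ℝ)/p^(m*(i+1)) ≤ 1/(p^m)^(i+1) := by
        intro i
        rw [← pow_mul]
        exact div_le_div_of_nonneg_right (by exact_mod_cast hc _) (by positivity)
      have hsummaj : Summable (fun i : ℕ => (c (i*m+(j:ℕ)+1) : ℝ)/p^(m*(i+1))) := by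
        refine Summable.of_nonneg_of_le (fun i => by positivity) hmaj ?_
        simpa using hgeo.summable
      constructor
      · exact tsum_nonneg (fun i => by positivity)
      · calc ∑' i : ℕ, (c (i*m+(j:ℕ)+1) : ℝ)/p^(m*(i+1))
            ≤ ∑' i : ℕ, 1/(p^m)^(i+1) := Summable.tsum_le_tsum hmaj hsummaj (by simpa using hgeo.summable)
        _ = 1/(p^m-1) := hgeo.tsum_eq
    · rw [← hsum.tsum_eq]
      exact group_tsum m hm0 q hq0 p hp1 habs hqm c hc
  · rintro ⟨α, hα, hz⟩
    have hβ1 : 1 < p^m := hpm1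
    set c : ℕ → ℕ := fun k => grDig (p^m) (α ⟨(k-1) % m, Nat.mod_lt _ hm0⟩) ((k-1)/m) with hcdef
    have hc : ∀ k, c k ≤ 1 := fun k => grDig_le_one _ _ _
    have hck : ∀ (j : Fin m) (i : ℕ), c (i*m+(j:ℕ)+1) = grDig (p^m) (α j) i := by
      intro j i
      have h1 : (i*m+(j:ℕ)+1) - 1 = (j:ℕ) + i*m := by omega
      simp only [hcdef, h1]
      have h2 : ((j:ℕ) + i*m) % m = (j:ℕ) := by
        rw [Nat.add_mul_mod_self_right, Nat.mod_eq_of_lt j.isLt]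
      have h3 : ((j:ℕ) + i*m) / m = i := by
        rw [Nat.add_mul_div_right _ _ hm0, Nat.div_eq_of_lt j.isLt, zero_add]
      rw [h3]
      congr 1
      exact congrArg α (Fin.ext h2)
    have hd : ∀ j : Fin m, HasSum (fun i => (grDig (p^m) (α j) i : ℝ)/(p^m)^(i+1)) (α j) :=
      fun j => grHasSum hβ1 hpm2 (hα j)
    have hinner : ∀ j : Fin m,
        (∑' i : ℕ, (c (i*m+(j:ℕ)+1) : ℝ)/p^(m*(i+1))) = α j := by
      intro j
      have heq : (fun i : ℕ => (c (i*m+(j:ℕ)+1) : ℝ)/p^(m*(i+1)))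
          = fun i => (grDig (p^m) (α j) i : ℝ)/(p^m)^(i+1) := by
        funext i; rw [hck j i, ← pow_mul]
      rw [heq, (hd j).tsum_eq]
    refine ⟨c, hc, ?_⟩
    have htsum : ∑' k : ℕ, (c (k+1) : ℂ)/q^(k+1) = z := by
      rw [group_tsum m hm0 q hq0 p hp1 habs hqm c hc, hz]
      exact Finset.sum_congr rfl (fun j _ => by rw [hinner j])
    exact htsum ▸ (sum_c_summable q p hp1 habs c hc).hasSum
end

section
/- Every interior point z of (p^m − 1)·J_q (with m ≥ 3, ω^m = 1, 1 < p ≤ 2^{1/m}, q = pω) can be written as z = ∑_{j=1}^m (pω)^{m-j} α_j with real numbers satisfying 0 < α_j < 1 for all j. -/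
/-- Every point of `(p^m-1) • JC q` has a representation with coefficients in `[0,1]`. -/
lemma repA (m : ℕ) (hm : 3 ≤ m) (ω : ℂ) (hω : ω ^ m = 1)
    (p : ℝ) (hp1 : 1 < p) (q : ℂ) (hq : q = (p : ℂ) * ω) (y : ℂ)
    (hy : y ∈ (fun w => ((p : ℂ) ^ m - 1) * w) '' JC q) :
    ∃ β : Fin m → ℝ, (∀ j, 0 ≤ β j ∧ β j ≤ 1) ∧
      y = ∑ j : Fin m, q ^ (m - 1 - (j : ℕ)) * (β j : ℂ) := by
  haveI : NeZero m := ⟨by omega⟩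
  obtain ⟨w, ⟨c, hc, hsum⟩, rfl⟩ := hy
  have hω0 : ω ≠ 0 := by
    intro h; rw [h, zero_pow (by omega)] at hω; exact zero_ne_one hω
  have hp0 : (0:ℝ) < p := lt_trans one_pos hp1
  have hq0 : q ≠ 0 := by
    rw [hq]; exact mul_ne_zero (by exact_mod_cast hp0.ne') hω0
  have hqm : q ^ m = ((p:ℝ) ^ m : ℂ) := by
    rw [hq, mul_pow, hω, mul_one]
  have hpm1 : (1:ℝ) < p ^ m := one_lt_pow₀ hp1 (by omega)
  have hpm0 : (0:ℝ) < p ^ m := lt_trans one_pos hpm1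
  have hr1 : (p ^ m)⁻¹ < 1 := inv_lt_one_of_one_lt₀ hpm1
  have hr0 : (0:ℝ) ≤ (p ^ m)⁻¹ := inv_nonneg.mpr hpm0.le
  -- real fiber sums
  set r : Fin m → ℕ → ℝ := fun j i => (c (i * m + (j:ℕ) + 1) : ℝ) * ((p ^ m)⁻¹) ^ i with hr
  have hrle : ∀ j i, r j i ≤ ((p ^ m)⁻¹) ^ i := by
    intro j i
    have : (c (i * m + (j:ℕ) + 1) : ℝ) ≤ 1 := by exact_mod_cast hc _
    calc r j i ≤ 1 * ((p ^ m)⁻¹) ^ i :=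
          mul_le_mul_of_nonneg_right this (pow_nonneg hr0 i)
      _ = _ := one_mul _
  have hrnn : ∀ j i, 0 ≤ r j i := fun j i =>
    mul_nonneg (Nat.cast_nonneg _) (pow_nonneg hr0 i)
  have hrsum : ∀ j, Summable (r j) := fun j =>
    (summable_geometric_of_lt_one hr0 hr1).of_nonneg_of_le (hrnn j) (hrle j)
  set T : Fin m → ℝ := fun j => ∑' i, r j i with hT
  have hTnn : ∀ j, 0 ≤ T j := fun j => tsum_nonneg (hrnn j)
  have hTle : ∀ j, T j ≤ (1 - (p ^ m)⁻¹)⁻¹ := by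
    intro j
    calc T j ≤ ∑' i, ((p ^ m)⁻¹) ^ i :=
          Summable.tsum_le_tsum (hrle j) (hrsum j) (summable_geometric_of_lt_one hr0 hr1)
      _ = (1 - (p ^ m)⁻¹)⁻¹ := tsum_geometric_of_lt_one hr0 hr1
  -- complex fiber sums
  have hfib : ∀ j : Fin m,
      HasSum (fun i : ℕ => (c (i * m + (j:ℕ) + 1) : ℂ) / q ^ (i * m + (j:ℕ) + 1))
        ((q ^ ((j:ℕ) + 1))⁻¹ * (T j : ℂ)) := by
    intro j
    have h1 : HasSum (fun i => ((r j i : ℝ) : ℂ)) ((T j : ℝ) : ℂ) :=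
      Complex.hasSum_ofReal.mpr (hrsum j).hasSum
    have h2 := h1.mul_left ((q ^ ((j:ℕ) + 1))⁻¹)
    convert h2 using 2 with i
    case e'_3 => rfl
    rw [hr]
    push_cast
    rw [show i * m + (j:ℕ) + 1 = ((j:ℕ) + 1) + i * m by omega, pow_add, pow_mul']
    rw [hqm]
    field_simp
    rw [one_div, inv_pow, div_eq_mul_inv]
  -- reindex the total sum
  let e2 : Fin m × ℕ ≃ ℕ := (Equiv.prodComm (Fin m) ℕ).trans (Nat.divModEquiv m).symm
  have hsum2 : HasSum (fun ji : Fin m × ℕ =>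
      (c (ji.2 * m + (ji.1:ℕ) + 1) : ℂ) / q ^ (ji.2 * m + (ji.1:ℕ) + 1)) w := by
    have := (e2.hasSum_iff (f := fun k : ℕ => (c (k + 1) : ℂ) / q ^ (k + 1))).mpr hsum
    convert this using 2 with ji
    rfl

  have hfin : HasSum (fun j : Fin m => (q ^ ((j:ℕ) + 1))⁻¹ * (T j : ℂ)) w :=
    hsum2.prod_fiberwise hfib
  have hw : w = ∑ j : Fin m, (q ^ ((j:ℕ) + 1))⁻¹ * (T j : ℂ) :=
    ((hasSum_fintype _).unique hfin).symm
  refine ⟨fun j => (1 - (p ^ m)⁻¹) * T j, ?_, ?_⟩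
  · intro j
    constructor
    · exact mul_nonneg (by linarith) (hTnn j)
    · calc (1 - (p ^ m)⁻¹) * T j ≤ (1 - (p ^ m)⁻¹) * (1 - (p ^ m)⁻¹)⁻¹ :=
            mul_le_mul_of_nonneg_left (hTle j) (by linarith)
        _ = 1 := mul_inv_cancel₀ (by linarith)
  · rw [hw]
    dsimp only
    rw [Finset.mul_sum]
    refine Finset.sum_congr rfl fun j _ => ?_
    have hje : (m - 1 - (j:ℕ)) + ((j:ℕ) + 1) = m := by
      have := j.is_lt; omega
    have hqne : q ^ ((j:ℕ) + 1) ≠ 0 := pow_ne_zero _ hq0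
    have hpmne : ((p:ℝ)^m : ℂ) ≠ 0 := by
      exact_mod_cast hpm0.ne'
    have hq2 : q ^ (m - 1 - (j:ℕ)) = ((p:ℝ)^m : ℂ) / q ^ ((j:ℕ)+1) := by
      rw [eq_div_iff hqne, ← pow_add, hje, hqm]
    push_cast at hpmne ⊢
    rw [hq2]
    field_simp

theorem interior_point_representation (m : ℕ) (hm : 3 ≤ m) (ω : ℂ) (hω : ω ^ m = 1)
    (p : ℝ) (hp1 : 1 < p) (hp2 : p ≤ (2 : ℝ) ^ ((1 : ℝ) / m)) (q : ℂ)
    (hq : q = (p : ℂ) * ω) (z : ℂ)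
    (hz : z ∈ interior ((fun w => ((p : ℂ) ^ m - 1) * w) '' JC q)) :
    ∃ α : Fin m → ℝ, (∀ j, 0 < α j ∧ α j < 1) ∧
      z = ∑ j : Fin m, q ^ (m - 1 - (j : ℕ)) * (α j : ℂ) := by
  have hzS : ((fun w => ((p : ℂ) ^ m - 1) * w) '' JC q) ∈ nhds z :=
    mem_interior_iff_mem_nhds.mp hz
  obtain ⟨ε, hε, hball⟩ := Metric.mem_nhds_iff.mp hzS
  set w0 : ℂ := ∑ j : Fin m, q ^ (m - 1 - (j : ℕ)) * ((1 : ℂ)/2) with hw0def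
  set s : ℝ := ε / (2 * (‖z - w0‖ + 1)) with hsdef
  have hnn : (0:ℝ) ≤ ‖z - w0‖ := norm_nonneg _
  have hs : 0 < s := div_pos hε (by positivity)
  have hskey : 2 * (s * (‖z - w0‖ + 1)) = ε := by
    rw [hsdef]; field_simp
  have hmem : z + (s:ℂ) * (z - w0) ∈ ((fun w => ((p : ℂ) ^ m - 1) * w) '' JC q) := by
    apply hball
    rw [Metric.mem_ball, dist_eq_norm]
    have h1 : z + (s:ℂ) * (z - w0) - z = (s:ℂ) * (z - w0) := by ring
    rw [h1, norm_mul, Complex.norm_real, Real.norm_eq_abs, abs_of_pos hs]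
    nlinarith
  obtain ⟨β, hβ, hrep⟩ := repA m hm ω hω p hp1 q hq _ hmem
  have h1s : (0:ℝ) < 1 + s := by linarith
  have hcast : ((1 + s : ℝ) : ℂ) ≠ 0 := by exact_mod_cast h1s.ne'
  refine ⟨fun j => (β j + s/2) / (1 + s), fun j => ⟨?_, ?_⟩, ?_⟩
  · exact div_pos (by have := (hβ j).1; linarith) h1s
  · rw [div_lt_one h1s]; have := (hβ j).2; linarith
  · have key : ((1 + s : ℝ) : ℂ) * z
        = ∑ j : Fin m, q ^ (m - 1 - (j : ℕ)) * ((β j : ℂ) + (s:ℂ)/2) := by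
      have hsw0 : (s:ℂ) * w0 = ∑ j : Fin m, q ^ (m - 1 - (j : ℕ)) * ((s:ℂ)/2) := by
        rw [hw0def, Finset.mul_sum]
        exact Finset.sum_congr rfl fun j _ => by ring
      calc ((1 + s : ℝ) : ℂ) * z = (z + (s:ℂ) * (z - w0)) + (s:ℂ) * w0 := by
            push_cast; ring
        _ = (∑ j : Fin m, q ^ (m - 1 - (j : ℕ)) * (β j : ℂ))
            + ∑ j : Fin m, q ^ (m - 1 - (j : ℕ)) * ((s:ℂ)/2) := by rw [hrep, hsw0]
        _ = ∑ j : Fin m, q ^ (m - 1 - (j : ℕ)) * ((β j : ℂ) + (s:ℂ)/2) := by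
            rw [← Finset.sum_add_distrib]
            exact Finset.sum_congr rfl fun j _ => by ring
    have hzval : z = (∑ j : Fin m, q ^ (m - 1 - (j : ℕ)) * ((β j : ℂ) + (s:ℂ)/2))
        / ((1 + s : ℝ) : ℂ) := by
      rw [← key, mul_div_cancel_left₀ _ hcast]
    rw [hzval, Finset.sum_div]
    refine Finset.sum_congr rfl fun j _ => ?_
    rw [mul_div_assoc]
    congr 1
    push_cast
    ring
end
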